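/- arXiv:2201.06634 — 9 statements merged into one kernel-verified Lean document; each statement's English description precedes it below -/
import Mathlib

section
/- Let H be an ℵ₁-free abelian group of cardinality ℵ₁ and let {H_α : α < ω₁} be an ℵ₁-filtration of H. Then H is a free abelian group if and only if there exists a club C in ω₁ such that for every α ∈ C the quotient group H/H_α is ℵ₁-free. -/
/-- An abelian group is ℵ₁-free if every countable subgroup is free (as a ℤ-module). -/
def Aleph1Free (H : Type*) [AddCommGroup H] : Prop :=
  ∀ K : AddSubgroup H, Countable K → Module.Free ℤ K

/-- The first uncountable ordinal ω₁. -/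
noncomputable def omega1 : Ordinal := (Cardinal.aleph 1).ord

/-- `C` is a club in `o`: a subset of `o` closed under suprema of its bounded
nonempty subsets and unbounded in `o`. -/
def IsClubIn (C : Set Ordinal) (o : Ordinal) : Prop :=
  (∀ α ∈ C, α < o) ∧
  (∀ S : Set Ordinal, S ⊆ C → S.Nonempty → (∃ β < o, ∀ x ∈ S, x ≤ β) → sSup S ∈ C) ∧
  (∀ α < o, ∃ β ∈ C, α < β)

/-- `F` (restricted to ordinals `< ω₁`) is an ℵ₁-filtration of `H`. -/
def IsAleph1Filtration {H : Type*} [AddCommGroup H] (F : Ordinal → AddSubgroup H) : Prop :=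
  (∀ α < omega1, Countable (F α)) ∧
  (∀ α β : Ordinal, α ≤ β → β < omega1 → F α ≤ F β) ∧
  (∀ α < omega1, Order.IsSuccLimit α → ∀ x : H, x ∈ F α ↔ ∃ β < α, x ∈ F β) ∧
  (∀ x : H, ∃ α < omega1, x ∈ F α)

/-- The forcing poset of partial bases. -/
def Ppb (H : Type*) [AddCommGroup H] : Set (Set H) :=
  {p | LinearIndependent ℤ ((↑) : p → H) ∧ p.Countable ∧
    Aleph1Free (H ⧸ AddSubgroup.closure p)}

universe u v

lemma free_of_addEquiv {A B : Type*} [AddCommGroup A] [AddCommGroup B] (e : A ≃+ B)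
    (h : Module.Free ℤ A) : Module.Free ℤ B :=
  Module.Free.of_equiv e.toIntLinearEquiv

lemma countable_of_addEquiv {A B : Type*} [AddCommGroup A] [AddCommGroup B] (e : A ≃+ B)
    (h : Countable A) : Countable B := Countable.of_equiv A e.toEquiv

lemma aleph1Free_congr {A B : Type*} [AddCommGroup A] [AddCommGroup B] (e : A ≃+ B)
    (h : Aleph1Free A) : Aleph1Free B := by
  intro K hK
  have e1 : ↥K ≃+ ↥(K.map e.symm.toAddMonoidHom) := e.symm.addSubgroupMap K
  have hcnt : Countable ↥(K.map e.symm.toAddMonoidHom) := countable_of_addEquiv e1 hK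
  exact free_of_addEquiv e1.symm (h _ hcnt)

lemma aleph1Free_addSubgroup {H : Type*} [AddCommGroup H] (h : Aleph1Free H)
    (A : AddSubgroup H) : Aleph1Free ↥A := by
  intro K hK
  have e1 : ↥K ≃+ ↥(K.map A.subtype) :=
    K.equivMapOfInjective A.subtype A.subtype_injective
  have hcnt : Countable ↥(K.map A.subtype) := countable_of_addEquiv e1 hK
  exact free_of_addEquiv e1.symm (h _ hcnt)

lemma omega1_isLimit : Order.IsSuccLimit omega1 := Cardinal.isSuccLimit_ord (Cardinal.aleph0_le_aleph 1)

lemma sup_lt_omega1 {s : Set Ordinal} (hs : s.Countable) (h : ∀ x ∈ s, x < omega1) :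
    ∃ β < omega1, ∀ x ∈ s, x < β := by
  rcases s.eq_empty_or_nonempty with rfl | hne
  · exact ⟨0, omega1_isLimit.pos, by simp⟩
  · obtain ⟨f, hf⟩ := (Set.countable_iff_exists_surjective hne).1 hs
    set g : ℕ → Ordinal := fun n => (f n : Ordinal)
    have hsup : iSup g < omega1 := by
      rw [omega1, Cardinal.ord_aleph]; apply Ordinal.iSup_lt_omega_one
      intro n; have := h _ (f n).2; rwa [omega1, Cardinal.ord_aleph] at this
    refine ⟨iSup g + 1, omega1_isLimit.succ_lt hsup, fun x hx => ?_⟩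
    obtain ⟨n, hn⟩ := hf ⟨x, hx⟩
    have : x ≤ iSup g := by
      have := le_ciSup (f := g) (Ordinal.bddAbove_range g) n
      simp only [g, hn] at this; exact_mod_cast this
    exact lt_of_le_of_lt this (lt_add_one _)

lemma countable_Iio_of_lt_omega1 {o : Ordinal} (h : o < omega1) : (Set.Iio o).Countable := by
  rw [Cardinal.countable_iff_lt_aleph_one, Ordinal.mk_Iio_ordinal]
  have h1 : o.card < Cardinal.aleph 1 := Cardinal.lt_ord.1 h
  have := Cardinal.lift_lt.{_, _}.2 h1
  rwa [Cardinal.lift_aleph, Ordinal.lift_one] at this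

lemma exists_club_enum {C : Set Ordinal.{v}} (hC : IsClubIn C omega1) :
    ∃ c : Ordinal → Ordinal,
      (∀ α < omega1, c α ∈ C) ∧
      (∀ α < omega1, c α < omega1) ∧
      (∀ α β : Ordinal, α < β → β < omega1 → c α < c β) ∧
      (∀ α < omega1, Order.IsSuccLimit α →
        Order.IsSuccLimit (c α) ∧ (∀ γ < c α, ∃ β < α, γ < c β)) ∧
      (∀ α < omega1, α ≤ c α) := by
  classical
  set next : Ordinal → Ordinal := fun x =>
    if h : x < omega1 then Classical.choose (hC.2.2 x h) else 0 with hnext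
  have hnext_spec : ∀ x, x < omega1 → next x ∈ C ∧ x < next x := by
    intro x hx
    have := Classical.choose_spec (hC.2.2 x hx)
    simp only [hnext, dif_pos hx]
    exact ⟨this.1, this.2⟩
  set c : Ordinal → Ordinal := fun α =>
    Ordinal.limitRecOn α (next 0) (fun _ ih => next ih)
      (fun o _ ih => sSup {x | ∃ β, ∃ h : β < o, x = ih β h}) with hc
  have hc0 : c 0 = next 0 := Ordinal.limitRecOn_zero _ _ _
  have hcs : ∀ o, c (Order.succ o) = next (c o) := fun o => Ordinal.limitRecOn_succ _ _ _ _
  have hcl : ∀ o (h : Order.IsSuccLimit o), c o = sSup {x | ∃ β, ∃ _ : β < o, x = c β} := by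
    intro o h
    exact Ordinal.limitRecOn_limit _ _ _ _ h
  -- set of previous values
  have hSsmall : ∀ o : Ordinal, Small.{v} {x | ∃ β, ∃ _ : β < o, x = c β} := by
    intro o
    have : {x | ∃ β, ∃ _ : β < o, x = c β} = c '' (Set.Iio o) := by
      ext x; constructor
      · rintro ⟨β, hβ, rfl⟩; exact ⟨β, hβ, rfl⟩
      · rintro ⟨β, hβ, rfl⟩; exact ⟨β, hβ, rfl⟩
    rw [this]
    exact small_image _ _
  -- main joint induction
  have main : ∀ α, α < omega1 → c α ∈ C ∧ c α < omega1 ∧ ∀ β < α, c β < c α := by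
    intro α
    induction α using Ordinal.limitRecOn with
    | zero =>
      intro _
      rw [hc0]
      refine ⟨(hnext_spec 0 omega1_isLimit.pos).1, hC.1 _ (hnext_spec 0 omega1_isLimit.pos).1,
        fun β hβ => absurd hβ not_lt_zero⟩
    | add_one o ih =>
      intro hso
      have ho : o < omega1 := lt_trans (Order.lt_succ o) hso
      obtain ⟨hmem, hlt, hmono⟩ := ih ho
      have hns := hnext_spec (c o) hlt
      rw [Ordinal.add_one_eq_succ, hcs o]
      refine ⟨hns.1, hC.1 _ hns.1, fun β hβ => ?_⟩
      rcases lt_or_eq_of_le (Order.le_of_lt_succ hβ) with h | h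
      · exact lt_trans (hmono β h) hns.2
      · rw [h]; exact hns.2
    | limit o holim ih =>
      intro ho
      set S := {x | ∃ β, ∃ _ : β < o, x = c β} with hS
      have hbdd : BddAbove S := haveI := hSsmall o; Ordinal.bddAbove_of_small
      have hSsub : S ⊆ C := by
        rintro x ⟨β, hβ, rfl⟩
        exact (ih β hβ (lt_trans hβ ho)).1
      have hSne : S.Nonempty := ⟨c 0, 0, holim.pos, rfl⟩
      have hScnt : S.Countable := by
        have : S = c '' (Set.Iio o) := by
          ext x; constructor
          · rintro ⟨β, hβ, rfl⟩; exact ⟨β, hβ, rfl⟩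
          · rintro ⟨β, hβ, rfl⟩; exact ⟨β, hβ, rfl⟩
        rw [this]
        exact (countable_Iio_of_lt_omega1 ho).image c
      have hSlt : ∀ x ∈ S, x < omega1 := by
        rintro x ⟨β, hβ, rfl⟩
        exact (ih β hβ (lt_trans hβ ho)).2.1
      obtain ⟨b, hb, hbub⟩ := sup_lt_omega1 hScnt hSlt
      rw [hcl o holim]
      have hsup_lt : sSup S < omega1 :=
        lt_of_le_of_lt (csSup_le hSne (fun x hx => le_of_lt (hbub x hx))) hb
      have hmem : sSup S ∈ C := hC.2.1 S hSsub hSne ⟨b, hb, fun x hx => le_of_lt (hbub x hx)⟩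
      refine ⟨hmem, hsup_lt, fun β hβ => ?_⟩
      have h1 : β < Order.succ β := Order.lt_succ β
      have h2 : Order.succ β < o := holim.succ_lt hβ
      have : c β < c (Order.succ β) := (ih (Order.succ β) h2 (lt_trans h2 ho)).2.2 β h1
      exact lt_of_lt_of_le this (le_csSup hbdd ⟨Order.succ β, h2, rfl⟩)
  -- strict monotonicity
  have hmono : ∀ α β : Ordinal, α < β → β < omega1 → c α < c β := by
    intro α β h hβ
    exact (main β hβ).2.2 α h
  -- α ≤ c α
  have hge : ∀ α, α < omega1 → α ≤ c α := by
    intro α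
    induction α using Ordinal.induction with
    | h α ih =>
      intro hα
      by_contra hcon
      push_neg at hcon
      have h1 : c α < omega1 := lt_trans hcon hα
      have h2 : c α ≤ c (c α) := ih (c α) hcon h1
      have h3 : c (c α) < c α := hmono (c α) α hcon hα
      exact absurd (lt_of_le_of_lt h2 h3) (lt_irrefl _)
  -- limit behaviour
  have hlim : ∀ α, α < omega1 → Order.IsSuccLimit α → Order.IsSuccLimit (c α) ∧ (∀ γ < c α, ∃ β < α, γ < c β) := by
    intro α hα hαl
    set S := {x | ∃ β, ∃ _ : β < α, x = c β} with hS
    have hbdd : BddAbove S := haveI := hSsmall α; Ordinal.bddAbove_of_small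
    have hSne : S.Nonempty := ⟨c 0, 0, hαl.pos, rfl⟩
    have hcofin : ∀ γ < c α, ∃ β < α, γ < c β := by
      intro γ hγ
      rw [hcl α hαl] at hγ
      obtain ⟨x, hxS, hx⟩ := exists_lt_of_lt_csSup hSne hγ
      obtain ⟨β, hβ, rfl⟩ := hxS
      exact ⟨β, hβ, hx⟩
    constructor
    · refine Ordinal.isSuccLimit_iff.2 ⟨?_, Order.isSuccPrelimit_iff_succ_lt.2 ?_⟩
      · intro h0
        have := hmono 0 α hαl.pos hα
        rw [h0] at this
        exact absurd this not_lt_zero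
      · intro γ hγ
        obtain ⟨β, hβ, hγβ⟩ := hcofin γ hγ
        have hsβ : Order.succ β < α := hαl.succ_lt hβ
        have h1 : c β < c (Order.succ β) := hmono β (Order.succ β) (Order.lt_succ β) (lt_trans hsβ hα)
        have h2 : c (Order.succ β) ≤ c α := by
          rw [hcl α hαl]
          exact le_csSup hbdd ⟨Order.succ β, hsβ, rfl⟩
        have : γ < c β := hγβ
        calc Order.succ γ ≤ c β := Order.succ_le_of_lt hγβ
          _ < c (Order.succ β) := h1
          _ ≤ c α := h2
    · exact hcofin
  exact ⟨c, fun α hα => (main α hα).1, fun α hα => (main α hα).2.1, hmono, hlim, hge⟩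

def quotAddEquiv {M : Type*} [AddCommGroup M] (p : Submodule ℤ M) :
    (M ⧸ p.toAddSubgroup) ≃+ (M ⧸ p) := AddEquiv.refl _

open Submodule in
lemma free_of_club {H : Type u} [AddCommGroup H] (hH : Aleph1Free H)
    (F : Ordinal → AddSubgroup H) (hF : IsAleph1Filtration F)
    (C : Set Ordinal) (hC : IsClubIn C omega1)
    (hq : ∀ α ∈ C, Aleph1Free (H ⧸ F α)) : Module.Free ℤ H := by
  classical
  obtain ⟨c, hcC, hclt, hcmono, hclim, hcge⟩ := exists_club_enum hC
  set G : Ordinal → AddSubgroup H := fun δ => if δ = 0 then ⊥ else F (c δ) with hGdef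
  have hG0 : G 0 = ⊥ := by simp [hGdef]
  have hGpos : ∀ δ : Ordinal, δ ≠ 0 → G δ = F (c δ) := by
    intro δ h; simp [hGdef, h]
  have hGmono : ∀ δ ε : Ordinal, δ ≤ ε → ε < omega1 → G δ ≤ G ε := by
    intro δ ε h hε
    rcases eq_or_ne δ 0 with rfl | hδ
    · rw [hG0]; exact bot_le
    have hε0 : ε ≠ 0 := by
      rintro rfl; exact hδ (nonpos_iff_eq_zero.1 h)
    rw [hGpos δ hδ, hGpos ε hε0]
    rcases eq_or_lt_of_le h with rfl | hlt
    · exact le_refl _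
    · exact hF.2.1 _ _ (le_of_lt (hcmono δ ε hlt hε)) (hclt ε hε)
  have hGcnt : ∀ δ : Ordinal, δ < omega1 → Countable (G δ) := by
    intro δ hδ
    rcases eq_or_ne δ 0 with rfl | hδ0
    · rw [hG0]; infer_instance
    · rw [hGpos δ hδ0]; exact hF.1 _ (hclt δ hδ)
  have hGquot : ∀ δ : Ordinal, δ < omega1 → Aleph1Free (H ⧸ G δ) := by
    intro δ hδ
    rcases eq_or_ne δ 0 with rfl | hδ0
    · rw [hG0]
      exact aleph1Free_congr (QuotientAddGroup.quotientBot (G := H)).symm hH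
    · rw [hGpos δ hδ0]
      exact hq _ (hcC δ hδ)
  have hGlim : ∀ δ : Ordinal, δ < omega1 → Order.IsSuccLimit δ → ∀ x ∈ G δ, ∃ β < δ, x ∈ G β := by
    intro δ hδ hδl x hx
    rw [hGpos δ hδl.pos.ne'] at hx
    obtain ⟨hclimit, hcof⟩ := hclim δ hδ hδl
    obtain ⟨γ, hγ, hxγ⟩ := (hF.2.2.1 (c δ) (hclt δ hδ) hclimit x).1 hx
    obtain ⟨β, hβ, hγβ⟩ := hcof γ hγ
    refine ⟨β + 1, hδl.succ_lt hβ, ?_⟩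
    have hβ1 : β + 1 < omega1 := lt_trans (hδl.succ_lt hβ) hδ
    have hββ1 : c β < c (β + 1) := by
      rw [Ordinal.add_one_eq_succ]
      exact hcmono β (Order.succ β) (Order.lt_succ β) (by rwa [Ordinal.add_one_eq_succ] at hβ1)
    rw [hGpos _ ((lt_of_le_of_lt zero_le (lt_add_one _)).ne')]
    exact hF.2.1 γ (c (β+1)) (le_of_lt (lt_trans hγβ hββ1)) (hclt _ hβ1) hxγ
  have hGtot : ∀ x : H, ∃ δ, δ < omega1 ∧ x ∈ G δ := by
    intro x
    obtain ⟨β, hβ, hx⟩ := hF.2.2.2 x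
    have hβ1 : β + 1 < omega1 := omega1_isLimit.succ_lt hβ
    refine ⟨β + 1, hβ1, ?_⟩
    rw [hGpos _ ((lt_of_le_of_lt zero_le (lt_add_one _)).ne')]
    refine hF.2.1 β (c (β+1)) ?_ (hclt _ hβ1) hx
    calc β ≤ β + 1 := le_of_lt (lt_add_one β)
      _ ≤ c (β + 1) := hcge _ hβ1
  -- the subtype of countable ordinals
  set I₁ := ↥(Set.Iio omega1) with hI₁
  -- choose bases and lifts
  have key : ∀ o : I₁, ∃ (ι : Type u) (b : ι → H ⧸ G o) (s : ι → H),
      LinearIndependent ℤ b ∧ (∀ i, s i ∈ G ((o : Ordinal) + 1)) ∧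
      (∀ i, QuotientAddGroup.mk' (G o) (s i) = b i) ∧
      (∀ x ∈ G ((o : Ordinal) + 1), QuotientAddGroup.mk' (G o) x ∈ span ℤ (Set.range b)) := by
    rintro ⟨o, ho⟩
    set q := QuotientAddGroup.mk' (G o) with hqdef
    set K : AddSubgroup (H ⧸ G o) := (G (o + 1)).map q with hKdef
    have ho1 : o + 1 < omega1 := omega1_isLimit.succ_lt ho
    have hKcnt : Countable K := by
      have h1 : Countable (G (o+1)) := hGcnt _ ho1
      have h2 : (↑(G (o+1)) : Set H).Countable := Set.countable_coe_iff.1 h1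
      have h3 : (↑K : Set (H ⧸ G o)).Countable := by
        rw [hKdef]; exact Set.Countable.image h2 q
      exact Set.countable_coe_iff.2 h3
    have hKfree : Module.Free ℤ K := hGquot o ho K hKcnt
    set bb := Module.Free.chooseBasis ℤ K with hbb
    set ι := Module.Free.ChooseBasisIndex ℤ K
    set incl : ↥K →ₗ[ℤ] H ⧸ G o := K.subtype.toIntLinearMap with hincl
    have hincl_inj : Function.Injective incl := Subtype.coe_injective
    set b : ι → H ⧸ G o := fun i => incl (bb i) with hb
    have hlift : ∀ i : ι, ∃ x : H, x ∈ G (o + 1) ∧ q x = b i := by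
      intro i
      have : (bb i : H ⧸ G o) ∈ K := (bb i).2
      obtain ⟨x, hx1, hx2⟩ := this
      exact ⟨x, hx1, hx2⟩
    choose s hs1 hs2 using hlift
    refine ⟨ι, b, s, ?_, hs1, hs2, ?_⟩
    · exact (bb.linearIndependent).map' incl (LinearMap.ker_eq_bot.2 hincl_inj)
    · intro x hx
      have hmem : q x ∈ K := ⟨x, hx, rfl⟩
      have h1 : (⟨q x, hmem⟩ : ↥K) ∈ span ℤ (Set.range bb) := bb.mem_span _
      have h2 : incl ⟨q x, hmem⟩ ∈ map incl (span ℤ (Set.range bb)) :=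
        Submodule.mem_map_of_mem h1
      rw [Submodule.map_span] at h2
      have : incl '' Set.range bb = Set.range b := by
        rw [← Set.range_comp]; rfl
      rw [this] at h2
      exact h2
  choose ι bv sv hbindep hsv1 hsv2 hbspan using key
  set Sr : I₁ → Set H := fun o => Set.range (sv o) with hSr
  set Bset : Set H := ⋃ o : I₁, Sr o with hBset
  -- the union up to level δ
  set BB : Ordinal → Set H := fun δ => ⋃ (o : I₁) (_ : (o : Ordinal) < δ), Sr o with hBB
  have hBBmono : ∀ δ ε : Ordinal, δ ≤ ε → BB δ ⊆ BB ε := by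
    intro δ ε h x hx
    simp only [hBB, Set.mem_iUnion] at hx ⊢
    obtain ⟨o, ho, hx⟩ := hx
    exact ⟨o, lt_of_lt_of_le ho h, hx⟩
  have hBBsub : ∀ δ : Ordinal, BB δ ⊆ Bset := by
    intro δ x hx
    simp only [hBB, Set.mem_iUnion] at hx
    obtain ⟨o, _, hx⟩ := hx
    exact Set.mem_iUnion.2 ⟨o, hx⟩
  -- spanning by transfinite induction
  have hspan : ∀ δ : Ordinal, δ < omega1 → ∀ x ∈ G δ, x ∈ span ℤ (BB δ) := by
    intro δ
    induction δ using Ordinal.limitRecOn with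
    | zero =>
      intro _ x hx
      rw [hG0, AddSubgroup.mem_bot] at hx
      rw [hx]; exact Submodule.zero_mem _
    | add_one o ih =>
      intro hso x hx
      have ho : o < omega1 := lt_trans (Order.lt_succ o) hso
      set oI : I₁ := ⟨o, ho⟩ with hoI
      have hxq := hbspan oI x hx
      rw [Finsupp.mem_span_range_iff_exists_finsupp] at hxq
      obtain ⟨cf, hcf⟩ := hxq
      set z : H := cf.sum fun i a => a • sv oI i with hz
      have hqz : QuotientAddGroup.mk' (G (oI : Ordinal)) z = QuotientAddGroup.mk' (G (oI : Ordinal)) x := by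
        rw [hz, map_finsuppSum, ← hcf]
        exact Finsupp.sum_congr (fun i _ => by rw [map_zsmul, hsv2 oI i])
      have hxz : x - z ∈ G (oI : Ordinal) := by
        have h0 : QuotientAddGroup.mk' (G (oI : Ordinal)) (x - z) = 0 := by
          rw [map_sub, hqz, sub_self]
        have h1 : x - z ∈ (QuotientAddGroup.mk' (G (oI : Ordinal))).ker :=
          AddMonoidHom.mem_ker.2 h0
        rwa [QuotientAddGroup.ker_mk'] at h1
      have h1 : x - z ∈ span ℤ (BB (o + 1)) :=
        span_mono (hBBmono o (o+1) (le_of_lt (lt_add_one o))) (ih ho _ hxz)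
      have h2 : z ∈ span ℤ (BB (o + 1)) := by
        rw [hz, Finsupp.sum]
        refine Submodule.sum_mem _ (fun i _ => Submodule.smul_mem _ _ (Submodule.subset_span ?_))
        simp only [hBB, Set.mem_iUnion]
        exact ⟨oI, lt_add_one o, Set.mem_range_self i⟩
      have := Submodule.add_mem _ h1 h2
      rwa [sub_add_cancel] at this
    | limit o holim ih =>
      intro ho x hx
      obtain ⟨β, hβ, hxβ⟩ := hGlim o ho holim x hx
      have h1 := ih β hβ (lt_trans hβ ho) x hxβ
      exact span_mono (hBBmono β o (le_of_lt hβ)) h1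
  -- level function
  have hI₁ne : Nonempty I₁ := ⟨⟨0, omega1_isLimit.pos⟩⟩
  have hlev_ex : ∀ x : H, ∃ o : I₁, x ∈ Bset → x ∈ Sr o := by
    intro x
    by_cases hx : x ∈ Bset
    · obtain ⟨o, ho⟩ := Set.mem_iUnion.1 hx
      exact ⟨o, fun _ => ho⟩
    · exact ⟨Classical.arbitrary I₁, fun h => absurd h hx⟩
  choose lev hlev using hlev_ex
  -- injectivity of the lifts
  have hsv_inj : ∀ o : I₁, Function.Injective (sv o) := by
    intro o i j hij
    have : bv o i = bv o j := by rw [← hsv2 o i, ← hsv2 o j, hij]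
    exact (hbindep o).injective this
  -- linear independence
  have hli : LinearIndependent ℤ (fun x => x : Bset → H) := by
    refine (linearIndepOn_iff (R := ℤ) (v := id) (s := Bset)).2 ?_
    intro l hl hl0
    by_contra hln
    have hsupp_ne : l.support.Nonempty := Finsupp.support_nonempty_iff.2 hln
    set levels : Finset I₁ := l.support.image lev with hlevels
    have hlevels_ne : levels.Nonempty := hsupp_ne.image lev
    set β : I₁ := levels.max' hlevels_ne with hβdef
    obtain ⟨x₀, hx₀s, hx₀l⟩ := Finset.mem_image.1 (levels.max'_mem hlevels_ne)
    set q : H →ₗ[ℤ] H ⧸ G β := (QuotientAddGroup.mk' (G β)).toIntLinearMap with hqdef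
    have hsub0 : ↑l.support ⊆ Bset := Finsupp.mem_supported ℤ l |>.1 hl
    have hmemS : ∀ x ∈ l.support, x ∈ Sr (lev x) := by
      intro x hx
      exact hlev x (hsub0 hx)
    have hq0 : ∀ x ∈ l.support, lev x ≠ β → q x = 0 := by
      intro x hx hne
      have hle : lev x ≤ β := Finset.le_max' _ _ (Finset.mem_image_of_mem lev hx)
      have hlt : lev x < β := lt_of_le_of_ne hle hne
      have hxG : x ∈ G ((lev x : Ordinal) + 1) := by
        obtain ⟨i, hi⟩ := hmemS x hx
        have := hsv1 (lev x) i
        rwa [hi] at this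
      have hxGβ : x ∈ G β := by
        refine hGmono _ _ ?_ β.2 hxG
        rw [Ordinal.add_one_eq_succ, Order.succ_le_iff]
        exact_mod_cast hlt
      have : QuotientAddGroup.mk' (G β) x = 0 := by
        rw [← QuotientAddGroup.ker_mk' (G ↑β)] at hxGβ
        exact AddMonoidHom.mem_ker.1 hxGβ
      exact this
    have hsub : ↑l.support ⊆ Bset := Finsupp.mem_supported ℤ l |>.1 hl
    -- the relation
    have hrel : (l.support.sum fun x => l x • q x) = 0 := by
      have h1 : Finsupp.linearCombination ℤ (id : H → H) l = 0 := hl0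
      have h2 : q (Finsupp.linearCombination ℤ (id : H → H) l) = 0 := by rw [h1, map_zero]
      rw [Finsupp.linearCombination_apply, map_finsuppSum] at h2
      rw [← h2, Finsupp.sum]
      refine Finset.sum_congr rfl (fun x _ => ?_)
      simp [map_smul]
    set t₁ : Finset H := l.support.filter (fun x => lev x = β) with ht₁
    have hrel1 : (t₁.sum fun x => l x • q x) = 0 := by
      have hsplit := Finset.sum_filter_add_sum_filter_not l.support
        (fun x => lev x = β) (fun x => l x • q x)
      have hzero : (l.support.filter (fun x => ¬ lev x = β)).sum (fun x => l x • q x) = 0 := by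
        refine Finset.sum_eq_zero (fun x hx => ?_)
        obtain ⟨hx1, hx2⟩ := Finset.mem_filter.1 hx
        rw [hq0 x hx1 hx2, smul_zero]
      rw [hzero, add_zero] at hsplit
      rw [← hsplit] at hrel
      exact hrel
    have ht₁sub : ∀ x ∈ t₁, x ∈ Set.range (sv β) := by
      intro x hx
      obtain ⟨hx1, hx2⟩ := Finset.mem_filter.1 hx
      have := hmemS x hx1
      rwa [hx2] at this
    set t : Finset (ι β) := t₁.preimage (sv β)
      (Set.injOn_of_injective (hsv_inj β)) with ht
    have himg : t.image (sv β) = t₁ := by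
      rw [ht, Finset.image_preimage]
      exact Finset.filter_true_of_mem (fun x hx => ht₁sub x hx)
    have hrel2 : (t.sum fun i => l (sv β i) • bv β i) = 0 := by
      have h1 : (t.sum fun i => l (sv β i) • q (sv β i)) = (t₁.sum fun x => l x • q x) := by
        rw [← himg]
        rw [Finset.sum_image (fun i _ j _ h => hsv_inj β h)]
      have h2 : ∀ i, q (sv β i) = bv β i := fun i => hsv2 β i
      rw [← hrel1, ← h1]
      exact Finset.sum_congr rfl (fun i _ => by rw [h2])
    have hcoef := linearIndependent_iff'.1 (hbindep β) t (fun i => l (sv β i)) hrel2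
    have hx₀t₁ : x₀ ∈ t₁ := Finset.mem_filter.2 ⟨hx₀s, hx₀l⟩
    obtain ⟨i₀, hi₀⟩ := ht₁sub x₀ hx₀t₁
    have hi₀t : i₀ ∈ t := Finset.mem_preimage.2 (hi₀ ▸ hx₀t₁)
    have : l x₀ = 0 := by rw [← hi₀]; exact hcoef i₀ hi₀t
    exact Finsupp.mem_support_iff.1 hx₀s this
  -- conclude
  have hsp : ⊤ ≤ span ℤ (Set.range (fun x => x : Bset → H)) := by
    rw [Subtype.range_coe]
    intro x _
    obtain ⟨δ, hδ, hx⟩ := hGtot x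
    exact span_mono (hBBsub δ) (hspan δ hδ x hx)
  exact Module.Free.of_basis (Module.Basis.mk hli hsp)

open Submodule in
lemma club_of_free {H : Type u} [AddCommGroup H] (hH : Aleph1Free H)
    (hcard : Cardinal.mk H = Cardinal.aleph 1)
    (F : Ordinal.{v} → AddSubgroup H) (hF : IsAleph1Filtration F)
    (hfree : Module.Free ℤ H) :
    ∃ C : Set Ordinal.{v}, IsClubIn C omega1 ∧ ∀ α ∈ C, Aleph1Free (H ⧸ F α) := by
  classical
  -- basis indexed by countable ordinals
  set κ := Module.Free.ChooseBasisIndex ℤ H with hκdef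
  set bI : Module.Basis κ ℤ H := Module.Free.chooseBasis ℤ H with hbI
  have hHκ : Cardinal.mk H = Cardinal.mk (κ →₀ ℤ) := Cardinal.mk_congr bI.repr.toEquiv
  have hκinf : Infinite κ := by
    by_contra hfin
    rw [not_infinite_iff_finite] at hfin
    have : Countable (κ →₀ ℤ) := by infer_instance
    have h1 : Cardinal.mk (κ →₀ ℤ) ≤ Cardinal.aleph0 := Cardinal.mk_le_aleph0
    rw [← hHκ, hcard] at h1
    exact absurd h1 (not_le.2 Cardinal.aleph0_lt_aleph_one)
  have hκcard : Cardinal.mk κ = Cardinal.aleph 1 := by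
    have h1 : Cardinal.mk (κ →₀ ℤ) = max (Cardinal.lift.{0} (Cardinal.mk κ))
        (Cardinal.lift.{u} (Cardinal.mk ℤ)) := Cardinal.mk_finsupp_lift_of_infinite κ ℤ
    rw [Cardinal.mk_int, Cardinal.lift_aleph0, Cardinal.lift_uzero] at h1
    rw [hHκ, h1] at hcard
    rcases max_cases (Cardinal.mk κ) Cardinal.aleph0 with ⟨he, _⟩ | ⟨he, _⟩
    · rw [he] at hcard; exact hcard
    · rw [he] at hcard
      exact absurd hcard (ne_of_lt Cardinal.aleph0_lt_aleph_one)
  set I₁ := ↥(Set.Iio omega1.{v}) with hI₁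
  have hequiv : Nonempty (κ ≃ I₁) := by
    rw [← Cardinal.lift_mk_eq']
    have h2 : Cardinal.mk I₁ = Cardinal.lift.{v+1} omega1.{v}.card :=
      Ordinal.mk_Iio_ordinal omega1
    rw [hκcard, h2, show omega1.{v}.card = Cardinal.aleph 1 from Cardinal.card_ord _]
    simp [Cardinal.lift_aleph, Cardinal.lift_lift, Ordinal.lift_one]
  set b : Module.Basis I₁ ℤ H := bI.reindex hequiv.some with hb
  -- the comparison filtration
  set Gm : Ordinal → Submodule ℤ H :=
    fun δ => span ℤ (b '' {i : I₁ | (i : Ordinal) < δ}) with hGm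
  set GA : Ordinal → AddSubgroup H := fun δ => (Gm δ).toAddSubgroup with hGA
  have hGAmem : ∀ (δ : Ordinal) (x : H), x ∈ GA δ ↔ ↑(b.repr x).support ⊆ {i : I₁ | (i : Ordinal) < δ} := by
    intro δ x
    exact b.mem_span_image
  have hGAmono : ∀ δ ε : Ordinal, δ ≤ ε → GA δ ≤ GA ε := by
    intro δ ε h x hx
    rw [hGAmem] at hx ⊢
    exact hx.trans (fun i hi => lt_of_lt_of_le hi h)
  have hGAcnt : ∀ δ : Ordinal, δ < omega1 → Countable (GA δ) := by
    intro δ hδ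
    set s : Set I₁ := {i : I₁ | (i : Ordinal) < δ} with hs
    have hscnt : Countable ↥s := by
      have h1 : Countable ↥(Set.Iio δ) := (countable_Iio_of_lt_omega1 hδ).to_subtype
      have hinj : Function.Injective (fun i : s => (⟨i.1.1, i.2⟩ : ↥(Set.Iio δ))) := by
        intro i j hij
        have h' : (i.1 : Ordinal) = (j.1 : Ordinal) := by
          simpa using congrArg Subtype.val hij
        exact Subtype.ext (Subtype.ext h')
      exact hinj.countable
    have himg : b '' s = Set.range (fun i : s => b i) := by
      rw [Set.image_eq_range]
    have : Countable (span ℤ (Set.range (fun i : s => b i))) := by infer_instance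
    rw [← himg] at this
    exact this
  have hGAlim : ∀ δ : Ordinal, Order.IsSuccLimit δ → ∀ x ∈ GA δ, ∃ β < δ, x ∈ GA β := by
    intro δ hδl x hx
    rw [hGAmem] at hx
    set t := (b.repr x).support with htdef
    set β : Ordinal := t.sup (fun i => (i : Ordinal) + 1) with hβ
    have hβδ : β < δ := by
      rw [hβ, Finset.sup_lt_iff (by simpa using hδl.pos)]
      intro i hi
      exact hδl.succ_lt (hx (Finset.mem_coe.2 hi))
    refine ⟨β, hβδ, ?_⟩
    rw [hGAmem]
    intro i hi
    exact lt_of_lt_of_le (lt_add_one _) (Finset.le_sup (f := fun i : I₁ => (i : Ordinal) + 1) (Finset.mem_coe.1 hi))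
  have hGAtot : ∀ x : H, ∃ δ, δ < omega1 ∧ x ∈ GA δ := by
    intro x
    set t := (b.repr x).support with htdef
    set β : Ordinal := t.sup (fun i => (i : Ordinal) + 1) with hβ
    have hβδ : β < omega1 := by
      rw [hβ, Finset.sup_lt_iff (by simpa using omega1_isLimit.pos)]
      intro i hi
      exact omega1_isLimit.succ_lt i.2
    refine ⟨β, hβδ, ?_⟩
    rw [hGAmem]
    intro i hi
    exact lt_of_lt_of_le (lt_add_one _) (Finset.le_sup (f := fun i : I₁ => (i : Ordinal) + 1) (Finset.mem_coe.1 hi))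
  -- the club
  set Cset : Set Ordinal := {α | α < omega1 ∧ F α = GA α} with hCset
  have hmemC : ∀ α ∈ Cset, α < omega1 ∧ F α = GA α := fun α h => h
  refine ⟨Cset, ⟨fun α h => h.1, ?_, ?_⟩, ?_⟩
  · -- closed
    intro S hS hne hbound
    obtain ⟨β, hβ, hub⟩ := hbound
    set σ := sSup S with hσ
    have hbdd : BddAbove S := ⟨β, fun x hx => hub x hx⟩
    have hσβ : σ ≤ β := csSup_le hne hub
    have hσω : σ < omega1 := lt_of_le_of_lt hσβ hβ
    by_cases hσS : σ ∈ S
    · exact hS hσS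
    · have hσlim : Order.IsSuccLimit σ := by
        refine Ordinal.isSuccLimit_iff.2 ⟨?_, Order.isSuccPrelimit_iff_succ_lt.2 ?_⟩
        · obtain ⟨x, hx⟩ := hne
          have hxlt : x < σ := lt_of_le_of_ne (le_csSup hbdd hx) (fun h => hσS (h ▸ hx))
          exact fun h0 => not_lt_zero (a := x) (h0 ▸ hxlt)
        · intro γ hγ
          obtain ⟨x, hxS, hγx⟩ := exists_lt_of_lt_csSup hne hγ
          have hxσ : x ≤ σ := le_csSup hbdd hxS
          have hxlt : x < σ := lt_of_le_of_ne hxσ (fun h => hσS (h ▸ hxS))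
          exact lt_of_le_of_lt (Order.succ_le_of_lt hγx) hxlt
      constructor
      · exact hσω
      · apply le_antisymm
        · intro x hx
          obtain ⟨γ, hγ, hxγ⟩ := (hF.2.2.1 σ hσω hσlim x).1 hx
          obtain ⟨s, hsS, hγs⟩ := exists_lt_of_lt_csSup hne hγ
          have hsω : s < omega1 := lt_of_le_of_lt (le_csSup hbdd hsS) hσω
          have h1 : x ∈ F s := hF.2.1 γ s (le_of_lt hγs) hsω hxγ
          rw [(hS hsS).2] at h1
          exact hGAmono s σ (le_csSup hbdd hsS) h1
        · intro x hx
          obtain ⟨γ, hγ, hxγ⟩ := hGAlim σ hσlim x hx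
          obtain ⟨s, hsS, hγs⟩ := exists_lt_of_lt_csSup hne hγ
          have h1 : x ∈ GA s := hGAmono γ s (le_of_lt hγs) hxγ
          rw [← (hS hsS).2] at h1
          exact hF.2.1 s σ (le_csSup hbdd hsS) hσω h1
  · -- unbounded
    intro α hα
    have hstep : ∀ γ : Ordinal, ∃ γ' : Ordinal, γ < omega1 →
        (γ' < omega1 ∧ γ < γ' ∧ F γ ≤ GA γ' ∧ GA γ ≤ F γ') := by
      intro γ
      by_cases hγ : γ < omega1
      · choose d hd1 hd2 using hGAtot
        choose d' hd'' using hF.2.2.2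
        have hd'1 : ∀ x, d' x < omega1 := fun x => (hd'' x).1
        have hd'2 : ∀ x, x ∈ F (d' x) := fun x => (hd'' x).2
        have hFcnt : (↑(F γ) : Set H).Countable := Set.countable_coe_iff.1 (hF.1 γ hγ)
        have hGcnt : (↑(GA γ) : Set H).Countable := Set.countable_coe_iff.1 (hGAcnt γ hγ)
        obtain ⟨β₁, hβ₁, hub₁⟩ := sup_lt_omega1 (hFcnt.image d) (by rintro x ⟨y, _, rfl⟩; exact hd1 y)
        obtain ⟨β₂, hβ₂, hub₂⟩ := sup_lt_omega1 (hGcnt.image d') (by rintro x ⟨y, _, rfl⟩; exact hd'1 y)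
        refine ⟨max (γ + 1) (max β₁ β₂), fun _ => ⟨?_, ?_, ?_, ?_⟩⟩
        · exact max_lt (omega1_isLimit.succ_lt hγ) (max_lt hβ₁ hβ₂)
        · exact lt_of_lt_of_le (lt_add_one γ) (le_max_left _ _)
        · intro x hx
          have h1 : d x < β₁ := hub₁ (d x) ⟨x, hx, rfl⟩
          exact hGAmono (d x) _ (le_of_lt (lt_of_lt_of_le h1 (le_max_of_le_right (le_max_left _ _)))) (hd2 x)
        · intro x hx
          have h1 : d' x < β₂ := hub₂ (d' x) ⟨x, hx, rfl⟩
          refine hF.2.1 (d' x) _ (le_of_lt (lt_of_lt_of_le h1 (le_max_of_le_right (le_max_right _ _)))) ?_ (hd'2 x)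
          exact max_lt (omega1_isLimit.succ_lt hγ) (max_lt hβ₁ hβ₂)
      · exact ⟨0, fun h => absurd h hγ⟩
    choose step hstep' using hstep
    set a : ℕ → Ordinal := fun n => Nat.rec (α + 1) (fun _ ih => step ih) n with ha
    have ha0 : a 0 = α + 1 := rfl
    have haS : ∀ n, a (n + 1) = step (a n) := fun n => rfl
    have haω : ∀ n, a n < omega1 := by
      intro n
      induction n with
      | zero => exact omega1_isLimit.succ_lt hα
      | succ n ih => rw [haS]; exact (hstep' (a n) ih).1
    have hainc : ∀ n, a n < a (n + 1) := fun n => (hstep' (a n) (haω n)).2.1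
    set σ := iSup a with hσ
    have hσω : σ < omega1 := by
      rw [omega1, Cardinal.ord_aleph]
      exact Ordinal.iSup_lt_omega_one (fun n => by have := haω n; rwa [omega1, Cardinal.ord_aleph] at this)
    have hbdd : BddAbove (Set.range a) := Ordinal.bddAbove_range a
    have haσ : ∀ n, a n ≤ σ := fun n => le_ciSup hbdd n
    have hα023 : α < σ := lt_of_lt_of_le (lt_add_one α) (ha0 ▸ haσ 0)
    have hcof : ∀ γ < σ, ∃ n, γ < a n := by
      intro γ hγ
      by_contra hcon
      push_neg at hcon
      exact absurd (ciSup_le hcon) (not_le.2 hγ)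
    have hσlim : Order.IsSuccLimit σ := by
      refine Ordinal.isSuccLimit_iff.2 ⟨?_, Order.isSuccPrelimit_iff_succ_lt.2 ?_⟩
      · intro h0
        exact not_lt_zero (a := α) (h0 ▸ hα023)
      · intro γ hγ
        obtain ⟨n, hn⟩ := hcof γ hγ
        have h1 : γ < a (n+1) := lt_trans hn (hainc n)
        exact lt_of_le_of_lt (Order.succ_le_of_lt hn) (lt_of_lt_of_le (hainc n) (haσ (n+1)))
    refine ⟨σ, ⟨hσω, ?_⟩, hα023⟩
    apply le_antisymm
    · intro x hx
      obtain ⟨γ, hγ, hxγ⟩ := (hF.2.2.1 σ hσω hσlim x).1 hx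
      obtain ⟨n, hn⟩ := hcof γ hγ
      have h1 : x ∈ F (a n) := hF.2.1 γ (a n) (le_of_lt hn) (haω n) hxγ
      have h2 : x ∈ GA (a (n+1)) := (hstep' (a n) (haω n)).2.2.1 h1
      exact hGAmono _ σ (haσ (n+1)) h2
    · intro x hx
      obtain ⟨γ, hγ, hxγ⟩ := hGAlim σ hσlim x hx
      obtain ⟨n, hn⟩ := hcof γ hγ
      have h1 : x ∈ GA (a n) := hGAmono γ (a n) (le_of_lt hn) hxγ
      have h2 : x ∈ F (a (n+1)) := (hstep' (a n) (haω n)).2.2.2 h1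
      exact hF.2.1 (a (n+1)) σ (haσ (n+1)) hσω h2
  · -- quotients are aleph1-free
    intro α hαC
    rw [(hmemC α hαC).2]
    set s : Set I₁ := {i : I₁ | (i : Ordinal) < α} with hs
    set W : Submodule ℤ H := span ℤ (b '' sᶜ) with hW
    have hcompl : IsCompl (Gm α) W := by
      constructor
      · rw [disjoint_iff_inf_le]
        intro x ⟨hx1, hx2⟩
        have h1 : ↑(b.repr x).support ⊆ s := b.mem_span_image.1 hx1
        have h2 : ↑(b.repr x).support ⊆ sᶜ := b.mem_span_image.1 hx2
        have h3 : (b.repr x).support = ∅ := by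
          apply Finset.eq_empty_of_forall_notMem
          intro i hi
          exact h2 (Finset.mem_coe.2 hi) (h1 (Finset.mem_coe.2 hi))
        have h4 : b.repr x = 0 := Finsupp.support_eq_empty.1 h3
        have h5 : x = 0 := by
          have := congrArg b.repr.symm h4
          rwa [b.repr.symm_apply_apply, map_zero] at this
        simp [h5]
      · rw [codisjoint_iff, ← span_union, ← Set.image_union, Set.union_compl_self,
          Set.image_univ, b.span_eq]
    have e₂ : (H ⧸ Gm α) ≃ₗ[ℤ] W := Submodule.quotientEquivOfIsCompl (Gm α) W hcompl
    have hWfree : Aleph1Free ↥W := aleph1Free_addSubgroup hH W.toAddSubgroup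
    have h1 : Aleph1Free (H ⧸ Gm α) := aleph1Free_congr e₂.symm.toAddEquiv hWfree
    exact aleph1Free_congr (quotAddEquiv (Gm α)).symm h1

/-- An ℵ₁-free group `H` of cardinality ℵ₁ with ℵ₁-filtration `F` is free
iff there is a club `C` in ω₁ such that `H ⧸ F α` is ℵ₁-free for all `α ∈ C`. -/
theorem freeIffClubOfAleph1FreeQuotients {H : Type*} [AddCommGroup H]
    (hH : Aleph1Free H) (hcard : Cardinal.mk H = Cardinal.aleph 1)
    (F : Ordinal → AddSubgroup H) (hF : IsAleph1Filtration F) :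
    Module.Free ℤ H ↔
      ∃ C : Set Ordinal, IsClubIn C omega1 ∧ ∀ α ∈ C, Aleph1Free (H ⧸ F α) := by
  constructor
  · intro hfree
    exact club_of_free hH hcard F hF hfree
  · rintro ⟨C, hC, hq⟩
    exact free_of_club hH F hF C hC hq
end

section
/- Let H be an ℵ₁-free abelian group of cardinality ℵ₁ and let {H_α : α < ω₁} be an ℵ₁-filtration of H, with E = {α < ω₁ : H/H_α is not ℵ₁-free}. If E contains a club in ω₁ (i.e., H is turbid), then H is not a free abelian group. -/
lemma aleph1Free_of_injective {G H : Type*} [AddCommGroup G] [AddCommGroup H]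
    (f : G →+ H) (hf : Function.Injective f) (h : Aleph1Free H) : Aleph1Free G := by
  intro K hK
  have hsurj : Function.Surjective
      (fun x : K => (⟨f x, AddSubgroup.mem_map_of_mem f x.2⟩ : K.map f)) := by
    rintro ⟨y, x, hx, rfl⟩; exact ⟨⟨x, hx⟩, rfl⟩
  have hK' : Countable (K.map f) := hsurj.countable
  haveI := h (K.map f) hK'
  exact Module.Free.of_equiv (K.equivMapOfInjective f hf).symm.toIntLinearEquiv

lemma aleph1Free_quotient_closure_basis {H : Type*} [AddCommGroup H]
    (hH : Aleph1Free H) {ι : Type*} (b : Module.Basis ι ℤ H) (t : Set ι) :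
    Aleph1Free (H ⧸ AddSubgroup.closure (b '' t)) := by
  classical
  let φ : H →ₗ[ℤ] (↥tᶜ →₀ ℤ) :=
    (Finsupp.lsubtypeDomain tᶜ) ∘ₗ (b.repr : H →ₗ[ℤ] ι →₀ ℤ)
  let j : (↥tᶜ →₀ ℤ) →ₗ[ℤ] H := Finsupp.linearCombination ℤ (fun i : ↥tᶜ => b ↑i)
  have hjinj : Function.Injective j :=
    (b.linearIndependent.comp ((↑) : ↥tᶜ → ι)
      Subtype.coe_injective)
  let ψ : H →ₗ[ℤ] H := j ∘ₗ φ
  have hker : (ψ.toAddMonoidHom).ker = AddSubgroup.closure (b '' t) := by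
    ext x
    have h1 : ψ x = 0 ↔ φ x = 0 := by
      constructor
      · intro h; apply hjinj; simpa [ψ] using h
      · intro h; simp [ψ, LinearMap.comp_apply, h]
    have h2 : φ x = 0 ↔ ∀ i, i ∉ t → b.repr x i = 0 := by
      rw [show φ x = Finsupp.subtypeDomain (· ∈ tᶜ) (b.repr x) from rfl]
      rw [Finsupp.subtypeDomain_eq_zero_iff']
      simp [Set.mem_compl_iff]
    have h3 : (∀ i, i ∉ t → b.repr x i = 0) ↔ ↑(b.repr x).support ⊆ t := by
      constructor
      · intro h i hi
        by_contra hit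
        exact (Finsupp.mem_support_iff.1 hi) (h i hit)
      · intro h i hit
        by_contra h0
        exact hit (h (Finsupp.mem_support_iff.2 h0))
    rw [AddMonoidHom.mem_ker, ← Submodule.span_int_eq_addSubgroupClosure,
      Submodule.mem_toAddSubgroup, Module.Basis.mem_span_image]
    rw [show (ψ.toAddMonoidHom) x = ψ x from rfl]
    rw [h1, h2, h3]
  rw [← hker]
  exact aleph1Free_of_injective (QuotientAddGroup.kerLift ψ.toAddMonoidHom)
    (QuotientAddGroup.kerLift_injective _) hH

lemma club_inter {C₁ C₂ : Set Ordinal.{v}}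
    (h₁ : IsClubIn C₁ omega1) (h₂ : IsClubIn C₂ omega1) : ∃ γ, γ ∈ C₁ ∧ γ ∈ C₂ := by
  classical
  obtain ⟨hb₁, hcl₁, hu₁⟩ := h₁
  obtain ⟨hb₂, hcl₂, hu₂⟩ := h₂
  have hω₁lim : Order.IsSuccLimit (omega1 : Ordinal.{v}) :=
    Cardinal.isSuccLimit_ord (Cardinal.aleph0_le_aleph 1)
  have hcof : (omega1 : Ordinal.{v}).cof = Cardinal.aleph 1 :=
    Cardinal.isRegular_aleph_one.cof_eq
  have hsupnat : ∀ (f : ℕ → Ordinal.{v}), (∀ n, f n < omega1) → iSup f < omega1 := by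
    intro f hf
    apply Ordinal.iSup_lt_ord_lift _ hf
    rw [hcof]
    exact lt_of_le_of_lt (Cardinal.lift_le_aleph0.2 Cardinal.mk_le_aleph0)
      Cardinal.aleph0_lt_aleph_one
  choose! n₁ hn₁mem hn₁lt using hu₁
  choose! n₂ hn₂mem hn₂lt using hu₂
  set c : ℕ → Ordinal.{v} := fun n => (fun α => n₁ (n₂ α))^[n] (n₁ 0) with hc
  have hcsucc : ∀ n, c (n+1) = n₁ (n₂ (c n)) := fun n =>
    Function.iterate_succ_apply' _ n _
  have hkey : ∀ n, c n ∈ C₁ ∧ c n < omega1 := by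
    intro n; induction n with
    | zero =>
      exact ⟨hn₁mem 0 hω₁lim.pos, hb₁ _ (hn₁mem 0 hω₁lim.pos)⟩
    | succ n ih =>
      have h2 := hn₂mem (c n) ih.2
      have h2ω : n₂ (c n) < omega1 := hb₂ _ h2
      rw [hcsucc]
      exact ⟨hn₁mem _ h2ω, hb₁ _ (hn₁mem _ h2ω)⟩
  have hv : ∀ n, n₂ (c n) ∈ C₂ ∧ n₂ (c n) < omega1 := fun n =>
    ⟨hn₂mem (c n) (hkey n).2, hb₂ _ (hn₂mem (c n) (hkey n).2)⟩
  have hlt1 : ∀ n, c n < n₂ (c n) := fun n => hn₂lt (c n) (hkey n).2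
  have hlt2 : ∀ n, n₂ (c n) < c (n+1) := fun n => by
    rw [hcsucc]; exact hn₁lt _ (hv n).2
  set σ := ⨆ n, c n with hσ
  have hσlt : σ < omega1 := hsupnat c fun n => (hkey n).2
  have hτeq : (⨆ n, n₂ (c n)) = σ := by
    apply le_antisymm
    · refine Ordinal.iSup_le fun n => ?_
      exact le_trans (le_of_lt (hlt2 n)) (Ordinal.le_iSup c (n+1))
    · refine Ordinal.iSup_le fun n => ?_
      exact le_trans (le_of_lt (hlt1 n)) (Ordinal.le_iSup (fun n => n₂ (c n)) n)
  have hmem₁ : σ ∈ C₁ := by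
    refine hcl₁ (Set.range c) ?_ ⟨c 0, ⟨0, rfl⟩⟩ ⟨σ, hσlt, ?_⟩
    · rintro x ⟨n, rfl⟩; exact (hkey n).1
    · rintro x ⟨n, rfl⟩; exact Ordinal.le_iSup c n
  have hmem₂ : σ ∈ C₂ := by
    rw [← hτeq]
    refine hcl₂ (Set.range fun n => n₂ (c n)) ?_ ⟨n₂ (c 0), ⟨0, rfl⟩⟩ ⟨σ, hσlt, ?_⟩
    · rintro x ⟨n, rfl⟩; exact (hv n).1
    · rintro x ⟨n, rfl⟩
      exact le_trans (le_of_lt (hlt2 n)) (Ordinal.le_iSup c (n+1))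
  exact ⟨σ, hmem₁, hmem₂⟩

universe u v

lemma turbid_aux {H : Type u} [AddCommGroup H] (hH : Aleph1Free H)
    (hcard : Cardinal.mk H = Cardinal.aleph 1)
    {ι : Type u} (b : Module.Basis ι ℤ H)
    (F : Ordinal.{v} → AddSubgroup H)
    (hFcnt : ∀ α < omega1, Countable (F α))
    (hFmono : ∀ α β : Ordinal.{v}, α ≤ β → β < omega1 → F α ≤ F β)
    (hFlim : ∀ α < omega1, Order.IsSuccLimit α → ∀ x : H, x ∈ F α ↔ ∃ β < α, x ∈ F β)
    (hFexh : ∀ x : H, ∃ α < omega1, x ∈ F α) :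
    ∃ C₀ : Set Ordinal.{v}, IsClubIn C₀ omega1 ∧ ∀ γ ∈ C₀, Aleph1Free (H ⧸ F γ) := by
  classical
  have hω₁lim : Order.IsSuccLimit (omega1 : Ordinal.{v}) :=
    Cardinal.isSuccLimit_ord (Cardinal.aleph0_le_aleph 1)
  -- embedding
  have hmkι : (Cardinal.mk ι) ≤ Cardinal.aleph 1 :=
    hcard ▸ Cardinal.mk_le_of_injective b.injective
  have hemb : Nonempty (ι ↪ (omega1 : Ordinal.{v}).ToType) := by
    rw [← Cardinal.lift_mk_le']
    rw [Cardinal.mk_toType]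
    show _ ≤ Cardinal.lift.{u} (Cardinal.aleph 1).ord.card
    rw [Cardinal.card_ord, Cardinal.lift_aleph, Ordinal.lift_one]
    calc Cardinal.lift.{v} (Cardinal.mk ι) ≤ Cardinal.lift.{v} (Cardinal.aleph 1) :=
          Cardinal.lift_le.2 hmkι
      _ = _ := by rw [Cardinal.lift_aleph, Ordinal.lift_one]
  obtain ⟨emb⟩ := hemb
  let idx : ι → Ordinal.{v} := fun i => ((Ordinal.ToType.mk (o := omega1)).symm (emb i) : Ordinal)
  have hidx_lt : ∀ i, idx i < omega1 := fun i =>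
    ((Ordinal.ToType.mk (o := omega1)).symm (emb i)).2
  have hidx_inj : Function.Injective idx := by
    intro i j h
    apply emb.injective
    have := Subtype.ext (p := fun o => o ∈ Set.Iio (omega1 : Ordinal.{v})) h
    exact (Ordinal.ToType.mk (o := omega1)).symm.injective this
  -- countability of index slices
  have hslice : ∀ α : Ordinal.{v}, α < omega1 → Countable {i : ι | idx i < α} := by
    intro α hα
    have h1 : Countable (Set.Iio α) := by
      rw [← Cardinal.mk_le_aleph0_iff, Ordinal.mk_Iio_ordinal, Cardinal.lift_le_aleph0,
        ← Order.lt_succ_iff, Cardinal.succ_aleph0]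
      exact Cardinal.lt_ord.1 hα
    exact Function.Injective.countable
      (f := fun i : {i : ι | idx i < α} => (⟨idx i.1, i.2⟩ : Set.Iio α))
      (fun i j h => Subtype.ext (hidx_inj (by simpa using congrArg Subtype.val h)))
  -- the comparison filtration
  set G : Ordinal.{v} → AddSubgroup H := fun α => AddSubgroup.closure (b '' {i : ι | idx i < α})
    with hGdef
  have hGmono : ∀ {α β : Ordinal.{v}}, α ≤ β → G α ≤ G β := by
    intro α β h
    exact AddSubgroup.closure_mono (Set.image_mono
      (fun i (hi : idx i < α) => show idx i < β from lt_of_lt_of_le hi h))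
  have hGgen : ∀ (i : ι) (α : Ordinal.{v}), idx i < α → b i ∈ G α := by
    intro i α h
    exact AddSubgroup.subset_closure ⟨i, h, rfl⟩
  have hGexh : ∀ x : H, ∃ α < (omega1 : Ordinal.{v}), x ∈ G α := by
    intro x
    have hx : x ∈ AddSubgroup.closure (Set.range b) := by
      rw [← Submodule.span_int_eq_addSubgroupClosure, Submodule.mem_toAddSubgroup, b.span_eq]
      exact Submodule.mem_top
    induction hx using AddSubgroup.closure_induction with
    | mem y hy =>
      obtain ⟨i, rfl⟩ := hy
      exact ⟨idx i + 1, hω₁lim.succ_lt (hidx_lt i), hGgen i _ (lt_add_one _)⟩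
    | zero => exact ⟨0, hω₁lim.pos, (G 0).zero_mem⟩
    | add y z _ _ hy hz =>
      obtain ⟨α, hα, hy⟩ := hy
      obtain ⟨β, hβ, hz⟩ := hz
      exact ⟨max α β, max_lt hα hβ,
        (G _).add_mem (hGmono (le_max_left _ _) hy) (hGmono (le_max_right _ _) hz)⟩
    | neg y _ hy =>
      obtain ⟨α, hα, hy⟩ := hy
      exact ⟨α, hα, (G α).neg_mem hy⟩
  -- countable sups stay below omega1
  have hcof : (omega1 : Ordinal.{v}).cof = Cardinal.aleph 1 :=
    Cardinal.isRegular_aleph_one.cof_eq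
  have hsupnat : ∀ (f : ℕ → Ordinal.{v}), (∀ n, f n < omega1) → iSup f < omega1 := by
    intro f hf
    apply Ordinal.iSup_lt_ord_lift _ hf
    rw [hcof]
    exact lt_of_le_of_lt (Cardinal.lift_le_aleph0.2 Cardinal.mk_le_aleph0)
      Cardinal.aleph0_lt_aleph_one
  have hsupcnt : ∀ {T : Type u} [Countable T] (f : T → Ordinal.{v}),
      (∀ t, f t < omega1) → iSup f < omega1 := by
    intro T _ f hf
    rcases isEmpty_or_nonempty T with hT | hT
    · rw [ciSup_of_empty]
      exact lt_of_le_of_lt (le_of_eq Ordinal.bot_eq_zero) hω₁lim.pos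
    · obtain ⟨g, hg⟩ := exists_surjective_nat T
      have heq : iSup f = iSup (f ∘ g) := by
        apply le_antisymm
        · refine Ordinal.iSup_le fun t => ?_
          obtain ⟨n, rfl⟩ := hg t
          exact Ordinal.le_iSup (f ∘ g) n
        · exact Ordinal.iSup_le fun n => Ordinal.le_iSup f (g n)
      rw [heq]
      exact hsupnat _ fun n => hf (g n)
  -- the next-step function
  have hnext : ∀ α : Ordinal.{v}, α < omega1 →
      ∃ β, α < β ∧ β < omega1 ∧ F α ≤ G β ∧ G α ≤ F β := by
    intro α hα
    haveI : Countable (F α) := hFcnt α hα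
    haveI : Countable {i : ι | idx i < α} := hslice α hα
    choose u hu1 hu2 using fun x : F α => hGexh (x : H)
    choose w hw1 hw2 using fun i : {i : ι | idx i < α} => hFexh (b i.1)
    set β₁ := ⨆ x : F α, u x with hβ₁
    set β₂ := ⨆ i : {i : ι | idx i < α}, w i with hβ₂
    refine ⟨max (Order.succ α) (max β₁ β₂), ?_, ?_, ?_, ?_⟩
    · exact lt_of_lt_of_le (Order.lt_succ α) (le_max_left _ _)
    · exact max_lt (hω₁lim.succ_lt hα) (max_lt (hsupcnt u hu1) (hsupcnt w hw1))
    · intro x hx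
      exact hGmono (le_trans (le_trans (Ordinal.le_iSup u ⟨x, hx⟩)
        (le_max_left β₁ β₂)) (le_max_right _ _)) (hu2 ⟨x, hx⟩)
    · simp only [hGdef]
      apply (AddSubgroup.closure_le _).2
      rintro y ⟨i, hi, rfl⟩
      exact hFmono _ _ (le_trans (le_trans (Ordinal.le_iSup w ⟨i, hi⟩)
        (le_max_right β₁ β₂)) (le_max_right _ _))
        (max_lt (hω₁lim.succ_lt hα) (max_lt (hsupcnt u hu1) (hsupcnt w hw1)))
        (hw2 ⟨i, hi⟩)
  choose! nxt hnxt1 hnxt2 hnxt3 hnxt4 using hnext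
  -- the club of agreement
  set C₀ : Set Ordinal.{v} := {α | α < omega1 ∧ Order.IsSuccLimit α ∧ ∀ β < α, nxt β < α} with hC₀def
  have hFG : ∀ γ, γ ∈ C₀ → F γ = G γ := by
    rintro γ ⟨hγ, hγlim, hγcl⟩
    apply le_antisymm
    · intro x hx
      obtain ⟨β, hβγ, hxβ⟩ := (hFlim γ hγ hγlim x).1 hx
      have hβω : β < omega1 := lt_trans hβγ hγ
      exact hGmono (le_of_lt (hγcl β hβγ)) (hnxt3 β hβω hxβ)
    · simp only [hGdef]
      apply (AddSubgroup.closure_le _).2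
      rintro y ⟨i, hi, rfl⟩
      have hδγ : Order.succ (idx i) < γ := hγlim.succ_lt hi
      have hδω : Order.succ (idx i) < omega1 := lt_trans hδγ hγ
      refine hFmono (nxt (Order.succ (idx i))) γ (le_of_lt (hγcl _ hδγ)) hγ ?_
      exact hnxt4 _ hδω (hGgen i _ (Order.lt_succ _))
  have hC₀closed : ∀ S : Set Ordinal.{v}, S ⊆ C₀ → S.Nonempty →
      (∃ β < omega1, ∀ x ∈ S, x ≤ β) → sSup S ∈ C₀ := by
    rintro S hS ⟨s₀, hs₀⟩ ⟨β, hβ, hbd⟩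
    have hbdd : BddAbove S := ⟨β, fun x hx => hbd x hx⟩
    have hlt : ∀ β' < sSup S, ∃ γ ∈ S, β' < γ := fun β' hβ' =>
      exists_lt_of_lt_csSup ⟨s₀, hs₀⟩ hβ'
    have hsup_lt : sSup S < omega1 := lt_of_le_of_lt (csSup_le ⟨s₀, hs₀⟩ hbd) hβ
    refine ⟨hsup_lt, Ordinal.isSuccLimit_iff.2 ⟨?_, Order.isSuccPrelimit_iff_succ_lt.2 ?_⟩, ?_⟩
    · have h1 : s₀ ≤ sSup S := le_csSup hbdd hs₀
      have h2 := (hS hs₀).2.1.pos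
      exact ne_of_gt (lt_of_lt_of_le h2 h1)
    · intro a ha
      obtain ⟨γ, hγS, hγ⟩ := hlt a ha
      exact lt_of_lt_of_le ((hS hγS).2.1.succ_lt hγ) (le_csSup hbdd hγS)
    · intro β' hβ'
      obtain ⟨γ, hγS, hγ⟩ := hlt β' hβ'
      exact lt_of_lt_of_le ((hS hγS).2.2 β' hγ) (le_csSup hbdd hγS)
  have hN : ∀ γ : Ordinal.{v}, γ < omega1 → ∃ δ, γ < δ ∧ δ < omega1 ∧ ∀ β < γ, nxt β < δ := by
    intro γ hγ
    refine ⟨max (Order.succ γ) (Ordinal.blsub γ (fun β _ => nxt β)), ?_, ?_, ?_⟩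
    · exact lt_of_lt_of_le (Order.lt_succ γ) (le_max_left _ _)
    · refine max_lt (hω₁lim.succ_lt hγ) (Ordinal.blsub_lt_ord ?_ ?_)
      · rw [hcof]; exact Cardinal.lt_ord.1 hγ
      · intro i hi; exact hnxt2 i (lt_trans hi hγ)
    · intro β hβ
      exact lt_of_lt_of_le (Ordinal.lt_blsub _ β hβ) (le_max_right _ _)
  choose! N hN1 hN2 hN3 using hN
  have hC₀unbdd : ∀ α < (omega1 : Ordinal.{v}), ∃ γ ∈ C₀, α < γ := by
    intro α hα
    set c : ℕ → Ordinal.{v} := fun n => N^[n] (Order.succ α) with hc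
    have hcsucc : ∀ n, c (n+1) = N (c n) := fun n => Function.iterate_succ_apply' N n _
    have hclt : ∀ n, c n < omega1 := by
      intro n; induction n with
      | zero => exact hω₁lim.succ_lt hα
      | succ n ih => rw [hcsucc]; exact hN2 (c n) ih
    have hcmono : ∀ n, c n < c (n+1) := fun n => by rw [hcsucc]; exact hN1 (c n) (hclt n)
    set σ := ⨆ n, c n with hσ
    have hσlt : σ < omega1 := hsupnat c hclt
    have hle : ∀ n, c n ≤ σ := fun n => Ordinal.le_iSup c n
    have hmem : ∀ β < σ, ∃ n, β < c n := by
      intro β hβ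
      by_contra h
      push_neg at h
      exact absurd (Ordinal.iSup_le h) (not_le.2 hβ)
    refine ⟨σ, ⟨hσlt, Ordinal.isSuccLimit_iff.2 ⟨?_, Order.isSuccPrelimit_iff_succ_lt.2 ?_⟩, ?_⟩, ?_⟩
    · exact ne_of_gt (lt_of_lt_of_le
        (lt_of_le_of_lt zero_le (Order.lt_succ α)) (hle 0))
    · intro a ha
      obtain ⟨n, hn⟩ := hmem a ha
      exact lt_of_le_of_lt (Order.succ_le_of_lt hn)
        (lt_of_lt_of_le (hcmono n) (hle (n+1)))
    · intro β hβ
      obtain ⟨n, hn⟩ := hmem β hβ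
      have h2 : nxt β < c (n+1) := by rw [hcsucc]; exact hN3 (c n) (hclt n) β hn
      exact lt_of_lt_of_le h2 (hle (n+1))
    · exact lt_of_lt_of_le (Order.lt_succ α) (hle 0)
  refine ⟨C₀, ⟨fun α hα => hα.1, hC₀closed, hC₀unbdd⟩, ?_⟩
  intro γ hγ
  rw [hFG γ hγ]
  exact aleph1Free_quotient_closure_basis hH b _

/-- If `E = {α < ω₁ : H/H_α is not ℵ₁-free}` contains a club
(i.e. `H` is turbid), then `H` is not free. -/
theorem not_free_of_turbid {H : Type*} [AddCommGroup H]
    (hH : Aleph1Free H) (hcard : Cardinal.mk H = Cardinal.aleph 1)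
    (F : Ordinal → AddSubgroup H) (hF : IsAleph1Filtration F)
    (hturbid : ∃ C : Set Ordinal, IsClubIn C omega1 ∧
      C ⊆ {α : Ordinal | α < omega1 ∧ ¬ Aleph1Free (H ⧸ F α)}) :
    ¬ Module.Free ℤ H := by
  classical
  intro _hfree
  obtain ⟨C, hC, hCE⟩ := hturbid
  obtain ⟨hFcnt, hFmono, hFlim, hFexh⟩ := hF
  obtain ⟨C₀, hC₀, hfreeQ⟩ := turbid_aux hH hcard (Module.Free.chooseBasis ℤ H) F
    hFcnt hFmono hFlim hFexh
  obtain ⟨γ, hγC, hγC₀⟩ := club_inter hC hC₀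
  exact (hCE hγC).2 (hfreeQ γ hγC₀)
end

section
/- Assume the Continuum Hypothesis (2^{ℵ₀} = ℵ₁). Let P = ∏_{n∈ℕ} ℤ be the Baer–Specker group. Then P has cardinality ℵ₁, and for every ℵ₁-filtration {P_α : α < ω₁} of P the set E = {α < ω₁ : P/P_α is not ℵ₁-free} contains a club in ω₁; that is, P is turbid. -/
lemma not_aleph1Free_of_div {G : Type*} [AddCommGroup G] (x : G) (hx : x ≠ 0)
    (h : ∀ m : ℕ, ∃ y : G, ((m + 1 : ℕ) : ℤ) • y = x) : ¬ Aleph1Free G := by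
  intro hfree
  choose f hf using h
  set v : ℕ → G := fun n => Nat.rec x (fun m _ => f m) n with hv
  let Kmod := Submodule.span ℤ (Set.range v)
  let K : AddSubgroup G := Kmod.toAddSubgroup
  have hKc : Countable K := inferInstanceAs (Countable Kmod)
  haveI := hfree K hKc
  let b := Module.Free.chooseBasis ℤ K
  have hxmem : x ∈ K := Submodule.subset_span ⟨0, rfl⟩
  let xK : K := ⟨x, hxmem⟩
  have hxK : xK ≠ 0 := by
    intro hzero
    exact hx (congrArg Subtype.val hzero)
  have key : ∀ i, b.repr xK i = 0 := by
    intro i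
    have hdvd : ∀ m : ℕ, ((m + 1 : ℕ) : ℤ) ∣ b.repr xK i := by
      intro m
      have hmem : f m ∈ K := Submodule.subset_span ⟨m + 1, rfl⟩
      let zK : K := ⟨f m, hmem⟩
      have : ((m + 1 : ℕ) : ℤ) • zK = xK := by
        ext
        push_cast
        exact hf m
      have hr : b.repr xK = ((m + 1 : ℕ) : ℤ) • b.repr zK := by
        rw [← this, map_smul]
      refine ⟨b.repr zK i, ?_⟩
      rw [hr]; simp [mul_comm]
    by_contra hne
    have habs : (0:ℤ) < |b.repr xK i| := abs_pos.mpr hne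
    have h1 : (((b.repr xK i).natAbs + 1 : ℕ) : ℤ) ∣ |b.repr xK i| :=
      (dvd_abs _ _).mpr (hdvd (b.repr xK i).natAbs)
    have h2 := Int.le_of_dvd habs h1
    rw [Int.abs_eq_natAbs] at h2
    push_cast at h2
    omega
  have : b.repr xK = 0 := Finsupp.ext key
  exact hxK (b.repr.map_eq_zero_iff.mp this)

/-- The key test elements of the Baer–Specker group. -/
def bsElt (a : ℕ → Bool) : ℕ → ℤ := fun n => (if a n then 1 else 0) * (n.factorial : ℤ)

lemma bsElt_injective : Function.Injective bsElt := by
  intro a b hab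
  funext n
  have := congrFun hab n
  unfold bsElt at this
  have hpos : (0:ℤ) < (n.factorial : ℤ) := by exact_mod_cast n.factorial_pos
  cases ha : a n <;> cases hb : b n <;> simp [ha, hb] at this ⊢ <;> omega


/-- Under CH, the Baer–Specker group `P = ∏_{n ∈ ℕ} ℤ` has cardinality ℵ₁
and is turbid: for every ℵ₁-filtration `F` of `P`, the set
`E = {α < ω₁ : P/F α is not ℵ₁-free}` contains a club in ω₁. -/
theorem baerSpecker_turbid_of_CH
    (hCH : (2 : Cardinal) ^ Cardinal.aleph0 = Cardinal.aleph 1) :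
    Cardinal.mk (ℕ → ℤ) = Cardinal.aleph 1 ∧
    ∀ F : Ordinal → AddSubgroup (ℕ → ℤ), IsAleph1Filtration F →
      ∃ C : Set Ordinal, IsClubIn C omega1 ∧
        C ⊆ {α : Ordinal | α < omega1 ∧ ¬ Aleph1Free ((ℕ → ℤ) ⧸ F α)} := by
  constructor
  · apply Cardinal.lift_injective
    rw [Cardinal.mk_arrow]
    simp only [Cardinal.mk_int, Cardinal.mk_nat, Cardinal.lift_id, Cardinal.lift_aleph0,
      Cardinal.lift_power, Cardinal.lift_aleph, Ordinal.lift_one]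
    rw [Cardinal.power_self_eq le_rfl]
    exact hCH
  intro F hF
  obtain ⟨hcnt, hmono, _hlim, hcover⟩ := hF
  -- the club
  refine ⟨{α | α < omega1 ∧ ∀ n : ℕ, Pi.single n 1 ∈ F α}, ⟨?_, ?_, ?_⟩, ?_⟩
  · exact fun α hα => hα.1
  · -- closed
    rintro S hS ⟨α₀, hα₀⟩ ⟨β, hβ, hb⟩
    have hbdd : BddAbove S := ⟨β, fun x hx => hb x hx⟩
    have hsup_le : sSup S ≤ β := csSup_le ⟨α₀, hα₀⟩ hb
    have hsup_lt : sSup S < omega1 := lt_of_le_of_lt hsup_le hβ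
    refine ⟨hsup_lt, fun n => ?_⟩
    exact hmono α₀ (sSup S) (le_csSup hbdd hα₀) hsup_lt ((hS hα₀).2 n)
  · -- unbounded
    intro γ hγ
    have hchoice : ∀ n : ℕ, ∃ α < omega1, (Pi.single n 1 : ℕ → ℤ) ∈ F α :=
      fun n => hcover _
    choose g hg1 hg2 using hchoice
    have hlimord : Order.IsSuccLimit omega1 :=
      Cardinal.isSuccLimit_ord (le_of_lt Cardinal.aleph0_lt_aleph_one)
    have hsup_lt : (⨆ n, g n) < omega1 := by
      apply Ordinal.iSup_lt_ord_lift _ hg1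
      show Cardinal.lift (Cardinal.mk ℕ) < ((Cardinal.aleph 1).ord).cof
      rw [Cardinal.mk_nat, Cardinal.lift_aleph0, Cardinal.isRegular_aleph_one.cof_eq]
      exact Cardinal.aleph0_lt_aleph_one
    refine ⟨max (Order.succ γ) (⨆ n, g n), ⟨?_, fun n => ?_⟩, ?_⟩
    · exact max_lt (hlimord.succ_lt hγ) hsup_lt
    · refine hmono (g n) _ ?_ (max_lt (hlimord.succ_lt hγ) hsup_lt) (hg2 n)
      exact le_trans (le_ciSup (Ordinal.bddAbove_range g) n) (le_max_right _ _)
    · exact lt_of_lt_of_le (Order.lt_succ γ) (le_max_left _ _)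
  · -- C ⊆ E
    rintro α ⟨hα, hsingle⟩
    refine ⟨hα, ?_⟩
    -- all finitely-supported vectors are in F α
    have hfin : ∀ (f : ℕ → ℤ) (m : ℕ), (∀ n, m ≤ n → f n = 0) → f ∈ F α := by
      intro f m hfm
      have : f = ∑ n ∈ Finset.range m, Pi.single n (f n) := by
        funext k
        rw [Finset.sum_apply]
        rw [Finset.sum_pi_single]
        by_cases hk : k ∈ Finset.range m
        · simp [hk]
        · simp only [hk, if_false]
          exact hfm k (by simpa using hk)
      rw [this]
      apply AddSubgroup.sum_mem
      intro n _
      have : Pi.single n (f n) = (f n) • (Pi.single n 1 : ℕ → ℤ) := by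
        rw [← Pi.single_smul]
        simp
      rw [this]
      exact AddSubgroup.zsmul_mem _ (hsingle n) _
    -- choose a with bsElt a ∉ F α
    haveI : Countable (F α) := hcnt α hα
    have : ∃ a : ℕ → Bool, bsElt a ∉ F α := by
      by_contra hcon
      push_neg at hcon
      have hinj : Function.Injective (fun a : ℕ → Bool => (⟨bsElt a, hcon a⟩ : F α)) := by
        intro a b hab
        exact bsElt_injective (congrArg Subtype.val hab)
      haveI : Countable (ℕ → Bool) := Function.Injective.countable hinj
      have h2 : Cardinal.mk (ℕ → Bool) ≤ Cardinal.aleph0 := Cardinal.mk_le_aleph0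
      rw [Cardinal.mk_arrow] at h2
      simp only [Cardinal.mk_bool, Cardinal.mk_nat, Cardinal.lift_id, Cardinal.lift_aleph0,
        Cardinal.lift_ofNat] at h2
      exact absurd h2 (not_le.mpr (Cardinal.cantor _))
    obtain ⟨a, ha⟩ := this
    apply not_aleph1Free_of_div (QuotientAddGroup.mk (bsElt a) : (ℕ → ℤ) ⧸ F α)
    · rw [Ne, QuotientAddGroup.eq_zero_iff]
      exact ha
    · intro m
      -- the witness
      refine ⟨QuotientAddGroup.mk (fun n => (if a n then 1 else 0) *
        ((n.factorial / (m + 1) : ℕ) : ℤ)), ?_⟩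
      rw [← QuotientAddGroup.mk_zsmul, QuotientAddGroup.eq_iff_sub_mem]
      apply hfin _ (m + 1)
      intro n hn
      have hdvd : (m + 1) ∣ n.factorial := Nat.dvd_factorial (Nat.succ_pos m) hn
      have : ((m + 1 : ℕ) : ℤ) * ((n.factorial / (m + 1) : ℕ) : ℤ) = (n.factorial : ℤ) := by
        rw [← Nat.cast_mul, Nat.mul_div_cancel' hdvd]
      simp only [Pi.sub_apply, Pi.smul_apply, smul_eq_mul, bsElt]
      cases ha : a n
      · simp [ha]
      · simp only [ha, if_true, one_mul, sub_eq_zero]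
        linarith [this]
end

section
/- Let H = ⊕_{n∈ℕ} ℤ be the free abelian group on countably many generators. Then the poset (P_pb, ≤) for H is not ℵ₁-closed: the sets S_j = {s_i : i < j}, where s_i = e_i − (i+1)e_{i+1}, form a strictly descending sequence in P_pb that has no lower bound in P_pb. -/
/-- The standard basis of `H = ⊕_{n ∈ ℕ} ℤ`. -/
noncomputable def e (i : ℕ) : ℕ →₀ ℤ := Finsupp.single i 1

/-- `s i = e i - (i+1) • e (i+1)`. -/
noncomputable def s (i : ℕ) : ℕ →₀ ℤ := e i - ((i : ℤ) + 1) • e (i + 1)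

/-- `S j = {s i : i < j}`. -/
def Sset (j : ℕ) : Set (ℕ →₀ ℤ) := s '' Set.Iio j


/-! ### Auxiliary machinery -/

section Aux

open Finsupp Submodule

noncomputable section

abbrev Hh := ℕ →₀ ℤ

variable (N : Submodule ℤ Hh)

private def Wn (n : ℕ) : Submodule ℤ Hh := Finsupp.supported ℤ ℤ (Set.Iio n)

private def In (n : ℕ) : Ideal ℤ := Submodule.map (Finsupp.lapply n) (N ⊓ Wn (n+1))

private def cgen (n : ℕ) : ℤ := Submodule.IsPrincipal.generator (In N n)

private lemma exists_xx (n : ℕ) :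
    ∃ y, (y ∈ N ∧ y ∈ Wn (n+1)) ∧ (Finsupp.lapply n : Hh →ₗ[ℤ] ℤ) y = cgen N n := by
  have := Submodule.IsPrincipal.generator_mem (In N n)
  rw [In, Submodule.mem_map] at this
  obtain ⟨y, hy, h2⟩ := this
  exact ⟨y, Submodule.mem_inf.mp hy, h2⟩

private def xx (n : ℕ) : Hh := (exists_xx N n).choose

private lemma xx_memN (n : ℕ) : xx N n ∈ N := (exists_xx N n).choose_spec.1.1
private lemma xx_supp (n : ℕ) : xx N n ∈ Wn (n+1) := (exists_xx N n).choose_spec.1.2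
private lemma xx_apply (n : ℕ) : (xx N n) n = cgen N n := (exists_xx N n).choose_spec.2

private lemma xx_apply_gt {n m : ℕ} (h : n < m) : (xx N n) m = 0 := by
  have := xx_supp N n
  rw [Wn, Finsupp.mem_supported] at this
  by_contra hne
  exact absurd (this (Finsupp.mem_support_iff.mpr hne)) (by simp; omega)

private lemma xx_li : LinearIndependent ℤ (fun a : {n : ℕ // cgen N n ≠ 0} => xx N a) := by
  rw [linearIndependent_iff']
  intro t g hg
  classical
  induction t using Finset.induction_on_max with
  | empty => simp
  | insert a u hu ih =>
    have hga : g a = 0 := by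
      have h1 := congrArg (fun z : Hh => z (a : ℕ)) hg
      simp only [Finset.sum_insert (fun h => lt_irrefl _ (hu a h)),
        Finsupp.coe_add, Pi.add_apply, Finsupp.coe_zero, Pi.zero_apply] at h1
      rw [Finsupp.finset_sum_apply] at h1
      have h2 : ∀ i ∈ u, (g i • xx N (i : ℕ)) (a : ℕ) = 0 := by
        intro i hi
        rw [Finsupp.smul_apply, xx_apply_gt N (show (i:ℕ) < (a:ℕ) from hu i hi), smul_zero]
      rw [Finset.sum_eq_zero h2, add_zero, Finsupp.smul_apply, xx_apply, smul_eq_mul] at h1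
      exact (mul_eq_zero.mp h1).resolve_right a.2
    intro b hb
    rcases Finset.mem_insert.mp hb with rfl | hbu
    · exact hga
    · refine ih ?_ b hbu
      rwa [Finset.sum_insert (fun h => lt_irrefl _ (hu a h)), hga, zero_smul, zero_add] at hg

private lemma xx_span : ∀ n : ℕ, ∀ y ∈ N, (∀ m, n ≤ m → y m = 0) →
    y ∈ Submodule.span ℤ (Set.range fun a : {n : ℕ // cgen N n ≠ 0} => xx N a) := by
  intro n
  induction n with
  | zero =>
    intro y _ h
    have : y = 0 := by ext m; exact h m (Nat.zero_le m)
    simp [this]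
  | succ n ih =>
    intro y hyN hy
    have hyW : y ∈ Wn (n+1) := by
      rw [Wn, Finsupp.mem_supported]
      intro m hm
      simp only [Set.mem_Iio]
      by_contra h
      exact Finsupp.mem_support_iff.mp hm (hy m (by omega))
    have hyI : y n ∈ In N n :=
      Submodule.mem_map.mpr ⟨y, Submodule.mem_inf.mpr ⟨hyN, hyW⟩, rfl⟩
    rw [Submodule.IsPrincipal.mem_iff_eq_smul_generator] at hyI
    obtain ⟨t, ht'⟩ := hyI
    have ht : y n = t • cgen N n := ht'
    by_cases hc : cgen N n = 0
    · refine ih y hyN (fun m hm => ?_)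
      rcases Nat.lt_or_ge m (n+1) with h | h
      · have : m = n := by omega
        subst this; rw [ht, hc]; simp
      · exact hy m h
    · have hz : y - t • xx N n ∈
          Submodule.span ℤ (Set.range fun a : {n : ℕ // cgen N n ≠ 0} => xx N a) := by
        refine ih _ (Submodule.sub_mem N hyN (Submodule.smul_mem N t (xx_memN N n))) ?_
        intro m hm
        rcases Nat.lt_or_ge m (n+1) with h | h
        · have : m = n := by omega
          subst this
          rw [Finsupp.sub_apply, Finsupp.smul_apply, xx_apply, ht, sub_self]
        · rw [Finsupp.sub_apply, Finsupp.smul_apply, xx_apply_gt N (show n < m by omega),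
            hy m (by omega), smul_zero, sub_zero]
      have hx : xx N n ∈
          Submodule.span ℤ (Set.range fun a : {n : ℕ // cgen N n ≠ 0} => xx N a) :=
        Submodule.subset_span ⟨⟨n, hc⟩, rfl⟩
      have := Submodule.add_mem _ hz (Submodule.smul_mem _ t hx)
      simpa using this

/-- Every submodule of `ℕ →₀ ℤ` is a free `ℤ`-module. -/
private lemma masterFree : Module.Free ℤ ↥N := by
  set v : {n : ℕ // cgen N n ≠ 0} → ↥N := fun a => ⟨xx N a, xx_memN N a⟩ with hv
  have hli : LinearIndependent ℤ v := by
    have := xx_li N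
    exact (LinearIndependent.of_comp N.subtype (by exact this))
  have hsp : ⊤ ≤ Submodule.span ℤ (Set.range v) := by
    rintro ⟨y, hy⟩ -
    have hmem : y ∈ Submodule.span ℤ
        (Set.range fun a : {n : ℕ // cgen N n ≠ 0} => xx N a) := by
      refine xx_span N (if h : y.support.Nonempty then (y.support.max' h) + 1 else 0) y hy ?_
      intro m hm
      split_ifs at hm with h
      · by_contra hne
        have := Finset.le_max' _ m (Finsupp.mem_support_iff.mpr hne)
        omega
      · rw [Finset.not_nonempty_iff_eq_empty] at h
        exact Finsupp.support_eq_empty.mp h ▸ rfl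
    have : Set.range (fun a : {n : ℕ // cgen N n ≠ 0} => xx N a)
        = N.subtype '' (Set.range v) := by
      ext z
      constructor
      · rintro ⟨a, rfl⟩; exact ⟨v a, ⟨a, rfl⟩, rfl⟩
      · rintro ⟨w, ⟨a, rfl⟩, rfl⟩; exact ⟨a, rfl⟩
    rw [this, ← Submodule.map_span] at hmem
    obtain ⟨⟨z, hz⟩, hzmem, hzeq⟩ := Submodule.mem_map.mp hmem
    cases hzeq
    exact hzmem
  exact Module.Free.of_basis (Module.Basis.mk hli hsp)

end

/-- Any abelian group admitting an injective hom into `ℕ →₀ ℤ` is ℵ₁-free. -/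
private lemma aleph1free_of_inj {G : Type*} [AddCommGroup G] (f : G →+ Hh)
    (hf : Function.Injective f) : Aleph1Free G := by
  intro K _
  have h1 : Module.Free ℤ ↥(AddSubgroup.map f K) := masterFree (AddSubgroup.map f K).toIntSubmodule
  have e : K ≃+ AddSubgroup.map f K := AddSubgroup.equivMapOfInjective K f hf
  exact Module.Free.of_equiv e.symm.toIntLinearEquiv

private lemma s_apply (i n : ℕ) :
    s i n = (if n = i then 1 else 0) - ((i : ℤ) + 1) * (if n = i + 1 then 1 else 0) := by
  simp only [s, e, Finsupp.sub_apply, Finsupp.smul_apply, Finsupp.single_apply, eq_comm,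
    smul_eq_mul]

private lemma lc_s_apply (l : ℕ →₀ ℤ) (n : ℕ) :
    (Finsupp.linearCombination ℤ s l) n = l n - n * l (n - 1) := by
  induction l using Finsupp.induction_linear with
  | zero => simp
  | add f g hf hg =>
    rw [map_add, Finsupp.add_apply, hf, hg, Finsupp.add_apply, Finsupp.add_apply]; ring
  | single i a =>
    rw [Finsupp.linearCombination_single, Finsupp.smul_apply, s_apply]
    rcases Nat.lt_trichotomy n i with h | rfl | h
    · rw [if_neg (by omega), if_neg (by omega), Finsupp.single_apply, Finsupp.single_apply,
        if_neg (by omega), if_neg (by omega)]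
      simp
    · rw [if_pos rfl, if_neg (by omega), Finsupp.single_apply, if_pos rfl,
        Finsupp.single_apply]
      rcases Nat.eq_zero_or_pos n with rfl | hi
      · simp
      · rw [if_neg (by omega)]; simp
    · rcases Nat.lt_or_ge (i+1) n with h2 | h2
      · rw [if_neg (by omega), if_neg (by omega), Finsupp.single_apply, Finsupp.single_apply,
          if_neg (by omega), if_neg (by omega)]
        simp
      · have hn : n = i + 1 := by omega
        subst hn
        rw [if_neg (by omega), if_pos rfl, Finsupp.single_apply, if_neg (by omega),
          Finsupp.single_apply, if_pos (by omega)]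
        rw [smul_eq_mul]
        push_cast
        ring

private lemma l_zero_of (l : ℕ →₀ ℤ)
    (h : ∀ n, (Finsupp.linearCombination ℤ s l) n = 0 ∨ l n = 0) : l = 0 := by
  have key : ∀ n, l n = 0 := by
    intro n
    induction n using Nat.strong_induction_on with
    | _ n ih =>
      rcases h n with h0 | h0
      · rw [lc_s_apply] at h0
        rcases Nat.eq_zero_or_pos n with rfl | hn
        · simpa using h0
        · rw [ih (n-1) (by omega)] at h0
          simpa using h0
      · exact h0
  ext n; exact key n

private lemma s_li : LinearIndependent ℤ s :=
  linearIndependent_iff.mpr fun l hl => l_zero_of l (fun n => Or.inl (by rw [hl]; rfl))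

private lemma s_inj : Function.Injective s := s_li.injective

private lemma s_img_li (t : Set ℕ) : LinearIndependent ℤ ((↑) : (s '' t) → Hh) := by
  have h := (linearIndepOn_id_range_iff (s_li.comp ((↑) : t → ℕ) Subtype.val_injective).injective).mpr
    (s_li.comp ((↑) : t → ℕ) Subtype.val_injective)
  have : Set.range (s ∘ ((↑) : t → ℕ)) = s '' t := by
    rw [Set.range_comp, Subtype.range_coe]
  rw [this] at h
  exact h

private lemma disjoint_j (j : ℕ) :
    Disjoint (Submodule.span ℤ (Sset j)) (Finsupp.supported ℤ ℤ (Set.Ici j)) := by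
  rw [disjoint_iff_inf_le]
  rintro x ⟨hx1, hx2⟩
  obtain ⟨l, hl, rfl⟩ := (Finsupp.mem_span_image_iff_linearCombination ℤ).mp hx1
  rw [Finsupp.mem_supported] at hl
  have : l = 0 := by
    refine l_zero_of l (fun n => ?_)
    rcases Nat.lt_or_ge n j with h | h
    · left
      rw [SetLike.mem_coe, Finsupp.mem_supported] at hx2
      by_contra h0
      have := hx2 (Finsupp.mem_support_iff.mpr h0)
      simp only [Set.mem_Ici] at this; omega
    · right
      by_contra h0
      have := hl (Finsupp.mem_support_iff.mpr h0)
      simp only [Set.mem_Iio] at this; omega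
  rw [this, map_zero]
  exact Submodule.zero_mem ⊥

private lemma codisjoint_j (j : ℕ) :
    Codisjoint (Submodule.span ℤ (Sset j)) (Finsupp.supported ℤ ℤ (Set.Ici j)) := by
  rw [codisjoint_iff_le_sup]
  set U := Submodule.span ℤ (Sset j) ⊔ Finsupp.supported ℤ ℤ (Set.Ici j) with hU
  have he : ∀ i, e i ∈ U := by
    have step : ∀ d i, i + d = j → e i ∈ U := by
      intro d
      induction d with
      | zero =>
        intro i hi
        exact Submodule.mem_sup_right (Finsupp.single_mem_supported ℤ 1 (by simp; omega))
      | succ k ih =>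
        intro i hi
        have hs : s i ∈ U :=
          Submodule.mem_sup_left (Submodule.subset_span ⟨i, by simp; omega, rfl⟩)
        have hrw : e i = s i + ((i : ℤ) + 1) • e (i + 1) := by rw [s, sub_add_cancel]
        rw [hrw]
        exact Submodule.add_mem _ hs (Submodule.smul_mem _ _ (ih (i+1) (by omega)))
    intro i
    rcases Nat.lt_or_ge i j with h | h
    · exact step (j - i) i (by omega)
    · exact Submodule.mem_sup_right (Finsupp.single_mem_supported ℤ 1 (by simpa using h))
  rintro x -
  induction x using Finsupp.induction with
  | zero => exact Submodule.zero_mem U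
  | single_add a b f _ _ ih =>
    have hs : Finsupp.single a b = b • e a := by rw [e, Finsupp.smul_single]; simp
    exact Submodule.add_mem _ (hs ▸ Submodule.smul_mem _ _ (he a)) ih

private lemma iscompl_j (j : ℕ) :
    IsCompl (Submodule.span ℤ (Sset j)) (Finsupp.supported ℤ ℤ (Set.Ici j)) :=
  ⟨disjoint_j j, codisjoint_j j⟩

private lemma quot_free_aux (p : Set Hh) (C : Submodule ℤ Hh)
    (h : IsCompl (Submodule.span ℤ p) C) :
    Aleph1Free (Hh ⧸ AddSubgroup.closure p) := by
  have heq : AddSubgroup.closure p = (Submodule.span ℤ p).toAddSubgroup :=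
    (Submodule.span_int_eq_addSubgroupClosure p).symm
  let e1 : (Hh ⧸ AddSubgroup.closure p) ≃+ (Hh ⧸ (Submodule.span ℤ p).toAddSubgroup) :=
    QuotientAddGroup.quotientAddEquivOfEq heq
  let e2 : (Hh ⧸ Submodule.span ℤ p) ≃ₗ[ℤ] C :=
    Submodule.quotientEquivOfIsCompl _ _ h
  let f : (Hh ⧸ AddSubgroup.closure p) →+ Hh :=
    (C.subtype.toAddMonoidHom.comp e2.toAddEquiv.toAddMonoidHom).comp e1.toAddMonoidHom
  refine aleph1free_of_inj f ?_
  intro a b hab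
  simp only [f, AddMonoidHom.comp_apply] at hab
  have h2 := e2.injective (Subtype.ext hab)
  exact e1.injective h2

private lemma free_of_infdiv {G : Type*} [AddCommGroup G] (hfree : Module.Free ℤ G) (x : G)
    (h : ∀ k : ℕ, ∃ y : G, (k.factorial : ℤ) • y = x) : x = 0 := by
  let b := Module.Free.chooseBasis ℤ G
  have hrepr : ∀ ι₀, b.repr x ι₀ = 0 := by
    intro ι₀
    obtain ⟨y, hy⟩ := h (((b.repr x ι₀).natAbs + 1))
    have hdvd : (((b.repr x ι₀).natAbs + 1).factorial : ℤ) ∣ b.repr x ι₀ := by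
      refine ⟨b.repr y ι₀, ?_⟩
      conv_lhs => rw [← hy]
      rw [map_smul, Finsupp.smul_apply, smul_eq_mul]
    set c := b.repr x ι₀ with hc
    refine Int.eq_zero_of_abs_lt_dvd hdvd ?_
    have h1 : c.natAbs + 1 ≤ (c.natAbs + 1).factorial := Nat.self_le_factorial _
    have h2 : |c| = (c.natAbs : ℤ) := Int.abs_eq_natAbs c
    rw [h2]
    push_cast
    exact_mod_cast lt_of_lt_of_le (by omega) (Nat.cast_le.mpr h1)
  apply b.repr.injective
  ext ι₀
  simp [hrepr ι₀]

private lemma e_eq_sum (m : ℕ) :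
    e 0 = (∑ i ∈ Finset.range m, (i.factorial : ℤ) • s i) + (m.factorial : ℤ) • e m := by
  induction m with
  | zero => simp
  | succ m ih =>
    rw [Finset.sum_range_succ, ih]
    have : ((m.factorial : ℤ)) • e m =
        (m.factorial : ℤ) • s m + ((m+1).factorial : ℤ) • e (m+1) := by
      rw [s, smul_sub, smul_smul]
      have hf : (m.factorial : ℤ) * ((m:ℤ) + 1) = ((m+1).factorial : ℤ) := by
        rw [Nat.factorial_succ]; push_cast; ring
      rw [hf, sub_add_cancel]
    rw [this]
    abel

set_option maxHeartbeats 1000000 in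
private theorem part3 : ¬ ∃ q : Set Hh, (LinearIndependent ℤ ((↑) : q → Hh) ∧ q.Countable ∧
    Aleph1Free (Hh ⧸ AddSubgroup.closure q)) ∧ ∀ j : ℕ, Sset j ⊆ q := by
  rintro ⟨q, ⟨hli, hcnt, hfree⟩, hsub⟩
  have hsq : ∀ i, s i ∈ q := fun i => hsub (i+1) ⟨i, by simp, rfl⟩
  set N := AddSubgroup.closure q with hN
  set G := Hh ⧸ N with hG
  haveI hGcount : Countable G := Quotient.countable
  haveI hGtopc : Countable (⊤ : AddSubgroup G) := Subtype.countable
  have hGfree : Module.Free ℤ G := by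
    have h1 : Module.Free ℤ ↥(⊤ : AddSubgroup G) := hfree ⊤ hGtopc
    exact Module.Free.of_equiv (AddSubgroup.topEquiv).toIntLinearEquiv
  have hrel : ∀ m : ℕ, (QuotientAddGroup.mk (e m) : G) =
      ((m : ℤ) + 1) • QuotientAddGroup.mk (e (m+1)) := by
    intro m
    rw [← QuotientAddGroup.mk_zsmul]
    rw [QuotientAddGroup.eq_iff_sub_mem]
    exact AddSubgroup.subset_closure (hsq m)
  have hasc : ∀ m n : ℕ, (QuotientAddGroup.mk (e m) : G) =
      (((m+1).ascFactorial n : ℤ)) • QuotientAddGroup.mk (e (m+n)) := by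
    intro m n
    induction n with
    | zero => simp
    | succ n ih =>
      rw [ih, hrel (m+n), Nat.ascFactorial_succ, smul_smul]
      push_cast
      ring_nf
  have hediv : ∀ m : ℕ, (QuotientAddGroup.mk (e m) : G) = 0 := by
    intro m
    refine free_of_infdiv hGfree _ (fun k => ?_)
    obtain ⟨c, hc⟩ := Nat.factorial_dvd_ascFactorial (m+1) k
    refine ⟨(c : ℤ) • QuotientAddGroup.mk (e (m+k)), ?_⟩
    rw [smul_smul, ← Int.natCast_mul, ← hc, ← hasc]
  have hemem : ∀ m, e m ∈ N := by
    intro m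
    have := hediv m
    rwa [← QuotientAddGroup.eq_zero_iff]
  have hspan : ⊤ ≤ Submodule.span ℤ q := by
    rintro x -
    induction x using Finsupp.induction with
    | zero => exact Submodule.zero_mem _
    | single_add a b f _ _ ih =>
      have h1 : e a ∈ Submodule.span ℤ q := by
        have h2 : N ≤ (Submodule.span ℤ q).toAddSubgroup := by
          rw [hN]
          exact AddSubgroup.closure_le _ |>.mpr Submodule.subset_span
        exact h2 (hemem a)
      have hs : Finsupp.single a b = b • e a := by rw [e, Finsupp.smul_single]; simp
      exact Submodule.add_mem _ (hs ▸ Submodule.smul_mem _ _ h1) ih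
  have hspan' : ⊤ ≤ Submodule.span ℤ (Set.range ((↑) : q → Hh)) := by
    rwa [Subtype.range_coe]
  let b : Module.Basis q ℤ Hh := Module.Basis.mk hli hspan'
  set r := b.repr (e 0) with hr
  have hcoord : ∀ i m : ℕ, i < m → r ⟨s i, hsq i⟩ =
      (i.factorial : ℤ) + (m.factorial : ℤ) * (b.repr (e m) ⟨s i, hsq i⟩) := by
    intro i m him
    have h1 := congrArg (fun z => (b.repr z) ⟨s i, hsq i⟩) (e_eq_sum m)
    simp only [map_add, map_smul, Finsupp.add_apply, Finsupp.smul_apply, smul_eq_mul,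
      map_sum, Finsupp.finset_sum_apply] at h1
    have h2 : ∀ i' ∈ Finset.range m,
        (i'.factorial : ℤ) * (b.repr (s i')) ⟨s i, hsq i⟩ =
        if i' = i then (i.factorial : ℤ) else 0 := by
      intro i' _
      have hbs : b ⟨s i', hsq i'⟩ = s i' := Module.Basis.mk_apply hli hspan' _
      rw [← hbs, Module.Basis.repr_self, Finsupp.single_apply]
      by_cases h : i' = i
      · subst h; simp
      · rw [if_neg (by simp only [Subtype.mk.injEq]; exact fun hc => h (s_inj hc)), if_neg h,
          mul_zero]
    rw [Finset.sum_congr rfl h2, Finset.sum_ite_eq' (Finset.range m) i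
      (fun _ => (i.factorial : ℤ)), if_pos (Finset.mem_range.mpr him)] at h1
    exact h1
  have hval : ∀ i : ℕ, r ⟨s i, hsq i⟩ = (i.factorial : ℤ) := by
    intro i
    set c := r ⟨s i, hsq i⟩ - (i.factorial : ℤ) with hc
    have hdvd : ∀ m : ℕ, i < m → (m.factorial : ℤ) ∣ c := by
      intro m him
      exact ⟨(b.repr (e m)) ⟨s i, hsq i⟩, by rw [hc, hcoord i m him]; ring⟩
    have : c = 0 := by
      refine Int.eq_zero_of_abs_lt_dvd (hdvd (c.natAbs + 1 + i) (by omega)) ?_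
      have h1 : c.natAbs + 1 + i ≤ (c.natAbs + 1 + i).factorial := Nat.self_le_factorial _
      rw [Int.abs_eq_natAbs]
      exact_mod_cast lt_of_lt_of_le (by omega) h1
    omega
  have hinj : Function.Injective (fun i : ℕ => (⟨s i, hsq i⟩ : q)) := by
    intro a b' hab
    exact s_inj (congrArg Subtype.val hab)
  have hmem : ∀ i : ℕ, (⟨s i, hsq i⟩ : q) ∈ r.support := by
    intro i
    rw [Finsupp.mem_support_iff, hval i]
    exact_mod_cast Nat.factorial_ne_zero i
  have hinf : (r.support : Set q).Infinite :=
    Set.infinite_of_injective_forall_mem hinj hmem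
  exact hinf (Finset.finite_toSet _)

end Aux

/-- For `H = ⊕_{n ∈ ℕ} ℤ`, the sets `S j` form a strictly descending
sequence in `(P_pb, ≤)` with no lower bound in `P_pb`; in particular `P_pb`
is not ℵ₁-closed. -/
theorem Ppb_freeAbelian_not_aleph1_closed :
    (∀ j : ℕ, Sset j ∈ Ppb (ℕ →₀ ℤ)) ∧ (∀ j : ℕ, Sset j ⊂ Sset (j + 1)) ∧
      ¬ ∃ q ∈ Ppb (ℕ →₀ ℤ), ∀ j : ℕ, Sset j ⊆ q := by
  refine ⟨?_, ?_, ?_⟩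
  · intro j
    refine ⟨?_, ?_, ?_⟩
    · exact s_img_li (Set.Iio j)
    · exact (Set.to_countable (Set.Iio j)).image s
    · exact quot_free_aux (Sset j) _ (iscompl_j j)
  · intro j
    constructor
    · exact Set.image_mono (fun x hx => by simp at hx ⊢; omega)
    · intro hsup
      obtain ⟨i, hi, heq⟩ := hsup ⟨j, by simp, rfl⟩
      have := s_inj heq
      simp at hi
      omega
  · intro ⟨q, hq, hsub⟩
    exact part3 ⟨q, hq, hsub⟩
end

section
/- Let H be an abelian group and K ⊆ L ⊆ H subgroups such that H/L is ℵ₁-free and L/K is a free abelian group. Then H/K is ℵ₁-free (transitivity of ℵ₁-freeness). -/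
namespace Aleph1Aux

noncomputable section

open Submodule

abbrev π (n : ℕ) : (ℕ →₀ ℤ) →ₗ[ℤ] ℤ := Finsupp.lapply n

abbrev Mn (n : ℕ) : Submodule ℤ (ℕ →₀ ℤ) := Finsupp.supported ℤ ℤ (Set.Iio n)

variable (N : Submodule ℤ (ℕ →₀ ℤ))

def In (n : ℕ) : Submodule ℤ ℤ := (N ⊓ Mn (n + 1)).map (π n)

def gen (n : ℕ) : ℤ := Submodule.IsPrincipal.generator (In N n)

lemma exists_y (n : ℕ) : ∃ x, x ∈ N ⊓ Mn (n + 1) ∧ π n x = gen N n := by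
  have := Submodule.IsPrincipal.generator_mem (In N n)
  rw [In, Submodule.mem_map] at this
  obtain ⟨x, hx, hx2⟩ := this
  exact ⟨x, hx, hx2⟩

def y (n : ℕ) : ℕ →₀ ℤ := (exists_y N n).choose

lemma y_memN (n : ℕ) : y N n ∈ N := (exists_y N n).choose_spec.1.1
lemma y_memM (n : ℕ) : y N n ∈ Mn (n + 1) := (exists_y N n).choose_spec.1.2
lemma y_pi (n : ℕ) : π n (y N n) = gen N n := (exists_y N n).choose_spec.2

lemma y_pi_zero {n m : ℕ} (h : n < m) : π m (y N n) = 0 := by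
  have hm := y_memM N n
  rw [Finsupp.mem_supported' ℤ] at hm
  exact hm m (by simpa using h)

def T : Set ℕ := {n | In N n ≠ ⊥}

lemma gen_def (n : ℕ) : gen N n = Submodule.IsPrincipal.generator (In N n) := rfl

lemma gen_ne_zero {n : ℕ} (h : n ∈ T N) : gen N n ≠ 0 := by
  intro h0
  apply h
  rw [← Submodule.IsPrincipal.span_singleton_generator (In N n),
    show Submodule.IsPrincipal.generator (In N n) = (0 : ℤ) from h0]
  exact Submodule.span_zero_singleton ℤ

lemma li : LinearIndependent ℤ (fun n : T N => y N n) := by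
  rw [linearIndependent_iff']
  intro s g hsum
  classical
  induction s using Finset.induction_on_max with
  | empty => intro i hi; simp at hi
  | insert a s hmax ih =>
    have ha : g a = 0 := by
      have := congrArg (π (a : ℕ)) hsum
      rw [map_sum, map_zero, Finset.sum_insert (fun hc => lt_irrefl a (hmax a hc))] at this
      rw [map_smul, y_pi] at this
      have hz : ∀ x ∈ s, π (a : ℕ) (g x • y N x) = 0 := by
        intro x hx
        rw [map_smul, y_pi_zero N (hmax x hx), smul_zero]
      rw [Finset.sum_congr rfl hz, Finset.sum_const, smul_zero, add_zero, smul_eq_mul] at this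
      exact (mul_eq_zero.mp this).resolve_right (gen_ne_zero N a.2)
    intro i hi
    rcases Finset.mem_insert.mp hi with rfl | hi'
    · exact ha
    · refine ih ?_ i hi'
      rw [Finset.sum_insert (fun hc => lt_irrefl a (hmax a hc)), ha, zero_smul, zero_add] at hsum
      exact hsum

lemma span_claim : ∀ n, ∀ x ∈ N ⊓ Mn n,
    x ∈ Submodule.span ℤ (Set.range (fun n : T N => y N n)) := by
  intro n
  induction n with
  | zero =>
    intro x hx
    have : x = 0 := by
      have h2 := (Submodule.mem_inf.mp hx).2
      rw [Finsupp.mem_supported' ℤ] at h2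
      ext a
      exact h2 a (by simp)
    simp [this]
  | succ n ih =>
    intro x hx
    have hpix : π n x ∈ In N n := Submodule.mem_map_of_mem hx
    obtain ⟨c, hc⟩ := (Submodule.IsPrincipal.mem_iff_eq_smul_generator (In N n)).mp hpix
    by_cases hT : n ∈ T N
    · set x' := x - c • y N n with hx'
      have hx'N : x' ∈ N := N.sub_mem hx.1 (N.smul_mem c (y_memN N n))
      have hx'pi : π n x' = 0 := by
        rw [hx', map_sub, map_smul, y_pi, hc, gen_def, sub_self]
      have hx'M : x' ∈ Mn n := by
        rw [Finsupp.mem_supported' ℤ]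
        intro m hm
        simp only [Set.mem_Iio, not_lt] at hm
        rcases Nat.lt_or_ge m (n+1) with h1 | h1
        · have : m = n := by omega
          subst this
          exact hx'pi
        · have hx'M1 : x' ∈ Mn (n + 1) :=
            (Mn (n+1)).sub_mem (Submodule.mem_inf.mp hx).2 ((Mn (n+1)).smul_mem c (y_memM N n))
          rw [Finsupp.mem_supported' ℤ] at hx'M1
          exact hx'M1 m (by simp only [Set.mem_Iio, not_lt]; omega)
      have := ih x' ⟨hx'N, hx'M⟩
      have hy : y N n ∈ Submodule.span ℤ (Set.range (fun n : T N => y N n)) :=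
        Submodule.subset_span ⟨⟨n, hT⟩, rfl⟩
      have : x = x' + c • y N n := by rw [hx', sub_add_cancel]
      rw [this]
      exact Submodule.add_mem _ ‹x' ∈ _› (Submodule.smul_mem _ c hy)
    · have hIn : In N n = ⊥ := by simpa [T] using hT
      have hpix0 : π n x = 0 := by
        rw [hIn] at hpix; simpa using hpix
      have hxM : x ∈ Mn n := by
        rw [Finsupp.mem_supported' ℤ]
        intro m hm
        simp only [Set.mem_Iio, not_lt] at hm
        rcases Nat.lt_or_ge m (n+1) with h1 | h1
        · have : m = n := by omega
          subst this
          exact hpix0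
        · have h2 := (Submodule.mem_inf.mp hx).2
          rw [Finsupp.mem_supported' ℤ] at h2
          exact h2 m (by simp only [Set.mem_Iio, not_lt]; omega)
      exact ih x ⟨hx.1, hxM⟩

lemma span_eq : Submodule.span ℤ (Set.range (fun n : T N => y N n)) = N := by
  apply le_antisymm
  · rw [Submodule.span_le]
    rintro _ ⟨n, rfl⟩
    exact y_memN N n
  · intro x hx
    obtain ⟨n, hn⟩ : ∃ n, x ∈ Mn n := by
      refine ⟨x.support.sup id + 1, ?_⟩
      rw [Finsupp.mem_supported ℤ]
      intro a ha
      simpa using Nat.lt_succ_of_le (Finset.le_sup (f := id) ha)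
    exact span_claim N _ x ⟨hx, hn⟩

theorem free_submodule_finsupp_nat : Module.Free ℤ N := by
  have b := Module.Basis.span (li N)
  rw [span_eq] at b
  exact Module.Free.of_basis b

end
end Aleph1Aux

namespace Aleph1Aux

open Submodule

lemma free_congr_int {M : Type*} [AddCommGroup M] {i1 i2 : Module ℤ M}
    (h : @Module.Free ℤ M _ _ i1) : @Module.Free ℤ M _ _ i2 := by
  have u := AddCommGroup.uniqueIntModule (M := M)
  have : i1 = i2 := (u.2 i1).trans (u.2 i2).symm
  exact this ▸ h

/-- Transport ℤ-freeness along an additive equivalence, with arbitrary module instances. -/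
lemma free_of_addEquiv {A B : Type*} [AddCommGroup A] [AddCommGroup B] {iA : Module ℤ A}
    {iB : Module ℤ B} (e : A ≃+ B) (h : @Module.Free ℤ A _ _ iA) : @Module.Free ℤ B _ _ iB := by
  refine free_congr_int (i1 := AddCommGroup.toIntModule B) ?_
  exact @Module.Free.of_equiv ℤ ℤ A B _ _ (AddCommGroup.toIntModule A) _ _ (AddCommGroup.toIntModule B)
    _ _ _ _ (@AddEquiv.toIntLinearEquiv A B _ _ (AddCommGroup.toIntModule A) (AddCommGroup.toIntModule B) e)
    (free_congr_int (i2 := AddCommGroup.toIntModule A) h)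

/-- Convert a ℤ-linear equivalence (with arbitrary module instances) to an `AddEquiv`. -/
def lequivToAddEquiv {A B : Type*} [AddCommGroup A] [AddCommGroup B] {iA : Module ℤ A}
    {iB : Module ℤ B}
    (e : @LinearEquiv ℤ ℤ Int.instSemiring Int.instSemiring (RingHom.id ℤ) (RingHom.id ℤ)
      RingHomInvPair.ids RingHomInvPair.ids A B _ _ iA iB) : A ≃+ B :=
  { toFun := e.toFun, invFun := e.invFun, left_inv := e.left_inv, right_inv := e.right_inv,
    map_add' := e.map_add' }

/-- A countable submodule of a free ℤ-module is free. -/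
theorem free_of_countable_submodule {M : Type*} [AddCommGroup M] [Module ℤ M]
    [Module.Free ℤ M] (N : Submodule ℤ M) (hc : Countable N) : Module.Free ℤ N := by
  classical
  obtain ⟨ι, b⟩ := Module.Free.exists_basis (R := ℤ) (M := M)
  -- transport to ι →₀ ℤ
  let e : M ≃ₗ[ℤ] (ι →₀ ℤ) := b.repr
  let N' : Submodule ℤ (ι →₀ ℤ) := N.map e.toLinearMap
  have eN := Submodule.equivMapOfInjective e.toLinearMap e.injective N
  have hcN' : Countable N' := by
    have h1 : (↑N : Set M).Countable := Set.countable_coe_iff.mpr hc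
    have h2 : (↑N' : Set (ι →₀ ℤ)).Countable := by
      rw [show (↑N' : Set (ι →₀ ℤ)) = e.toLinearMap '' ↑N from Submodule.map_coe _ _]
      exact h1.image _
    exact h2.to_subtype
  -- countable support set
  let s : Set ι := ⋃ x : N', ((x : ι →₀ ℤ).support : Set ι)
  have hs : s.Countable := Set.countable_iUnion (fun x => (Finset.countable_toSet _))
  have hle : N' ≤ Finsupp.supported ℤ ℤ s := by
    intro x hx
    rw [Finsupp.mem_supported ℤ]
    exact Set.subset_iUnion (fun x : N' => ((x : ι →₀ ℤ).support : Set ι)) ⟨x, hx⟩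
  have : Countable s := hs.to_subtype
  obtain ⟨f, hf⟩ := exists_injective_nat s
  -- chain of equivalences down to a submodule of ℕ →₀ ℤ
  let N'' : Submodule ℤ (Finsupp.supported ℤ ℤ s) :=
    N'.comap (Finsupp.supported ℤ ℤ s).subtype
  have e1 := Submodule.comapSubtypeEquivOfLe hle
  let E : (Finsupp.supported ℤ ℤ s) ≃ₗ[ℤ] (s →₀ ℤ) := Finsupp.supportedEquivFinsupp s
  have e2 := Submodule.equivMapOfInjective E.toLinearMap E.injective N''
  let G : (s →₀ ℤ) →ₗ[ℤ] (ℕ →₀ ℤ) := Finsupp.lmapDomain ℤ ℤ f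
  have hG : Function.Injective G := Finsupp.mapDomain_injective hf
  have e3 := Submodule.equivMapOfInjective G hG (N''.map E.toLinearMap)
  exact free_of_addEquiv ((lequivToAddEquiv eN).trans (((lequivToAddEquiv e1).symm.trans
      ((lequivToAddEquiv e2).trans (lequivToAddEquiv e3))))).symm
    (free_submodule_finsupp_nat ((N''.map E.toLinearMap).map G))

/-- If a ℤ-module surjects onto a free module with free kernel, it is free. -/
theorem free_of_ker_free {M N : Type*} [AddCommGroup M] [Module ℤ M]
    [AddCommGroup N] [Module ℤ N]
    (f : M →ₗ[ℤ] N) (hsurj : Function.Surjective f)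
    (h1 : Module.Free ℤ (LinearMap.ker f)) (h2 : Module.Free ℤ N) :
    Module.Free ℤ M := by
  obtain ⟨g, hg⟩ := Module.projective_lifting_property f (LinearMap.id) hsurj
  have hginj : Function.Injective g := by
    intro a b hab
    have := congrArg f hab
    rw [← LinearMap.comp_apply, ← LinearMap.comp_apply, hg] at this
    exact this
  have hcompl : IsCompl (LinearMap.ker f) (LinearMap.range g) := by
    constructor
    · rw [disjoint_iff_inf_le]
      rintro x ⟨hx1, a, rfl⟩
      have : f (g a) = a := by rw [← LinearMap.comp_apply, hg]; rfl
      have hx1' : f (g a) = 0 := hx1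
      rw [hx1'] at this
      rw [← this, map_zero]
      simp
    · rw [codisjoint_iff_le_sup]
      intro x _
      have hxk : x - g (f x) ∈ LinearMap.ker f := by
        rw [LinearMap.mem_ker, map_sub, ← LinearMap.comp_apply, hg, LinearMap.id_apply, sub_self]
      have : x = (x - g (f x)) + g (f x) := by rw [sub_add_cancel]
      rw [this]
      exact Submodule.add_mem _ (Submodule.mem_sup_left hxk)
        (Submodule.mem_sup_right ⟨f x, rfl⟩)
  haveI h1' := free_congr_int (i2 := (LinearMap.ker f).module) h1
  have hrg : @Module.Free ℤ ↥(LinearMap.range g) _ _ (LinearMap.range g).module :=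
    free_of_addEquiv (lequivToAddEquiv (LinearEquiv.ofInjective g hginj)) h2
  have hprod := @Module.Free.prod ℤ ↥(LinearMap.ker f) ↥(LinearMap.range g) _ _
    (LinearMap.ker f).module _ (LinearMap.range g).module h1' hrg
  exact free_of_addEquiv (lequivToAddEquiv (Submodule.prodEquivOfIsCompl _ _ hcompl)) hprod

end Aleph1Aux


/-- If `K ⊆ L ⊆ H`, `H/L` is ℵ₁-free and `L/K` is free,
then `H/K` is ℵ₁-free (transitivity of ℵ₁-freeness). -/
theorem aleph1Free_transitivity {H : Type*} [AddCommGroup H]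
    (K L : AddSubgroup H) (hKL : K ≤ L)
    (hHL : Aleph1Free (H ⧸ L))
    (hLK : Module.Free ℤ (L ⧸ K.addSubgroupOf L)) :
    Aleph1Free (H ⧸ K) := by
  intro S hS
  classical
  haveI : Countable S := hS
  haveI := hLK
  -- the natural map H/K → H/L
  let φ : (H ⧸ K) →+ (H ⧸ L) :=
    QuotientAddGroup.map K L (AddMonoidHom.id H) (by simpa using hKL)
  let flin : S →ₗ[ℤ] (H ⧸ L) := (φ.comp S.subtype).toIntLinearMap
  -- the range of flin is free, being a countable subgroup of H ⧸ L
  have hQc : Countable (LinearMap.range flin) := by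
    have h0 : (Set.range flin).Countable := Set.countable_range _
    have h2 : ((LinearMap.range flin : Submodule ℤ (H ⧸ L)) : Set (H ⧸ L)).Countable := by
      rw [LinearMap.coe_range]; exact h0
    exact h2.to_subtype
  have h2 : Module.Free ℤ (LinearMap.range flin) :=
    hHL (LinearMap.range flin).toAddSubgroup hQc
  -- the embedding of L ⧸ (K ⊓ L) into H ⧸ K
  let ψ : (L ⧸ K.addSubgroupOf L) →+ (H ⧸ K) :=
    QuotientAddGroup.map (K.addSubgroupOf L) K L.subtype (fun x hx => hx)
  have hψinj : Function.Injective ψ := by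
    rw [injective_iff_map_eq_zero]
    intro a ha
    obtain ⟨x, rfl⟩ := QuotientAddGroup.mk'_surjective (K.addSubgroupOf L) a
    have hmap : ψ ((QuotientAddGroup.mk' (K.addSubgroupOf L)) x) =
        QuotientAddGroup.mk' K (L.subtype x) := QuotientAddGroup.map_mk' _ _ _ _ _
    rw [hmap] at ha
    have hxK : (x : H) ∈ K := (QuotientAddGroup.eq_zero_iff (L.subtype x)).mp ha
    exact (QuotientAddGroup.eq_zero_iff x).mpr (AddSubgroup.mem_addSubgroupOf.mpr hxK)
  -- the kernel of flin lands inside the range of ψ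
  have hker_sub : ∀ z : S, z ∈ LinearMap.ker flin → (z : H ⧸ K) ∈ ψ.range := by
    intro z hz
    have hz' : φ (z : H ⧸ K) = 0 := hz
    obtain ⟨h, hh⟩ := QuotientAddGroup.mk'_surjective K (z : H ⧸ K)
    have hφ := QuotientAddGroup.map_mk' K L (AddMonoidHom.id H) (by simpa using hKL) h
    have hhL : h ∈ L := by
      apply (QuotientAddGroup.eq_zero_iff h).mp
      rw [← hh] at hz'
      simp only [φ] at hz'
      rw [hφ] at hz'
      simpa using hz'
    refine ⟨QuotientAddGroup.mk' (K.addSubgroupOf L) ⟨h, hhL⟩, ?_⟩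
    rw [show ψ _ = QuotientAddGroup.mk' K (L.subtype ⟨h, hhL⟩) from
      QuotientAddGroup.map_mk' _ _ _ _ _]
    exact hh
  -- build an injective map from ker flin into L ⧸ K.addSubgroupOf L
  let inc : (LinearMap.ker flin) →+ (H ⧸ K) :=
    S.subtype.comp ((LinearMap.ker flin).subtype.toAddMonoidHom)
  have hinc_inj : Function.Injective inc := by
    intro a b hab
    exact Subtype.ext (Subtype.ext hab)
  let g0 : (LinearMap.ker flin) →+ ψ.range :=
    AddMonoidHom.codRestrict inc ψ.range (fun z => hker_sub z z.2)
  let eψ := AddMonoidHom.ofInjective hψinj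
  let gmap : (LinearMap.ker flin) →+ (L ⧸ K.addSubgroupOf L) :=
    (eψ.symm.toAddMonoidHom).comp g0
  have hgmap_inj : Function.Injective gmap := by
    intro a b hab
    have h' : g0 a = g0 b := by
      have := congrArg eψ hab
      simpa only [gmap, AddMonoidHom.comp_apply, AddEquiv.coe_toAddMonoidHom,
        AddEquiv.apply_symm_apply] using this
    have h2' : ((g0 a : ψ.range) : H ⧸ K) = ((g0 b : ψ.range) : H ⧸ K) := congrArg Subtype.val h'
    exact hinc_inj h2'
  let glin : (LinearMap.ker flin) →ₗ[ℤ] (L ⧸ K.addSubgroupOf L) := gmap.toIntLinearMap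
  have hglin_inj : Function.Injective glin := hgmap_inj
  have hRc : Countable (LinearMap.range glin) := by
    have h0 : (Set.range glin).Countable := Set.countable_range _
    have hr : (SetLike.coe (LinearMap.range glin)).Countable := by
      rw [LinearMap.coe_range]; exact h0
    exact hr.to_subtype
  have hRfree := Aleph1Aux.free_of_countable_submodule (LinearMap.range glin) hRc
  have h1 : Module.Free ℤ (LinearMap.ker flin) :=
    Aleph1Aux.free_of_addEquiv
      (Aleph1Aux.lequivToAddEquiv (LinearEquiv.ofInjective glin hglin_inj)).symm hRfree
  have hmain := Aleph1Aux.free_of_ker_free flin.rangeRestrict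
    (LinearMap.surjective_rangeRestrict flin)
    (by rw [LinearMap.ker_rangeRestrict]; exact h1)
    (Aleph1Aux.free_congr_int h2)
  exact hmain
end

section
/- Let H be an ℵ₁-free abelian group of cardinality ℵ₁. For every x ∈ H, the set D_x = {p ∈ P_pb : x ∈ ⟨p⟩} is dense in the poset (P_pb, ≤): for every q ∈ P_pb there exists p ∈ P_pb with q ⊆ p and x ∈ ⟨p⟩. Moreover, p can be chosen so that p − q is finite. -/
section AuxDxDense
open AddSubgroup

open AddSubgroup in
lemma aleph1Free_tf {G : Type*} [AddCommGroup G] (hG : Aleph1Free G) :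
    ∀ (n : ℤ) (g : G), n • g = 0 → n = 0 ∨ g = 0 := by
  intro n g h
  by_cases hn : n = 0
  · exact Or.inl hn
  right
  have hc : Countable (zmultiples g) := by
    have hs : Function.Surjective
        (fun n : ℤ => (⟨n • g, mem_zmultiples_iff.2 ⟨n, rfl⟩⟩ : zmultiples g)) := by
      rintro ⟨w, hw⟩
      obtain ⟨m, hm⟩ := mem_zmultiples_iff.1 hw
      exact ⟨m, Subtype.ext hm⟩
    exact hs.countable
  have hfree := hG (zmultiples g) hc
  have : (⟨g, mem_zmultiples g⟩ : zmultiples g) = 0 := by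
    have h2 : n • (⟨g, mem_zmultiples g⟩ : zmultiples g) = 0 := Subtype.ext (by simpa using h)
    exact (smul_eq_zero.1 h2).resolve_left hn
  simpa using congrArg Subtype.val this

lemma Aleph1Free.of_addEquiv {A B : Type*} [AddCommGroup A] [AddCommGroup B]
    (hA : Aleph1Free A) (e : A ≃+ B) : Aleph1Free B := by
  intro K hK
  set K' : AddSubgroup A := K.comap e.toAddMonoidHom with hK'
  have hmap : K'.map e.toAddMonoidHom = K :=
    AddSubgroup.map_comap_eq_self_of_surjective e.surjective K
  have e' : K' ≃+ (K'.map e.toAddMonoidHom) := AddSubgroup.equivMapOfInjective K' _ e.injective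
  have e'' : K' ≃+ K := e'.trans (AddEquiv.addSubgroupCongr hmap)
  have : Countable K' := e''.toEquiv.countable_iff.2 hK
  have := hA K' this
  exact Module.Free.of_equiv e''.toIntLinearEquiv

/-- pure closure of x -/
def pureCl {G : Type*} [AddCommGroup G] (x : G) : AddSubgroup G where
  carrier := {g | ∃ n : ℤ, n ≠ 0 ∧ ∃ m : ℤ, n • g = m • x}
  zero_mem' := ⟨1, one_ne_zero, 0, by simp⟩
  add_mem' := by
    rintro a b ⟨n₁, hn₁, m₁, h₁⟩ ⟨n₂, hn₂, m₂, h₂⟩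
    refine ⟨n₁ * n₂, mul_ne_zero hn₁ hn₂, n₂ * m₁ + n₁ * m₂, ?_⟩
    rw [smul_add, add_smul, mul_smul, mul_comm n₁ n₂, mul_smul, smul_comm n₁ n₂ a, h₁,
      smul_comm n₂ n₁ b, h₂, ← mul_smul, ← mul_smul]
  neg_mem' := by
    rintro a ⟨n, hn, m, h⟩
    exact ⟨n, hn, -m, by rw [smul_neg, h, neg_smul]⟩

section Gen
variable {G : Type*} [AddCommGroup G]

lemma pureCl_countable (hTF : ∀ (n : ℤ) (g : G), n • g = 0 → n = 0 ∨ g = 0) (x : G) :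
    Countable (pureCl x) := by
  have : ∀ g : pureCl x, ∃ nm : ℤ × ℤ, nm.1 ≠ 0 ∧ nm.1 • (g : G) = nm.2 • x := by
    rintro ⟨g, n, hn, m, h⟩; exact ⟨(n, m), hn, h⟩
  choose f hf1 hf2 using this
  have hinj : Function.Injective f := by
    intro g₁ g₂ h
    have h1 := hf2 g₁
    have h2 := hf2 g₂
    rw [h] at h1
    have : (f g₂).1 • ((g₁ : G) - g₂) = 0 := by
      rw [smul_sub, h1, h2, sub_self]
    have := (hTF _ _ this).resolve_left (hf1 g₂)
    exact Subtype.ext (by rwa [sub_eq_zero] at this)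
  exact hinj.countable

lemma exists_gen (hG : Aleph1Free G) (hTF : ∀ (n : ℤ) (g : G), n • g = 0 → n = 0 ∨ g = 0)
    (x : G) (hx : x ≠ 0) :
    ∃ y : G, y ≠ 0 ∧ (∃ k : ℤ, k • y = x) ∧ zmultiples y = pureCl x := by
  classical
  have hxP : x ∈ pureCl x := ⟨1, one_ne_zero, 1, rfl⟩
  have hfree := hG (pureCl x) (pureCl_countable hTF x)
  set P := pureCl x
  let b : Module.Basis (Module.Free.ChooseBasisIndex ℤ P) ℤ P := Module.Free.chooseBasis ℤ P
  have hnt : Nontrivial P := ⟨⟨x, hxP⟩, 0, by simp [Subtype.ext_iff, hx]⟩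
  have hne : Nonempty (Module.Free.ChooseBasisIndex ℤ P) := b.index_nonempty
  -- any two basis elements would be dependent: show index type subsingleton
  have hss : Subsingleton (Module.Free.ChooseBasisIndex ℤ P) := by
    by_contra hns
    rw [not_subsingleton_iff_nontrivial] at hns
    obtain ⟨i, j, hij⟩ := hns
    obtain ⟨n₁, hn₁, m₁, h₁⟩ := (b i).2
    obtain ⟨n₂, hn₂, m₂, h₂⟩ := (b j).2
    have hm₁ : m₁ ≠ 0 := by
      rintro rfl
      simp only [zero_smul] at h₁
      have := (hTF _ _ h₁).resolve_left hn₁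
      exact b.ne_zero i (Subtype.ext (by simpa using this))
    have hm₂ : m₂ ≠ 0 := by
      rintro rfl
      simp only [zero_smul] at h₂
      have := (hTF _ _ h₂).resolve_left hn₂
      exact b.ne_zero j (Subtype.ext (by simpa using this))
    -- (m₂ * n₁) • b i - (m₁ * n₂) • b j = 0
    have hrel : (m₂ * n₁) • (b i) + (-(m₁ * n₂)) • (b j) = 0 := by
      apply Subtype.ext
      push_cast [AddSubgroup.coe_add]
      show (m₂ * n₁) • ((b i : G)) + (-(m₁ * n₂)) • ((b j : G)) = 0
      rw [mul_smul, h₁, neg_smul, mul_smul, h₂, ← mul_smul, ← mul_smul,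
        mul_comm m₂ m₁, add_neg_cancel]
    have hli := b.linearIndependent
    rw [linearIndependent_iff'] at hli
    have := hli {i, j} (fun k => if k = i then m₂ * n₁ else -(m₁ * n₂)) ?_ i (by simp)
    · simp only [if_pos rfl] at this
      exact mul_ne_zero hm₂ hn₁ this
    · rw [Finset.sum_insert (by simp [hij]), Finset.sum_singleton]
      simpa [Ne.symm hij] using hrel
  obtain ⟨i₀⟩ := hne
  have huniq : Unique (Module.Free.ChooseBasisIndex ℤ P) := uniqueOfSubsingleton i₀
  set y : G := (b i₀ : G)
  have hyP : ∀ g : P, ∃ n : ℤ, n • y = (g : G) := by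
    intro g
    refine ⟨b.repr g i₀, ?_⟩
    have := b.linearCombination_repr g
    have hrepr : b.repr g = Finsupp.single i₀ (b.repr g i₀) := by
      apply Finsupp.ext; intro k
      obtain rfl : k = i₀ := Subsingleton.elim _ _
      simp
    rw [hrepr, Finsupp.linearCombination_single] at this
    calc (b.repr g i₀) • y = (((b.repr g i₀) • b i₀ : P) : G) := by push_cast; rfl
    _ = (g : G) := by rw [this]
  refine ⟨y, ?_, ?_, ?_⟩
  · intro h0
    exact b.ne_zero i₀ (Subtype.ext (by simpa [y] using h0))
  · obtain ⟨k, hk⟩ := hyP ⟨x, hxP⟩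
    exact ⟨k, hk⟩
  · ext g
    simp only [mem_zmultiples_iff]
    constructor
    · rintro ⟨k, rfl⟩
      exact zsmul_mem (b i₀).2 k
    · intro hg
      obtain ⟨n, hn⟩ := hyP ⟨g, hg⟩
      exact ⟨n, hn⟩
end Gen

section Quot
variable {G : Type*} [AddCommGroup G]

lemma countable_zmultiples (g : G) : Countable (zmultiples g) := by
  have hs : Function.Surjective (fun n : ℤ => (⟨n • g, mem_zmultiples_iff.2 ⟨n, rfl⟩⟩ : zmultiples g)) := by
    rintro ⟨w, hw⟩
    obtain ⟨m, hm⟩ := mem_zmultiples_iff.1 hw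
    exact ⟨m, Subtype.ext hm⟩
  exact hs.countable

lemma quotient_aleph1Free (hG : Aleph1Free G)
    (hTF : ∀ (n : ℤ) (g : G), n • g = 0 → n = 0 ∨ g = 0)
    (y : G) (hy : y ≠ 0)
    (hpure : ∀ (n : ℤ) (g : G), n ≠ 0 → n • g ∈ zmultiples y → g ∈ zmultiples y) :
    Aleph1Free (G ⧸ zmultiples y) := by
  classical
  intro K hK
  have hyB : y ∈ K.comap (QuotientAddGroup.mk' (zmultiples y)) := by
    show ((y : G ⧸ zmultiples y)) ∈ K
    have : ((y : G ⧸ zmultiples y)) = 0 := (QuotientAddGroup.eq_zero_iff y).2 (mem_zmultiples y)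
    rw [this]; exact K.zero_mem
  set B := K.comap (QuotientAddGroup.mk' (zmultiples y))
  have hmemB : ∀ g : G, g ∈ B ↔ ((g : G ⧸ zmultiples y) ∈ K) := fun g => Iff.rfl
  -- B is countable
  haveI hNc : Countable (zmultiples y) := countable_zmultiples y
  haveI hBc : Countable B := by
    have key : ∀ b : B, ((b : G) - ((b : G) : G ⧸ zmultiples y).out) ∈ zmultiples y := by
      intro b
      rw [← QuotientAddGroup.eq_zero_iff, QuotientAddGroup.mk_sub, sub_eq_zero,
        QuotientAddGroup.out_eq']
    let f : B → K × (zmultiples y) := fun b => (⟨_, (hmemB _).1 b.2⟩, ⟨_, key b⟩)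
    have hf : Function.Injective f := by
      intro b₁ b₂ h
      obtain ⟨h1, h2⟩ := Prod.mk.injEq .. ▸ h
      have e1 : ((b₁ : G) : G ⧸ zmultiples y) = ((b₂ : G) : G ⧸ zmultiples y) :=
        congrArg Subtype.val h1
      have e2 := congrArg Subtype.val h2
      simp only at e2
      rw [e1] at e2
      exact Subtype.ext (sub_left_inj.1 e2)
    exact hf.countable
  haveI hBfree : Module.Free ℤ B := hG B hBc
  set b := Module.Free.chooseBasis ℤ B with hb
  set yB : B := ⟨y, hyB⟩ with hyBdef
  have hyB0 : yB ≠ 0 := fun h => hy (congrArg Subtype.val h)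
  set a := b.repr yB with ha
  obtain ⟨d, hd⟩ := Submodule.IsPrincipal.principal (Ideal.span (Set.range fun i => a i))
  have hdvd : ∀ i, d ∣ a i := by
    intro i
    have : a i ∈ Ideal.span (Set.range fun i => a i) := Ideal.subset_span ⟨i, rfl⟩
    rw [hd] at this
    obtain ⟨r, hr⟩ := Submodule.mem_span_singleton.1 this
    exact ⟨r, by rw [← hr, smul_eq_mul, mul_comm]⟩
  have hd0 : d ≠ 0 := by
    rintro rfl
    apply hyB0
    have : a = 0 := by
      apply Finsupp.ext; intro i
      simpa using hdvd i
    have := congrArg b.repr.symm this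
    simpa [ha] using this
  -- y = d • y' for y' ∈ B
  set c : _ →₀ ℤ := a.mapRange (· / d) (Int.zero_ediv d) with hc
  set y' : B := b.repr.symm c with hy'
  have hdy' : d • y' = yB := by
    apply b.repr.injective
    rw [map_smul, hy', LinearEquiv.apply_symm_apply]
    apply Finsupp.ext; intro i
    rw [Finsupp.smul_apply, hc, Finsupp.mapRange_apply, smul_eq_mul,
      Int.mul_ediv_cancel' (hdvd i)]
  -- purity forces d * m = 1
  have hcoe : d • ((y' : G)) = y := by
    have := congrArg Subtype.val hdy'
    simpa using this
  obtain ⟨m, hm⟩ := mem_zmultiples_iff.1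
    (hpure d (y' : G) hd0 (by rw [hcoe]; exact mem_zmultiples y))
  have hdm : d * m = 1 := by
    have : (d * m - 1) • y = 0 := by
      rw [sub_smul, one_smul, mul_smul, hm, hcoe, sub_self]
    have := (hTF _ _ this).resolve_right hy
    omega
  -- d is an integer combination of the coordinates
  have hdmem : d ∈ Ideal.span (Set.range fun i => a i) := by
    rw [hd]; exact Ideal.subset_span rfl
  obtain ⟨u, hu⟩ := Finsupp.mem_span_range_iff_exists_finsupp.1 hdmem
  -- the functional F with F yB = 1
  set F : B →ₗ[ℤ] ℤ := m • (u.sum fun i r => r • (b.coord i)) with hF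
  have hFyB : F yB = 1 := by
    rw [hF]
    have happ : (u.sum fun i r => r • (b.coord i)) yB = d := by
      rw [Finsupp.sum, LinearMap.sum_apply, ← hu, Finsupp.sum]
      refine Finset.sum_congr rfl fun i _ => ?_
      simp [Module.Basis.coord_apply, ha]
    rw [LinearMap.smul_apply, happ, smul_eq_mul, mul_comm]
    exact hdm
  -- the kernel of F
  set W : AddSubgroup B := (LinearMap.ker F).toAddSubgroup with hW
  have hmemW : ∀ w : B, w ∈ W ↔ F w = 0 := fun w => Iff.rfl
  -- ψ : W →+ K
  have hπmem : ∀ w : B, ((w : G) : G ⧸ zmultiples y) ∈ K := fun w => (hmemB _).1 w.2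
  set ψ : W →+ K :=
    { toFun := fun w => ⟨((((w : B) : G)) : G ⧸ zmultiples y), hπmem _⟩
      map_zero' := by apply Subtype.ext; simp
      map_add' := by intro w₁ w₂; apply Subtype.ext; push_cast; rfl } with hψ
  have hψinj : Function.Injective ψ := by
    intro w₁ w₂ h
    have h' : (((w₁ : B) : G) : G ⧸ zmultiples y) = (((w₂ : B) : G) : G ⧸ zmultiples y) :=
      congrArg Subtype.val h
    rw [← sub_eq_zero, ← QuotientAddGroup.mk_sub] at h'
    obtain ⟨n, hn⟩ := mem_zmultiples_iff.1 ((QuotientAddGroup.eq_zero_iff _).1 h')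
    have hsub : (w₁ : B) - (w₂ : B) = n • yB := by
      apply Subtype.ext
      push_cast
      rw [← hn]
    have hF0 : F ((w₁ : B) - (w₂ : B)) = 0 := by
      rw [map_sub, (hmemW _).1 w₁.2, (hmemW _).1 w₂.2, sub_self]
    rw [hsub, map_smul, hFyB, smul_eq_mul, mul_one] at hF0
    subst hF0
    simp only [zero_smul] at hsub
    exact Subtype.ext (by rw [← sub_eq_zero]; exact hsub)
  have hψsurj : Function.Surjective ψ := by
    intro k
    have hout : (((k : G ⧸ zmultiples y).out : G) : G ⧸ zmultiples y) = (k : G ⧸ zmultiples y) :=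
      QuotientAddGroup.out_eq' _
    have hmem0 : (k : G ⧸ zmultiples y).out ∈ B := by
      rw [hmemB, hout]; exact k.2
    set b₀ : B := ⟨(k : G ⧸ zmultiples y).out, hmem0⟩ with hb₀
    set w : B := b₀ - (F b₀) • yB with hwdef
    have hFw : F w = 0 := by
      rw [hwdef, map_sub, map_smul, hFyB, smul_eq_mul, mul_one, sub_self]
    refine ⟨⟨w, (hmemW w).2 hFw⟩, ?_⟩
    apply Subtype.ext
    show ((w : G) : G ⧸ zmultiples y) = (k : G ⧸ zmultiples y)
    have hwcoe : (w : G) = ((k : G ⧸ zmultiples y).out : G) - (F b₀) • y := by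
      rw [hwdef]; push_cast; rfl
    rw [hwcoe, QuotientAddGroup.mk_sub, hout]
    have : (((F b₀ • y : G)) : G ⧸ zmultiples y) = 0 :=
      (QuotientAddGroup.eq_zero_iff _).2 (zsmul_mem (mem_zmultiples y) _)
    rw [this, sub_zero]
  -- transport freeness from the image of W in G
  set C : AddSubgroup G := W.map B.subtype with hC
  haveI hCc : Countable C := by
    have hsub : (C : Set G) ⊆ (B : Set G) := by
      rintro _ ⟨w, hw, rfl⟩
      exact w.2
    exact Set.countable_coe_iff.2
      (Set.Countable.mono hsub (Set.countable_coe_iff.1 hBc))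
  haveI hCfree : Module.Free ℤ C := hG C hCc
  have eWC : W ≃+ C := AddSubgroup.equivMapOfInjective W B.subtype Subtype.coe_injective
  have eWK : W ≃+ K := AddEquiv.ofBijective ψ ⟨hψinj, hψsurj⟩
  exact Module.Free.of_equiv ((eWC.symm.trans eWK).toIntLinearEquiv)
end Quot
end AuxDxDense

open AddSubgroup in
/-- For every `x ∈ H`, the set `D_x = {p ∈ P_pb : x ∈ ⟨p⟩}` is dense in
`(P_pb, ≤)`; moreover the extension `p` of `q` can be chosen with `p \ q` finite. -/
theorem Dx_dense {H : Type*} [AddCommGroup H]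
    (hH : Aleph1Free H) (hcard : Cardinal.mk H = Cardinal.aleph 1) (x : H) :
    ∀ q ∈ Ppb H, ∃ p ∈ Ppb H, q ⊆ p ∧ x ∈ AddSubgroup.closure p ∧ (p \ q).Finite := by
  classical
  rintro q ⟨hq_li, hq_ct, hq_free⟩
  have hTF := aleph1Free_tf hq_free
  by_cases hx0 : ((x : H ⧸ AddSubgroup.closure q)) = 0
  · exact ⟨q, ⟨hq_li, hq_ct, hq_free⟩, subset_rfl,
      (QuotientAddGroup.eq_zero_iff x).1 hx0, by simp⟩
  obtain ⟨y, hy0, ⟨k, hk⟩, hzm⟩ := exists_gen hq_free hTF _ hx0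
  have hpure : ∀ (n : ℤ) (g : H ⧸ AddSubgroup.closure q), n ≠ 0 →
      n • g ∈ zmultiples y → g ∈ zmultiples y := by
    intro n g hn hg
    rw [hzm] at hg ⊢
    obtain ⟨n', hn', m', h'⟩ := hg
    exact ⟨n' * n, mul_ne_zero hn' hn, m', by rw [mul_smul]; exact h'⟩
  have hQfree := quotient_aleph1Free hq_free hTF y hy0 hpure
  obtain ⟨z, hz⟩ : ∃ z : H, ((z : H ⧸ AddSubgroup.closure q)) = y :=
    ⟨y.out, QuotientAddGroup.out_eq' y⟩
  have hqp : q ⊆ insert z q := Set.subset_insert z q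
  have hNle : AddSubgroup.closure q ≤ AddSubgroup.closure (insert z q) :=
    AddSubgroup.closure_mono hqp
  have hz0 : z ≠ 0 := by
    rintro h
    apply hy0
    rw [← hz, h]
    simp
  have hspan : ∀ w : H, w ∈ Submodule.span ℤ q ↔ w ∈ AddSubgroup.closure q := by
    intro w
    rw [← Submodule.span_int_eq_addSubgroupClosure]
    rfl
  have hdisj : Disjoint (Submodule.span ℤ q) (Submodule.span ℤ {z}) := by
    rw [Submodule.disjoint_def]
    intro w hw hw'
    obtain ⟨n, hn⟩ := Submodule.mem_span_singleton.1 hw'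
    have h0 : ((w : H ⧸ AddSubgroup.closure q)) = 0 :=
      (QuotientAddGroup.eq_zero_iff w).2 ((hspan w).1 hw)
    rw [← hn] at h0
    have h1 : ((n • z : H) : H ⧸ AddSubgroup.closure q) = n • y := by
      rw [← hz]
      push_cast
      rfl
    rw [h1] at h0
    have : n = 0 := (hTF n y h0).resolve_right hy0
    rw [← hn, this, zero_smul]
  haveI : NoZeroSMulDivisors ℤ H := ⟨fun {n g} h => aleph1Free_tf hH n g h⟩
  have hp_li : LinearIndependent ℤ (fun w : ↥(insert z q) => (w : H)) := by
    have h := LinearIndepOn.id_union (R := ℤ) hq_li (LinearIndepOn.singleton (R := ℤ) (v := id) hz0) hdisj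
    rw [Set.union_singleton] at h
    exact h
  have hxmem : x ∈ AddSubgroup.closure (insert z q) := by
    have h1 : x - k • z ∈ AddSubgroup.closure q := by
      rw [← QuotientAddGroup.eq_zero_iff, QuotientAddGroup.mk_sub]
      have h2 : ((k • z : H) : H ⧸ AddSubgroup.closure q) = k • y := by
        rw [← hz]; push_cast; rfl
      rw [h2, hk, sub_self]
    have h3 : x = (x - k • z) + k • z := by abel
    rw [h3]
    exact add_mem (hNle h1)
      (zsmul_mem (AddSubgroup.subset_closure (Set.mem_insert z q)) k)
  have hmap : (AddSubgroup.closure (insert z q)).map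
      (QuotientAddGroup.mk' (AddSubgroup.closure q)) = zmultiples y := by
    rw [AddMonoidHom.map_closure]
    apply le_antisymm
    · rw [AddSubgroup.closure_le]
      rintro g hg
      obtain ⟨w, hwp, rfl⟩ := hg
      rcases Set.mem_insert_iff.1 hwp with h | hwq
      · rw [SetLike.mem_coe,
          show (QuotientAddGroup.mk' (AddSubgroup.closure q)) w = y from h ▸ hz]
        exact mem_zmultiples y
      · rw [SetLike.mem_coe,
          show (QuotientAddGroup.mk' (AddSubgroup.closure q)) w = 0 from
            (QuotientAddGroup.eq_zero_iff w).2 (AddSubgroup.subset_closure hwq)]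
        exact zero_mem _
    · intro g hg
      obtain ⟨n, hn⟩ := mem_zmultiples_iff.1 hg
      rw [← hn]
      refine zsmul_mem (AddSubgroup.subset_closure ?_) n
      exact ⟨z, Set.mem_insert z q, hz⟩
  have equiv1 : ((H ⧸ AddSubgroup.closure q) ⧸ (AddSubgroup.closure (insert z q)).map
      (QuotientAddGroup.mk' (AddSubgroup.closure q))) ≃+ H ⧸ AddSubgroup.closure (insert z q) :=
    QuotientAddGroup.quotientQuotientEquivQuotient _ _ hNle
  have hfree' : Aleph1Free ((H ⧸ AddSubgroup.closure q) ⧸ (AddSubgroup.closure (insert z q)).map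
      (QuotientAddGroup.mk' (AddSubgroup.closure q))) := by
    rw [hmap]; exact hQfree
  refine ⟨insert z q, ⟨hp_li, hq_ct.insert z, hfree'.of_addEquiv equiv1⟩, hqp, hxmem, ?_⟩
  refine (Set.finite_singleton z).subset ?_
  rintro w ⟨h1, h2⟩
  rcases h1 with rfl | h
  · exact rfl
  · exact absurd h h2
end

section
/- Let H be an ℵ₁-free abelian group of cardinality ℵ₁ with ℵ₁-filtration {H_α : α < ω₁}, and suppose the set {α < ω₁ : H/H_α is ℵ₁-free} is unbounded in ω₁. Then the set P' = {p ⊆ H : p is a basis of H_α for some α < ω₁ with H/H_α ℵ₁-free} is a dense subset of the poset (P_pb, ≤): for every p ∈ P_pb there exists α < ω₁ with H/H_α ℵ₁-free and a basis q of H_α with p ⊆ q. -/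
/-- `q` is a basis of the subgroup `K`: `q` is linearly independent and generates `K`. -/
def IsBasisOfSubgroup {H : Type*} [AddCommGroup H] (q : Set H) (K : AddSubgroup H) : Prop :=
  LinearIndependent ℤ ((↑) : q → H) ∧ AddSubgroup.closure q = K

/-- If `{α < ω₁ : H/H_α is ℵ₁-free}` is unbounded in ω₁, then
`P' = {p : p is a basis of some H_α with H/H_α ℵ₁-free}` is dense in `(P_pb, ≤)`. -/
theorem P'_dense {H : Type*} [AddCommGroup H]
    (hH : Aleph1Free H) (hcard : Cardinal.mk H = Cardinal.aleph 1)
    (F : Ordinal → AddSubgroup H) (hF : IsAleph1Filtration F)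
    (hunbdd : ∀ β < omega1, ∃ α : Ordinal, α < omega1 ∧ β ≤ α ∧ Aleph1Free (H ⧸ F α)) :
    ∀ p ∈ Ppb H, ∃ α : Ordinal, α < omega1 ∧ Aleph1Free (H ⧸ F α) ∧
      ∃ q : Set H, IsBasisOfSubgroup q (F α) ∧ p ⊆ q := by
  rintro p ⟨hli, hcnt, hfree⟩
  choose γ hγlt hγmem using hF.2.2.2
  -- find a bound β for the γ's on p
  obtain ⟨β, hβlt, hβ⟩ : ∃ β, β < omega1 ∧ ∀ x ∈ p, γ x ≤ β := by
    rcases p.eq_empty_or_nonempty with rfl | hne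
    · have : Nonempty H := by
        by_contra h
        rw [not_nonempty_iff] at h
        rw [Cardinal.mk_eq_zero H] at hcard
        exact absurd hcard.symm (ne_of_gt (Cardinal.aleph_pos 1))
      obtain ⟨x⟩ := this
      exact ⟨γ x, hγlt x, by simp⟩
    · obtain ⟨e, he⟩ := hcnt.exists_eq_range hne
      refine ⟨⨆ n, γ (e n), ?_, ?_⟩
      · exact Cardinal.iSup_lt_ord_lift_of_isRegular Cardinal.isRegular_aleph_one
          (by simpa using Cardinal.aleph0_lt_aleph_one) (fun n => hγlt _)
      · intro x hx
        rw [he] at hx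
        obtain ⟨n, rfl⟩ := hx
        exact Ordinal.le_iSup (fun n => γ (e n)) n
  obtain ⟨α, hα, hβα, hαfree⟩ := hunbdd β hβlt
  refine ⟨α, hα, hαfree, ?_⟩
  have hpF : p ⊆ (F α : Set H) := fun x hx =>
    hF.2.1 (γ x) α ((hβ x hx).trans hβα) hα (hγmem x)
  haveI hKc : Countable (F α) := hF.1 α hα
  set K : Submodule ℤ H := AddSubgroup.toIntSubmodule (F α) with hKdef
  haveI : Countable K := hKc
  set P : Submodule ℤ H := Submodule.span ℤ p with hPdef
  have hPK : P ≤ K := Submodule.span_le.2 hpF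
  set P' : Submodule ℤ K := P.comap K.subtype with hP'def
  -- the quotient K ⧸ P' is countable
  haveI : Countable (K ⧸ P') := Quotient.countable
  -- the quotient K ⧸ P' embeds into H ⧸ closure p, hence is free
  have hnorm : (AddSubgroup.closure p).Normal := inferInstance
  set f₀ : H →+ H ⧸ AddSubgroup.closure p := QuotientAddGroup.mk' _ with hf₀
  set lin : K →ₗ[ℤ] H ⧸ AddSubgroup.closure p := f₀.toIntLinearMap.comp K.subtype with hlin
  have hkerlin : LinearMap.ker lin = P' := by
    ext x
    simp only [LinearMap.mem_ker, hlin, LinearMap.comp_apply, Submodule.subtype_apply,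
      AddMonoidHom.coe_toIntLinearMap, hf₀, QuotientAddGroup.mk'_apply,
      QuotientAddGroup.eq_zero_iff, hP'def, Submodule.mem_comap, hPdef,
      ← Submodule.span_int_eq_addSubgroupClosure, Submodule.mem_toAddSubgroup]
  set g : (K ⧸ P') →ₗ[ℤ] H ⧸ AddSubgroup.closure p := P'.liftQ lin hkerlin.ge with hg
  have hginj : Function.Injective g := by
    rw [← LinearMap.ker_eq_bot]
    exact Submodule.ker_liftQ_eq_bot _ _ _ hkerlin.le
  haveI : Countable (LinearMap.range g) :=
    Function.Surjective.countable g.surjective_rangeRestrict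
  haveI hQfree : Module.Free ℤ (K ⧸ P') := by
    have hAfree : Module.Free ℤ ((LinearMap.range g).toAddSubgroup) :=
      hfree (LinearMap.range g).toAddSubgroup ‹_›
    have e : ((LinearMap.range g).toAddSubgroup) ≃+ (LinearMap.range g) :=
      ⟨⟨fun x => ⟨x.1, x.2⟩, fun x => ⟨x.1, x.2⟩, fun _ => rfl, fun _ => rfl⟩, fun _ _ => rfl⟩
    have := Module.Free.of_equiv (e.toIntLinearEquiv)
    exact Module.Free.of_equiv (LinearEquiv.ofInjective g hginj).symm
  -- use freeness to split the projection K → K ⧸ P'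
  obtain ⟨σ, hσ⟩ := Module.projective_lifting_property P'.mkQ (LinearMap.id)
    (Submodule.Quotient.mk_surjective P')
  have hσsec : ∀ y : K ⧸ P', P'.mkQ (σ y) = y := fun y => by
    have := congrArg (fun f => f y) hσ; simpa using this
  set ι := Module.Free.ChooseBasisIndex ℤ (K ⧸ P') with hι
  set b : Module.Basis ι ℤ (K ⧸ P') := Module.Free.chooseBasis ℤ (K ⧸ P') with hb
  set w : ι → H := fun i => ((σ (b i) : K) : H) with hw
  set v : (↥p) ⊕ ι → H := Sum.elim (fun x => (x : H)) w with hv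
  have hσinj : Function.Injective σ := by
    intro x y h
    have := congrArg P'.mkQ h
    rwa [hσsec, hσsec] at this
  have hwli : LinearIndependent ℤ w := by
    have h1 : LinearIndependent ℤ (fun i => σ (b i)) :=
      b.linearIndependent.map' σ (LinearMap.ker_eq_bot.2 hσinj)
    exact h1.map' K.subtype (Submodule.ker_subtype K)
  have hwle : Submodule.span ℤ (Set.range w) ≤
      Submodule.map K.subtype (LinearMap.range σ) := by
    rw [Submodule.span_le]
    rintro x ⟨i, rfl⟩
    exact ⟨σ (b i), ⟨b i, rfl⟩, rfl⟩
  have hdisj : Disjoint P (Submodule.map K.subtype (LinearMap.range σ)) := by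
    rw [Submodule.disjoint_def]
    rintro h hP ⟨y, ⟨z, rfl⟩, hy⟩
    have hy' : (σ z : H) = h := hy
    have hmem : σ z ∈ P' :=
      Submodule.mem_comap.mpr (by rw [Submodule.subtype_apply, hy']; exact hP)
    have hz : z = 0 := by
      have h0 : P'.mkQ (σ z) = 0 := (Submodule.Quotient.mk_eq_zero _).2 hmem
      rwa [hσsec] at h0
    rw [← hy', hz, map_zero, ZeroMemClass.coe_zero]
  have hvli : LinearIndependent ℤ v := by
    refine LinearIndependent.sum_type hli hwli ?_
    rw [Subtype.range_coe]
    exact (hdisj.mono_right hwle).mono_left le_rfl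
  have hrange : Set.range v = p ∪ Set.range w := by
    rw [hv, Set.Sum.elim_range, Subtype.range_coe]
  have hspan : Submodule.span ℤ (Set.range v) = K := by
    apply le_antisymm
    · rw [Submodule.span_le]
      rintro x ⟨j, rfl⟩
      cases j with
      | inl a => exact hPK (Submodule.subset_span a.2)
      | inr i => exact (σ (b i)).2
    · intro x hx
      set y : K := ⟨x, hx⟩ with hy
      set z : K := σ (P'.mkQ y) with hz
      have h1 : ((y - z : K) : H) ∈ P := by
        have : y - z ∈ P' := by
          rw [← Submodule.Quotient.mk_eq_zero P', ← Submodule.mkQ_apply, map_sub, hz,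
            hσsec, sub_self]
        rwa [hP'def, Submodule.mem_comap] at this
      have h2 : (z : H) ∈ Submodule.span ℤ (Set.range w) := by
        have hm : P'.mkQ y ∈ Submodule.span ℤ (Set.range b) := by
          rw [b.span_eq]; trivial
        have hm2 : z ∈ Submodule.map σ (Submodule.span ℤ (Set.range b)) :=
          ⟨P'.mkQ y, hm, rfl⟩
        rw [Submodule.map_span] at hm2
        have hm3 : (z : H) ∈ Submodule.map K.subtype
            (Submodule.span ℤ (σ '' Set.range b)) := ⟨z, hm2, rfl⟩
        rw [Submodule.map_span] at hm3
        refine Submodule.span_mono ?_ hm3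
        rintro u ⟨-, ⟨-, ⟨i, rfl⟩, rfl⟩, rfl⟩
        exact ⟨i, rfl⟩
      have hx' : x = ((y - z : K) : H) + (z : H) := by
        push_cast
        abel
      rw [hrange, Submodule.span_union, hx']
      exact Submodule.add_mem_sup h1 h2
  refine ⟨Set.range v, ⟨hvli.linearIndepOn_id, ?_⟩, fun x hx => ⟨Sum.inl ⟨x, hx⟩, rfl⟩⟩
  rw [← Submodule.span_int_eq_addSubgroupClosure, hspan]
  exact AddSubgroup.toIntSubmodule_toAddSubgroup (F α)
end

section
/- Let H be an ℵ₁-free abelian group and let K be a pure subgroup of H of finite torsion-free rank (for example, the purification ⟨F⟩_* of the subgroup generated by a finite subset F of H). Then H/K is ℵ₁-free. -/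
/-- A subgroup `K` of `H` is pure if whenever `n • h ∈ K` with `n ≠ 0`, already `h ∈ K`. -/
def IsPureSubgroup {H : Type*} [AddCommGroup H] (K : AddSubgroup H) : Prop :=
  ∀ n : ℤ, n ≠ 0 → ∀ h : H, n • h ∈ K → h ∈ K

section KeyLemma
open Finsupp

/-- Transfer `Module.Free ℤ` across the (unique) ℤ-module structures on a type. -/
lemma free_int_transfer {A : Type*} [AddCommGroup A] (i1 i2 : Module ℤ A)
    (h : @Module.Free ℤ A _ _ i1) : @Module.Free ℤ A _ _ i2 := by
  have : i1 = i2 := Subsingleton.elim (h := AddCommGroup.uniqueIntModule.instSubsingleton) i1 i2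
  exact this ▸ h

lemma quotFree_finsupp {ι : Type*} (N : Submodule ℤ (ι →₀ ℤ)) (hfg : N.FG)
    (hpure : ∀ n : ℤ, n ≠ 0 → ∀ x : (ι →₀ ℤ), n • x ∈ N → x ∈ N) :
    Module.Free ℤ ((ι →₀ ℤ) ⧸ N) := by
  classical
  obtain ⟨T, hT⟩ := hfg
  set s : Set ι := ↑(T.sup Finsupp.support) with hs
  have hNs : N ≤ Finsupp.supported ℤ ℤ s := by
    rw [← hT, Submodule.span_le]
    intro x hx
    rw [SetLike.mem_coe, Finsupp.mem_supported]
    intro i hi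
    exact Finset.mem_coe.mpr (Finset.mem_sup.mpr ⟨x, hx, hi⟩)
  set A := Finsupp.supported ℤ ℤ s with hA
  set N₀ : Submodule ℤ ↥A := N.comap A.subtype with hN₀
  set f : (ι →₀ ℤ) →ₗ[ℤ] (↥A ⧸ N₀) × (↥(sᶜ) →₀ ℤ) :=
    LinearMap.prod (N₀.mkQ.comp (Finsupp.restrictDom ℤ ℤ s))
      (Finsupp.lsubtypeDomain (s := sᶜ)) with hf
  have hker : LinearMap.ker f = N := by
    ext x
    simp only [hf, LinearMap.mem_ker, LinearMap.prod_apply, Prod.mk_eq_zero, LinearMap.comp_apply,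
      Submodule.mkQ_apply, Submodule.Quotient.mk_eq_zero, hN₀, Submodule.mem_comap,
      Finsupp.restrictDom_apply, Function.prod]
    constructor
    · rintro ⟨h1, h2⟩
      have hsupp : x ∈ A := by
        rw [hA, Finsupp.mem_supported']
        intro i hi
        have : Finsupp.subtypeDomain (· ∈ sᶜ) x ⟨i, hi⟩ = 0 := by
          rw [show Finsupp.lsubtypeDomain (R := ℤ) (s := sᶜ) x
              = Finsupp.subtypeDomain (· ∈ sᶜ) x from rfl] at h2
          rw [h2]; rfl
        simpa using this
      have : Finsupp.filter (· ∈ s) x = x := by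
        ext i
        by_cases hi : i ∈ s
        · simp [Finsupp.filter_apply, hi]
        · rw [Finsupp.filter_apply_neg _ _ hi]
          exact (((Finsupp.mem_supported' ℤ x).mp hsupp) i hi).symm
      rw [show (A.subtype ((Finsupp.restrictDom ℤ ℤ s) x) : ι →₀ ℤ)
          = Finsupp.filter (· ∈ s) x from rfl, this] at h1
      exact h1
    · intro hx
      have hxA : x ∈ A := hNs hx
      have : Finsupp.filter (· ∈ s) x = x := by
        ext i
        by_cases hi : i ∈ s
        · simp [Finsupp.filter_apply, hi]
        · rw [Finsupp.filter_apply_neg _ _ hi]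
          exact (((Finsupp.mem_supported' ℤ x).mp hxA) i hi).symm
      refine ⟨?_, ?_⟩
      · rw [show (A.subtype ((Finsupp.restrictDom ℤ ℤ s) x) : ι →₀ ℤ)
            = Finsupp.filter (· ∈ s) x from rfl, this]
        exact hx
      ext j
      exact ((Finsupp.mem_supported' ℤ x).mp hxA) j j.2
  have hsurj : Function.Surjective f := by
    rintro ⟨a, z⟩
    obtain ⟨y, rfl⟩ := N₀.mkQ_surjective a
    refine ⟨(y : ι →₀ ℤ) + Finsupp.mapDomain (Subtype.val : ↥(sᶜ) → ι) z, ?_⟩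
    have hyA : ∀ i ∉ s, (y : ι →₀ ℤ) i = 0 := (Finsupp.mem_supported' ℤ _).mp y.2
    have hzf : ∀ i ∈ s, Finsupp.mapDomain (Subtype.val : ↥(sᶜ) → ι) z i = 0 := by
      intro i hi
      refine Finsupp.mapDomain_notin_range _ _ ?_
      rintro ⟨⟨j, hj⟩, rfl⟩
      exact hj hi
    have hre : (Finsupp.restrictDom ℤ ℤ s) ((y : ι →₀ ℤ) + Finsupp.mapDomain
        (Subtype.val : ↥(sᶜ) → ι) z) = y := by
      apply Subtype.ext
      rw [Finsupp.restrictDom_apply]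
      ext i
      by_cases hi : i ∈ s
      · rw [Finsupp.filter_apply_pos _ _ hi, Finsupp.add_apply, hzf i hi, add_zero]
      · rw [Finsupp.filter_apply_neg _ _ hi, (hyA i hi).symm]
    have hsub : Finsupp.lsubtypeDomain (R := ℤ) (s := sᶜ)
        ((y : ι →₀ ℤ) + Finsupp.mapDomain (Subtype.val : ↥(sᶜ) → ι) z) = z := by
      ext j
      rw [show (Finsupp.lsubtypeDomain (R := ℤ) (s := sᶜ)
            ((y : ι →₀ ℤ) + Finsupp.mapDomain (Subtype.val : ↥(sᶜ) → ι) z))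
          = Finsupp.subtypeDomain (· ∈ sᶜ) ((y : ι →₀ ℤ) + Finsupp.mapDomain
            (Subtype.val : ↥(sᶜ) → ι) z) from rfl]
      rw [Finsupp.subtypeDomain_apply, Finsupp.add_apply, hyA ↑j j.2,
        Finsupp.mapDomain_apply Subtype.val_injective, zero_add]
    rw [hf]
    simp only [LinearMap.prod_apply, Function.prod, LinearMap.comp_apply]
    rw [hre, hsub]
  have hsf : Finite ↥s := by
    rw [hs]; exact (T.sup Finsupp.support).finite_toSet
  have hMF : Module.Finite ℤ ↥A :=
    Module.Finite.equiv (Finsupp.supportedEquivFinsupp (M := ℤ) (R := ℤ) s).symm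
  have hNZ : NoZeroSMulDivisors ℤ (↥A ⧸ N₀) := by
    refine ⟨fun {n x} h => ?_⟩
    by_cases hn : n = 0
    · exact Or.inl hn
    · right
      obtain ⟨y, rfl⟩ := N₀.mkQ_surjective x
      rw [← map_smul, Submodule.mkQ_apply, Submodule.Quotient.mk_eq_zero] at h
      have h2 : n • (y : ι →₀ ℤ) ∈ N := h
      have h3 : (y : ι →₀ ℤ) ∈ N := hpure n hn _ h2
      rw [Submodule.mkQ_apply, Submodule.Quotient.mk_eq_zero]
      exact h3
  have hfree : Module.Free ℤ (↥A ⧸ N₀) := Module.free_of_finite_type_torsion_free'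
  exact Module.Free.of_equiv
    ((Submodule.quotEquivOfEq _ _ hker.symm).trans (f.quotKerEquivOfSurjective hsurj)).symm

end KeyLemma

lemma quotFree {M : Type*} [AddCommGroup M] [Module ℤ M] [Module.Free ℤ M]
    (N : Submodule ℤ M) (hfg : N.FG)
    (hpure : ∀ n : ℤ, n ≠ 0 → ∀ x : M, n • x ∈ N → x ∈ N) :
    Module.Free ℤ (M ⧸ N) := by
  classical
  set e : M ≃ₗ[ℤ] (Module.Free.ChooseBasisIndex ℤ M →₀ ℤ) :=
    (Module.Free.chooseBasis ℤ M).repr with he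
  set N' := N.map (e.toLinearMap : M →ₗ[ℤ] (Module.Free.ChooseBasisIndex ℤ M →₀ ℤ)) with hN'
  have hpure' : ∀ n : ℤ, n ≠ 0 → ∀ x, n • x ∈ N' → x ∈ N' := by
    intro n hn x hx
    rw [hN', Submodule.mem_map_equiv] at hx ⊢
    rw [e.symm.map_smul] at hx
    refine hpure n hn _ ?_
    rw [← Int.cast_smul_eq_zsmul ℤ n, Int.cast_id]
    exact hx
  have h1 : Module.Free ℤ ((Module.Free.ChooseBasisIndex ℤ M →₀ ℤ) ⧸ N') :=
    quotFree_finsupp N' (hfg.map _) hpure'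
  letI iQ : Module ℤ (M ⧸ N) := Submodule.Quotient.module N
  exact free_int_transfer iQ _
    (Module.Free.of_equiv (Submodule.Quotient.equiv N N' e rfl).symm)

lemma free_submodule_of_countable {H : Type*} [AddCommGroup H] (hH : Aleph1Free H)
    (M : Submodule ℤ H) (hc : Countable ↥M) : Module.Free ℤ ↥M := by
  have h := hH M.toAddSubgroup hc
  exact free_int_transfer _ _ h

/-- If `H` is ℵ₁-free and `K` is a pure subgroup of finite torsion-free
rank, then `H/K` is ℵ₁-free. -/
theorem aleph1Free_quotient_by_pure_finite_rank {H : Type*} [AddCommGroup H]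
    (hH : Aleph1Free H) (K : AddSubgroup H) (hpure : IsPureSubgroup K)
    (hrank : Module.rank ℤ K < Cardinal.aleph0) :
    Aleph1Free (H ⧸ K) := by
  intro L hL
  classical
  have hsurj : Function.Surjective (QuotientAddGroup.mk' K) :=
    QuotientAddGroup.mk'_surjective K
  have hex : ∀ l : ↥L, ∃ x : H, QuotientAddGroup.mk' K x = ↑l := fun l => hsurj ↑l
  choose g hgspec using hex
  set M : Submodule ℤ H := Submodule.span ℤ (Set.range g) with hM
  have hMc : Countable ↥M := by rw [hM]; infer_instance
  have hMfree : Module.Free ℤ ↥M := free_submodule_of_countable hH M hMc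
  set q : H →ₗ[ℤ] (H ⧸ K) := (QuotientAddGroup.mk' K).toIntLinearMap with hq
  set φ : ↥M →ₗ[ℤ] (H ⧸ K) := q.comp M.subtype with hφ
  have hker_iff : ∀ x : ↥M, φ x = 0 ↔ (x : H) ∈ K := by
    intro x
    rw [hφ, LinearMap.comp_apply]
    exact QuotientAddGroup.eq_zero_iff _
  have hrange : LinearMap.range φ = AddSubgroup.toIntSubmodule L := by
    apply le_antisymm
    · rw [hφ, LinearMap.range_comp, Submodule.range_subtype, hM, Submodule.map_span,
        Submodule.span_le]
      rintro _ ⟨_, ⟨l, rfl⟩, rfl⟩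
      have : q (g l) = ↑l := hgspec l
      rw [this]
      exact l.2
    · intro x hx
      exact ⟨⟨g ⟨x, hx⟩, Submodule.subset_span ⟨⟨x, hx⟩, rfl⟩⟩, hgspec ⟨x, hx⟩⟩
  set N := LinearMap.ker φ with hN
  have hNpure : ∀ n : ℤ, n ≠ 0 → ∀ x : ↥M, n • x ∈ N → x ∈ N := by
    intro n hn x hx
    rw [hN, LinearMap.mem_ker, hker_iff] at hx ⊢
    have hcoe : ((n • x : ↥M) : H) = n • (x : H) := rfl
    rw [hcoe] at hx
    exact hpure n hn _ hx
  have hNc : Countable ↥N := by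
    have : Countable ↥M := hMc
    exact Subtype.countable
  have hNfree : Module.Free ℤ ↥N := by
    have e := Submodule.equivMapOfInjective M.subtype M.injective_subtype N
    have hc2 : Countable ↥(Submodule.map M.subtype N) := Countable.of_equiv _ e.toEquiv
    exact Module.Free.of_equiv' (free_submodule_of_countable hH _ hc2) e.symm
  have hNrank : Module.rank ℤ ↥N < Cardinal.aleph0 := by
    have hmem : ∀ x : ↥N, (M.subtype.comp N.subtype) x ∈ AddSubgroup.toIntSubmodule K := by
      intro x
      have h2 : φ ↑x = 0 := x.2
      exact (hker_iff _).mp h2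
    set j := LinearMap.codRestrict (AddSubgroup.toIntSubmodule K)
      (M.subtype.comp N.subtype) hmem with hj
    have hjinj : Function.Injective j := by
      intro a b hab
      have : (M.subtype.comp N.subtype) a = (M.subtype.comp N.subtype) b := by
        have := congrArg Subtype.val hab
        exact this
      exact Subtype.ext (Subtype.ext this)
    have h1 : Module.rank ℤ ↥N ≤ Module.rank ℤ ↥(AddSubgroup.toIntSubmodule K) :=
      j.rank_le_of_injective hjinj
    exact lt_of_le_of_lt h1 hrank
  have hNfin : Module.Finite ℤ ↥N := by
    have hb := Module.Free.rank_eq_card_chooseBasisIndex ℤ ↥N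
    rw [hb] at hNrank
    have : Finite (Module.Free.ChooseBasisIndex ℤ ↥N) :=
      Cardinal.lt_aleph0_iff_finite.mp hNrank
    exact Module.Finite.of_basis (Module.Free.chooseBasis ℤ ↥N)
  have hNfg : N.FG := by
    rw [← Module.Finite.iff_fg]
    exact hNfin
  have hQ : Module.Free ℤ (↥M ⧸ N) := quotFree N hNfg hNpure
  have e2 : (↥M ⧸ N) ≃ₗ[ℤ] ↥(AddSubgroup.toIntSubmodule L) :=
    (φ.quotKerEquivRange).trans (LinearEquiv.ofEq _ _ hrange)
  have hfinal : Module.Free ℤ ↥(AddSubgroup.toIntSubmodule L) := Module.Free.of_equiv e2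
  exact free_int_transfer _ _ hfinal
end

section
/- Let H be an ℵ₁-free abelian group of cardinality ℵ₁. Then there exists a sequence (e_i)_{i∈ℕ} of elements of H such that for every j ∈ ℕ the finite set q_j = {e_0, e_1, …, e_j} is linearly independent over ℤ, the subgroup ⟨q_j⟩ is pure in H, and H/⟨q_j⟩ is ℵ₁-free; in particular, (q_j)_{j∈ℕ} is a strictly descending sequence in the poset (P_pb, ≤). -/
section Aux

open Submodule Set

variable {H : Type*} [AddCommGroup H]

lemma countable_span_set {s : Set H} (hs : s.Countable) :
    ((span ℤ s : Submodule ℤ H) : Set H).Countable := by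
  haveI := hs.to_subtype
  have h1 : span ℤ s = LinearMap.range (Finsupp.linearCombination ℤ ((↑) : s → H)) := by
    rw [Finsupp.range_linearCombination, Subtype.range_coe]
  rw [h1, LinearMap.coe_range]
  exact countable_range _

lemma countable_closure_set {s : Set H} (hs : s.Countable) :
    ((AddSubgroup.closure s : AddSubgroup H) : Set H).Countable := by
  rw [← Submodule.span_int_eq_addSubgroupClosure]
  exact countable_span_set hs

lemma countable_closure {s : Set H} (hs : s.Countable) :
    Countable (AddSubgroup.closure s) :=
  (countable_closure_set hs).to_subtype

lemma nzsmul_of_aleph1Free (hH : Aleph1Free H) : NoZeroSMulDivisors ℤ H := by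
  refine ⟨fun {n x} h => ?_⟩
  by_contra hc
  push_neg at hc
  obtain ⟨hn, hx⟩ := hc
  set K := AddSubgroup.closure ({x} : Set H) with hK
  haveI : Countable K := countable_closure (countable_singleton x)
  haveI := hH K inferInstance
  have hxK : x ∈ K := AddSubgroup.subset_closure (mem_singleton_iff.2 rfl)
  have h0 : n • (⟨x, hxK⟩ : K) = 0 := Subtype.ext h
  rcases smul_eq_zero.1 h0 with h1 | h1
  · exact hn h1
  · exact hx (by simpa [Subtype.ext_iff] using h1)

/-- purification of a subgroup -/
def pur (K : AddSubgroup H) : AddSubgroup H where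
  carrier := {h | ∃ n : ℤ, n ≠ 0 ∧ n • h ∈ K}
  zero_mem' := ⟨1, one_ne_zero, by simpa using K.zero_mem⟩
  add_mem' := by
    rintro a b ⟨n, hn, ha⟩ ⟨m, hm, hb⟩
    refine ⟨n * m, mul_ne_zero hn hm, ?_⟩
    have ha' : (n * m) • a = m • (n • a) := by rw [mul_comm, mul_smul]
    have hb' : (n * m) • b = n • (m • b) := by rw [mul_smul]
    rw [smul_add, ha', hb']
    exact K.add_mem (K.zsmul_mem ha m) (K.zsmul_mem hb n)
  neg_mem' := by
    rintro a ⟨n, hn, ha⟩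
    exact ⟨n, hn, by simpa using K.neg_mem ha⟩

lemma mem_pur {K : AddSubgroup H} {h : H} :
    h ∈ pur K ↔ ∃ n : ℤ, n ≠ 0 ∧ n • h ∈ K := Iff.rfl

lemma le_pur (K : AddSubgroup H) : K ≤ pur K :=
  fun x hx => ⟨1, one_ne_zero, by simpa using hx⟩

lemma isPure_pur (K : AddSubgroup H) : IsPureSubgroup (pur K) := by
  rintro n hn h ⟨m, hm, hmn⟩
  exact ⟨m * n, mul_ne_zero hm hn, by rwa [mul_smul]⟩

lemma countable_pur [NoZeroSMulDivisors ℤ H] (K : AddSubgroup H) [Countable K] :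
    Countable (pur K) := by
  have f : ∀ y : pur K, ∃ n : ℤ, n ≠ 0 ∧ n • (y : H) ∈ K := fun y => y.2
  choose n hn hmem using f
  have hinj : Function.Injective (fun y : pur K => ((n y, ⟨n y • (y : H), hmem y⟩) : ℤ × K)) := by
    intro y z h
    have h1 : n y = n z := congrArg Prod.fst h
    have h2 : n y • (y : H) = n z • (z : H) := congrArg (Subtype.val ∘ Prod.snd) h
    rw [← h1] at h2
    exact Subtype.ext (smul_right_injective H (hn y) h2)
  exact Function.Injective.countable hinj

lemma indep_insert [NoZeroSMulDivisors ℤ H] {s : Set H}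
    (hs : LinearIndependent ℤ ((↑) : s → H)) {x : H}
    (hx : ∀ c : ℤ, c ≠ 0 → c • x ∉ span ℤ s) :
    LinearIndependent ℤ ((↑) : ↥(insert x s) → H) := by
  have hx0 : x ≠ 0 := fun h => hx 1 one_ne_zero (by simp [h])
  rw [← Set.union_singleton]
  refine LinearIndepOn.id_union hs (LinearIndepOn.singleton (v := id) hx0) ?_
  rw [Submodule.disjoint_def]
  intro y hy hy'
  rcases Submodule.mem_span_singleton.1 hy' with ⟨c, rfl⟩
  rcases eq_or_ne c 0 with rfl | hc
  · simp
  · exact absurd hy (hx c hc)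

end Aux

section Core

open Submodule Set

variable {R : Type*} [CommRing R] [IsDomain R] [IsPrincipalIdealRing R]
variable {M : Type*} [AddCommGroup M] [Module R M]

lemma core_compl [Module.Free R M] {N : Submodule R M} (hfg : N.FG)
    (hpure : ∀ n : R, n ≠ 0 → ∀ x : M, n • x ∈ N → x ∈ N) :
    ∃ C : Submodule R M, Nonempty ((M ⧸ N) ≃ₗ[R] C) := by
  classical
  let ι := Module.Free.ChooseBasisIndex R M
  let c : Module.Basis ι R M := Module.Free.chooseBasis R M
  obtain ⟨t, ht⟩ := hfg
  let s : Finset ι := t.sup (fun x => (c.repr x).support)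
  set M₀ : Submodule R M := span R (c '' ↑s) with hM₀
  have hNM₀ : N ≤ M₀ := by
    rw [← ht, span_le]
    intro x hx
    exact c.mem_span_image.2 (by exact_mod_cast Finset.le_sup (f := fun x => (c.repr x).support) hx)
  set N₀ : Submodule R M₀ := N.comap M₀.subtype with hN₀def
  have hN₀ : ∀ y : M₀, y ∈ N₀ ↔ (y : M) ∈ N := fun y => Iff.rfl
  haveI : Module.Finite R M₀ :=
    Module.Finite.iff_fg.2 (fg_span (Set.Finite.image _ (Finset.finite_toSet s)))
  haveI : Module.Finite R (M₀ ⧸ N₀) :=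
    Module.Finite.of_surjective N₀.mkQ (Submodule.mkQ_surjective N₀)
  haveI : NoZeroSMulDivisors R (M₀ ⧸ N₀) := by
    refine ⟨fun {n z} h => ?_⟩
    rcases eq_or_ne n 0 with rfl | hn
    · exact Or.inl rfl
    right
    obtain ⟨x, rfl⟩ := Submodule.Quotient.mk_surjective N₀ z
    rw [← Submodule.Quotient.mk_smul, Submodule.Quotient.mk_eq_zero] at h
    rw [Submodule.Quotient.mk_eq_zero]
    have hnx : n • (x : M) ∈ N := by
      have : ((n • x : M₀) : M) ∈ N := h
      rwa [Submodule.coe_smul] at this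
    exact (hN₀ x).2 (hpure n hn _ hnx)
  haveI : Module.Free R (M₀ ⧸ N₀) := Module.free_of_finite_type_torsion_free'
  obtain ⟨σ, hσ⟩ := Module.projective_lifting_property N₀.mkQ (LinearMap.id)
    (Submodule.mkQ_surjective N₀)
  let u : ι → M := fun i => if i ∈ s then c i else 0
  have hu : ∀ i, u i ∈ M₀ := by
    intro i
    by_cases hi : i ∈ s
    · simpa [u, hi] using subset_span (Set.mem_image_of_mem c hi)
    · simp [u, hi]
  let π' : M →ₗ[R] M := (Finsupp.linearCombination R u).comp (c.repr : M ≃ₗ[R] (ι →₀ R)).toLinearMap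
  have hπ'apply : ∀ x : M, π' x = (c.repr x).sum (fun i a => a • u i) := by
    intro x
    show Finsupp.linearCombination R u (c.repr x) = _
    rw [Finsupp.linearCombination_apply]
  have hπ'mem : ∀ x : M, π' x ∈ M₀ := by
    intro x
    rw [hπ'apply]
    refine Submodule.sum_mem _ (fun i _ => ?_)
    dsimp only
    exact Submodule.smul_mem _ _ (hu i)
  have hπ'id : ∀ y : M₀, π' (y : M) = (y : M) := by
    intro y
    have hsupp : ↑(c.repr (y : M)).support ⊆ (s : Set ι) := c.mem_span_image.1 y.2
    rw [hπ'apply]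
    have h2 : (c.repr (y : M)).sum (fun i a => a • u i)
        = (c.repr (y : M)).sum (fun i a => a • c i) := by
      refine Finset.sum_congr rfl ?_
      intro i hi
      have his : i ∈ s := hsupp hi
      simp [u, his]
    rw [h2, ← Finsupp.linearCombination_apply]
    exact c.linearCombination_repr (y : M)
  let π := π'.codRestrict M₀ hπ'mem
  let ρ := (LinearMap.id : M₀ →ₗ[R] M₀) - σ.comp N₀.mkQ
  have hρ : ∀ y : M₀, ρ y ∈ N₀ := by
    intro y
    have h1 : N₀.mkQ (ρ y) = 0 := by
      simp only [ρ, LinearMap.sub_apply, LinearMap.id_apply, LinearMap.comp_apply, map_sub]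
      have h2 := LinearMap.congr_fun hσ (N₀.mkQ y)
      simp only [LinearMap.comp_apply, LinearMap.id_apply] at h2
      rw [h2, sub_self]
    rwa [Submodule.mkQ_apply, Submodule.Quotient.mk_eq_zero] at h1
  have hρN : ∀ y : M₀, (y : M) ∈ N → ρ y = y := by
    intro y hy
    have h0 : N₀.mkQ y = 0 := by
      rw [Submodule.mkQ_apply, Submodule.Quotient.mk_eq_zero]
      exact hy
    simp only [ρ, LinearMap.sub_apply, LinearMap.id_apply, LinearMap.comp_apply, h0, map_zero,
      sub_zero]
  let r₁ := LinearMap.codRestrict N (M₀.subtype.comp ρ) (fun y => hρ y)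
  let r := r₁.comp π
  have hr : ∀ x : N, r (x : M) = x := by
    intro x
    have hxM₀ : (x : M) ∈ M₀ := hNM₀ x.2
    have hπx : π (x : M) = ⟨(x : M), hxM₀⟩ := Subtype.ext (hπ'id ⟨(x : M), hxM₀⟩)
    have hρx := hρN ⟨(x : M), hxM₀⟩ x.2
    apply Subtype.ext
    show ((ρ (π (x : M)) : M₀) : M) = (x : M)
    rw [hπx, hρx]
  have hcompl : IsCompl N (LinearMap.ker r) := LinearMap.isCompl_of_proj (f := r) hr
  exact ⟨LinearMap.ker r, ⟨Submodule.quotientEquivOfIsCompl N (LinearMap.ker r) hcompl⟩⟩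

end Core

section Quot

open Submodule Set

variable {H : Type*} [AddCommGroup H]

lemma aleph1Free_quotient (hH : Aleph1Free H) {T : Set H} (hT : T.Finite)
    (hpure : IsPureSubgroup (AddSubgroup.closure T)) :
    Aleph1Free (H ⧸ AddSubgroup.closure T) := by
  classical
  set K := AddSubgroup.closure T with hK
  intro Q hQ
  let π : H →+ H ⧸ K := QuotientAddGroup.mk' K
  have hπsurj : Function.Surjective π := QuotientAddGroup.mk'_surjective K
  set L := AddSubgroup.comap π Q with hLdef
  have hKL : K ≤ L := by
    intro x hx
    show π x ∈ Q
    have h0 : π x = 0 := (QuotientAddGroup.eq_zero_iff x).2 hx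
    rw [h0]; exact Q.zero_mem
  haveI hKc : Countable K := countable_closure hT.countable
  haveI hLc : Countable L := by
    choose ρ hρ using (fun q : Q => hπsurj (q : H ⧸ K))
    let qf : L → Q := fun x => ⟨π (x : H), x.2⟩
    let kf : L → K := fun x => ⟨(x : H) - ρ (qf x), by
      refine (QuotientAddGroup.eq_zero_iff _).1 ?_
      show π ((x : H) - ρ (qf x)) = 0
      have : π ((x : H) - ρ (qf x)) = π (x : H) - π (ρ (qf x)) := map_sub π _ _
      rw [this, hρ (qf x)]
      show π (x : H) - (qf x : H ⧸ K) = 0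
      simp [qf]⟩
    have hinj : Function.Injective (fun x : L => ((qf x, kf x) : Q × K)) := by
      intro x y hxy
      have h1 : qf x = qf y := congrArg Prod.fst hxy
      have h2 : ((kf x : H)) = ((kf y : H)) := congrArg (fun p => ((p.2 : K) : H)) hxy
      have h3 : (x : H) - ρ (qf x) = (y : H) - ρ (qf y) := h2
      rw [h1] at h3
      exact Subtype.ext (by have := sub_left_injective h3; exact this)
    exact Function.Injective.countable hinj
  haveI freeL : Module.Free ℤ L := hH L hLc
  let Lsub : ↥L →ₗ[ℤ] H := L.subtype.toIntLinearMap
  set N : Submodule ℤ ↥L := AddSubgroup.toIntSubmodule (K.comap L.subtype) with hNdef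
  have hNmem : ∀ x : ↥L, x ∈ N ↔ (x : H) ∈ K := fun x => Iff.rfl
  have hKspan : ∀ h : H, h ∈ K ↔ h ∈ span ℤ T := by
    intro h
    rw [hK, ← Submodule.span_int_eq_addSubgroupClosure]
    exact Iff.rfl
  let T' : Set ↥L := (Subtype.val) ⁻¹' T
  have hT' : T'.Finite := hT.preimage Subtype.val_injective.injOn
  have hNspan : N = span ℤ T' := by
    apply le_antisymm
    · intro x hx
      have hx' : (x : H) ∈ span ℤ T := (hKspan _).1 ((hNmem x).1 hx)
      have hle : span ℤ T ≤ Submodule.map Lsub (span ℤ T') := by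
        have himg : Lsub '' T' = T := by
          ext y
          constructor
          · rintro ⟨z, hz, rfl⟩
            exact hz
          · intro hy
            have hyL : y ∈ L := hKL (AddSubgroup.subset_closure hy)
            exact ⟨⟨y, hyL⟩, hy, rfl⟩
        rw [Submodule.map_span, himg]
      obtain ⟨y, hy, hyx⟩ := hle hx'
      have hyx' : y = x := Subtype.ext hyx
      rwa [hyx'] at hy
    · rw [span_le]
      intro x hx
      exact (hNmem ⟨_, _⟩).2 (AddSubgroup.subset_closure hx)
  have hNfg : N.FG := by
    rw [hNspan]
    exact fg_span hT'
  have hNpure : ∀ n : ℤ, n ≠ 0 → ∀ x : ↥L, n • x ∈ N → x ∈ N := by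
    intro n hn x hx
    refine (hNmem x).2 (hpure n hn (x : H) ?_)
    have := (hNmem _).1 hx
    exact this
  obtain ⟨C, ⟨eC⟩⟩ := core_compl (R := ℤ) (M := ↥L) hNfg hNpure
  let ψ : ↥L →+ ↥Q := (π.comp L.subtype).codRestrict Q (fun x => x.2)
  have hψsurj : Function.Surjective ψ := by
    intro q
    obtain ⟨h, hh⟩ := hπsurj (q : H ⧸ K)
    refine ⟨⟨h, show π h ∈ Q from hh ▸ q.2⟩, Subtype.ext hh⟩
  let ψl : ↥L →ₗ[ℤ] ↥Q := ψ.toIntLinearMap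
  have hψl : ∀ x : ↥L, (ψl x : H ⧸ K) = π (x : H) := fun _ => rfl
  have hker : LinearMap.ker ψl = N := by
    ext x
    simp only [LinearMap.mem_ker]
    constructor
    · intro hx
      have h0 : π (x : H) = 0 := by rw [← hψl x, hx]; rfl
      exact (hNmem x).2 ((QuotientAddGroup.eq_zero_iff _).1 h0)
    · intro hx
      apply Subtype.ext
      show (ψl x : H ⧸ K) = 0
      rw [hψl x]
      exact (QuotientAddGroup.eq_zero_iff _).2 ((hNmem x).1 hx)
  have hψlsurj : Function.Surjective ψl := hψsurj
  let e1 : (↥L ⧸ N) ≃ₗ[ℤ] ↥Q :=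
    (Submodule.quotEquivOfEq _ _ hker.symm).trans (ψl.quotKerEquivOfSurjective hψlsurj)
  let eQC : ↥Q ≃+ ↥C := (e1.symm.trans eC).toAddEquiv
  let φ : ↥C →+ H := L.subtype.comp C.subtype.toAddMonoidHom
  have hφinj : Function.Injective φ := by
    intro a b hab
    apply Subtype.ext
    apply Subtype.ext
    exact hab
  haveI hCc : Countable ↥C := inferInstance
  let eCR : ↥C ≃+ ↥(φ.range) := AddMonoidHom.ofInjective hφinj
  haveI hRc : Countable ↥(φ.range) := Countable.of_equiv ↥C eCR.toEquiv
  haveI freeR : Module.Free ℤ ↥(φ.range) := hH _ hRc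
  exact Module.Free.of_equiv ((eCR.symm.trans eQC.symm).toIntLinearEquiv)

end Quot


section Main

open Submodule Set

theorem strict_descending_chain_in_Ppb' {H : Type*} [AddCommGroup H]
    (hH : Aleph1Free H) (hcard : Cardinal.mk H = Cardinal.aleph 1) :
    ∃ e : ℕ → H,
      (∀ j : ℕ,
        LinearIndependent ℤ ((↑) : (e '' Set.Iic j : Set H) → H) ∧
        IsPureSubgroup (AddSubgroup.closure (e '' Set.Iic j)) ∧
        Aleph1Free (H ⧸ AddSubgroup.closure (e '' Set.Iic j))) ∧
      (∀ j : ℕ, (e '' Set.Iic j : Set H) ⊂ e '' Set.Iic (j + 1)) := by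
  classical
  haveI nz : NoZeroSMulDivisors ℤ H := nzsmul_of_aleph1Free hH
  have hKs : ∀ (s : Set H) (x : H), x ∈ AddSubgroup.closure s ↔ x ∈ span ℤ s := by
    intro s x
    rw [← Submodule.span_int_eq_addSubgroupClosure]
    exact Iff.rfl
  -- step 1: we can always escape the purification of a countable subgroup
  have exists_out : ∀ t : Set H, t.Countable → ∃ x : H, x ∉ pur (AddSubgroup.closure t) := by
    intro t ht
    by_contra hcon
    push_neg at hcon
    haveI : Countable (AddSubgroup.closure t) := countable_closure ht
    haveI hpc := countable_pur (H := H) (AddSubgroup.closure t)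
    have hcset : ((pur (AddSubgroup.closure t) : AddSubgroup H) : Set H).Countable :=
      Set.countable_coe_iff.1 hpc
    have huniv : (Set.univ : Set H).Countable := hcset.mono (fun x _ => hcon x)
    haveI : Countable H := Set.countable_univ_iff.1 huniv
    have h1 : Cardinal.mk H ≤ Cardinal.aleph0 := Cardinal.mk_le_aleph0
    rw [hcard] at h1
    exact absurd h1 (not_le.2 (by simpa using Cardinal.aleph0_lt_aleph_one))
  -- step 2: a strictly increasing chain of countable independent sets
  have hF : ∀ p : {t : Set H // t.Countable ∧ LinearIndependent ℤ ((↑) : t → H)},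
      ∃ q : {t : Set H // t.Countable ∧ LinearIndependent ℤ ((↑) : t → H)},
        p.1 ⊆ q.1 ∧ ∃ x, x ∈ q.1 ∧ x ∉ p.1 := by
    rintro ⟨t, ht, hli⟩
    obtain ⟨x, hx⟩ := exists_out t ht
    have hxnot : x ∉ t := fun h => hx (le_pur _ (AddSubgroup.subset_closure h))
    have hind : LinearIndependent ℤ ((↑) : ↥(insert x t) → H) := by
      refine indep_insert hli ?_
      intro c hc hmem
      exact hx ⟨c, hc, (hKs t (c • x)).2 hmem⟩
    exact ⟨⟨insert x t, ht.insert x, hind⟩, Set.subset_insert x t,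
      x, Set.mem_insert x t, hxnot⟩
  choose F hFsub hFpt using hF
  let p₀ : {t : Set H // t.Countable ∧ LinearIndependent ℤ ((↑) : t → H)} :=
    ⟨(∅ : Set H), Set.countable_empty, linearIndependent_empty ℤ H⟩
  let g : ℕ → {t : Set H // t.Countable ∧ LinearIndependent ℤ ((↑) : t → H)} :=
    fun n => F^[n] p₀
  have hgsucc : ∀ n, g (n + 1) = F (g n) := fun n => Function.iterate_succ_apply' F n p₀
  have hgmono : Monotone (fun n => (g n).1) := by
    apply monotone_nat_of_le_succ
    intro n
    rw [hgsucc n]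
    exact hFsub (g n)
  -- the new points
  let xs : ℕ → H := fun n => (hFpt (g n)).choose
  have hxs_mem : ∀ n, xs n ∈ (g (n + 1)).1 := by
    intro n
    rw [hgsucc n]
    exact (hFpt (g n)).choose_spec.1
  have hxs_not : ∀ n, xs n ∉ (g n).1 := fun n => (hFpt (g n)).choose_spec.2
  let S : Set H := ⋃ n, (g n).1
  have hScount : S.Countable := Set.countable_iUnion (fun n => (g n).2.1)
  have hSli : LinearIndependent ℤ ((↑) : S → H) :=
    linearIndepOn_iUnion_of_directed (v := id) (hgmono.directed_le) (fun n => (g n).2.2)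
  have hxs_S : ∀ n, xs n ∈ S := fun n => Set.mem_iUnion.2 ⟨n + 1, hxs_mem n⟩
  let jmap : ℕ → ↥S := fun n => ⟨xs n, hxs_S n⟩
  have hjinj : Function.Injective jmap := by
    intro m n hmn
    by_contra hne
    rcases Nat.lt_or_ge m n with h | h
    · have h1 : xs m ∈ (g n).1 := hgmono (Nat.succ_le_of_lt h) (hxs_mem m)
      have h2 : xs m = xs n := congrArg Subtype.val hmn
      rw [h2] at h1
      exact hxs_not n h1
    · have hlt : n < m := lt_of_le_of_ne h (fun hnm => hne hnm.symm)
      have h1 : xs n ∈ (g m).1 := hgmono (Nat.succ_le_of_lt hlt) (hxs_mem n)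
      have h2 : xs m = xs n := congrArg Subtype.val hmn
      rw [← h2] at h1
      exact hxs_not m h1
  -- step 3: the countable pure subgroup P
  let P : AddSubgroup H := pur (AddSubgroup.closure S)
  haveI : Countable (AddSubgroup.closure S) := countable_closure hScount
  haveI hPc : Countable P := countable_pur (AddSubgroup.closure S)
  have hPpure : IsPureSubgroup P := isPure_pur _
  have hSP : S ⊆ (P : Set H) := fun x hx => le_pur _ (AddSubgroup.subset_closure hx)
  haveI freeP : Module.Free ℤ P := hH P hPc
  let ι := Module.Free.ChooseBasisIndex ℤ ↥P
  let b : Module.Basis ι ℤ ↥P := Module.Free.chooseBasis ℤ ↥P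
  let Psub : ↥P →ₗ[ℤ] H := P.subtype.toIntLinearMap
  have hPsub_inj : Function.Injective Psub := Subtype.val_injective
  -- ι is infinite
  haveI : Infinite ι := by
    by_contra hfin
    haveI : Finite ι := not_infinite_iff_finite.1 hfin
    haveI : Module.Finite ℤ ↥P := Module.Finite.of_basis b
    have hrank : Module.rank ℤ ↥P < Cardinal.aleph0 := Module.rank_lt_aleph0 ℤ ↥P
    let w : ℕ → ↥P := fun n => ⟨xs n, hSP (hxs_S n)⟩
    have hw : LinearIndependent ℤ w := by
      apply LinearIndependent.of_comp Psub
      have hcomp : Psub ∘ w = ((↑) : S → H) ∘ jmap := rfl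
      rw [hcomp]
      exact hSli.comp jmap hjinj
    exact absurd hw.aleph0_le_rank (not_le.2 hrank)
  let emb : ℕ ↪ ι := Infinite.natEmbedding ι
  let e : ℕ → H := fun n => ((b (emb n) : ↥P) : H)
  have heinj : Function.Injective e := by
    intro m n hmn
    exact emb.injective (b.injective (Subtype.val_injective hmn))
  have hLIe : LinearIndependent ℤ e := by
    have h1 : LinearIndependent ℤ (b ∘ emb) := b.linearIndependent.comp emb emb.injective
    have h2 := h1.map' Psub (LinearMap.ker_eq_bot.2 hPsub_inj)
    exact h2
  refine ⟨e, fun j => ?_, fun j => ?_⟩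
  · -- the three properties
    have hLIset : LinearIndependent ℤ ((↑) : ↥(e '' Set.Iic j) → H) := by
      have h1 : LinearIndependent ℤ (fun i : ↥(Set.Iic j) => e i) :=
        hLIe.comp _ Subtype.val_injective
      have h2 := (linearIndepOn_id_range_iff h1.injective).2 h1
      have h3 : Set.range (fun i : ↥(Set.Iic j) => e (i : ℕ)) = e '' Set.Iic j :=
        (Set.image_eq_range e (Set.Iic j)).symm
      rwa [h3] at h2
    have hset : e '' Set.Iic j = ⇑Psub '' (⇑b '' (⇑emb '' Set.Iic j)) := by
      rw [← Set.image_comp, ← Set.image_comp]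
      rfl
    have hpurj : IsPureSubgroup (AddSubgroup.closure (e '' Set.Iic j)) := by
      intro n hn h hmem
      have hms : n • h ∈ span ℤ (e '' Set.Iic j) := (hKs _ _).1 hmem
      have hmap : span ℤ (e '' Set.Iic j)
          = Submodule.map Psub (span ℤ (⇑b '' (⇑emb '' Set.Iic j))) := by
        rw [hset, Submodule.map_span]
      rw [hmap] at hms
      obtain ⟨y, hy, hyx⟩ := hms
      have hnhP : n • h ∈ P := by rw [← hyx]; exact y.2
      have hhP : h ∈ P := hPpure n hn h hnhP
      set h' : ↥P := ⟨h, hhP⟩ with hh'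
      have hyh : y = n • h' := Subtype.ext (by show (y : H) = n • h; rw [← hyx]; rfl)
      have hsupp : ↑(b.repr y).support ⊆ (⇑emb '' Set.Iic j) := b.mem_span_image.1 hy
      have hreprsm : b.repr (n • h') = n • b.repr h' := map_smul _ _ _
      have hsupp2 : (b.repr h').support = (b.repr (n • h')).support := by
        rw [hreprsm, Finsupp.support_smul_eq hn]
      have hsupp3 : ↑(b.repr h').support ⊆ (⇑emb '' Set.Iic j) := by
        rw [hsupp2, ← hyh]
        exact hsupp
      have hh'mem : h' ∈ span ℤ (⇑b '' (⇑emb '' Set.Iic j)) := b.mem_span_image.2 hsupp3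
      have : h ∈ span ℤ (e '' Set.Iic j) := by
        rw [hmap]
        exact ⟨h', hh'mem, rfl⟩
      exact (hKs _ _).2 this
    refine ⟨hLIset, hpurj, ?_⟩
    exact aleph1Free_quotient hH ((Set.finite_Iic j).image e) hpurj
  · refine ⟨Set.image_mono (Set.Iic_subset_Iic.2 (Nat.le_succ j)), fun hsub => ?_⟩
    have hin : e (j + 1) ∈ e '' Set.Iic j :=
      hsub ⟨j + 1, Set.self_mem_Iic, rfl⟩
    obtain ⟨i, hi, hie⟩ := hin
    have h1 : i = j + 1 := heinj hie
    have h2 : i ≤ j := Set.mem_Iic.1 hi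
    omega

end Main


/-- In every ℵ₁-free group `H` of cardinality ℵ₁, there is a sequence
`(e i)` such that each finite set `q j = {e 0, …, e j}` is linearly independent with
`⟨q j⟩` pure in `H` and `H/⟨q j⟩` ℵ₁-free; the `q j` form a strictly descending
sequence in `(P_pb, ≤)`. -/
theorem strict_descending_chain_in_Ppb {H : Type*} [AddCommGroup H]
    (hH : Aleph1Free H) (hcard : Cardinal.mk H = Cardinal.aleph 1) :
    ∃ e : ℕ → H,
      (∀ j : ℕ,
        LinearIndependent ℤ ((↑) : (e '' Set.Iic j : Set H) → H) ∧
        IsPureSubgroup (AddSubgroup.closure (e '' Set.Iic j)) ∧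
        Aleph1Free (H ⧸ AddSubgroup.closure (e '' Set.Iic j))) ∧
      (∀ j : ℕ, (e '' Set.Iic j : Set H) ⊂ e '' Set.Iic (j + 1)) := by
  exact strict_descending_chain_in_Ppb' hH hcard
end
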